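/- arXiv:2407.17401 — 5 statements merged into one kernel-verified Lean document; each statement's English description precedes it below -/
import Mathlib

section
/- Let n ≥ 2 be an integer and ρ₂, …, ρₙ ∈ [−1,1]. On a probability space let Y₁ be a Rademacher variable (taking values −1 and 1 with probability 1/2 each) and, for i ∈ {2,…,n}, let Zᵢ be a random variable with values in {−1,1} and P(Zᵢ = 1) = (1+ρᵢ)/2, with Y₁, Z₂, …, Zₙ mutually independent. Define Y′ᵢ := Y₁·∏_{j=2}^{i} Zⱼ for i ∈ {1,…,n}. Then every Y′ᵢ is a Rademacher variable, i.e. P(Y′ᵢ = 1) = P(Y′ᵢ = −1) = 1/2, and for all 1 ≤ i ≤ j ≤ n one has E[Y′ᵢ · Y′ⱼ] = ∏_{k=i+1}^{j} ρₖ; in particular the vector (Y′₁,…,Y′ₙ) realizes Rademacher marginals with the prescribed multiplicative correlation structure ρ_{j,i} = ∏_{k=i+1}^{j} ρ_{k,k−1}. -/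
open MeasureTheory ProbabilityTheory Filter Finset
open scoped NNReal ENNReal

/-- Integral of a ±1-valued random variable. -/
lemma pm_int {Ω : Type*} [MeasureSpace Ω] [IsProbabilityMeasure (ℙ : Measure Ω)]
    (X : Ω → ℝ) (hm : Measurable X) (hval : ∀ ω, X ω = 1 ∨ X ω = -1) :
    ∫ ω, X ω ∂ℙ = 2 * (ℙ {ω | X ω = 1}).toReal - 1 := by
  have hA : MeasurableSet {ω | X ω = 1} := hm (measurableSet_singleton 1)
  have hX : X = fun ω => 2 * Set.indicator {ω | X ω = 1} (fun _ => (1:ℝ)) ω - 1 := by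
    funext ω
    rcases hval ω with h | h
    · norm_num [Set.indicator_apply, h]
    · have hnm : ω ∉ {ω | X ω = 1} := by norm_num [h]
      norm_num [Set.indicator_apply, hnm, h]
  have hint : Integrable (Set.indicator {ω | X ω = 1} (fun _ => (1:ℝ))) ℙ :=
    (integrable_const (1:ℝ)).indicator hA
  have h1 : ∫ ω, X ω ∂ℙ
      = ∫ ω, (2 * Set.indicator {ω | X ω = 1} (fun _ => (1:ℝ)) ω - 1) ∂ℙ := by
    congr 1
  rw [h1, integral_sub (hint.const_mul 2) (integrable_const 1), integral_const_mul,
    integral_indicator_const _ hA]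
  simp [measureReal_def]

/-- Decomposition of correlated Rademacher variables into independent two-point variables:
if `Y₁` is Rademacher, `Zᵢ` (`2 ≤ i ≤ n`) takes values in `{-1,1}` with
`P(Zᵢ = 1) = (1+ρᵢ)/2`, and `Y₁, Z₂, …, Zₙ` are mutually independent, then the products
`Y'ᵢ = Y₁ ∏_{j=2}^{i} Zⱼ` are Rademacher variables with
`E[Y'ᵢ Y'ⱼ] = ∏_{k=i+1}^{j} ρₖ` for `1 ≤ i ≤ j ≤ n`. -/
theorem rademacher_decomposition
    {Ω : Type*} [MeasureSpace Ω] [IsProbabilityMeasure (ℙ : Measure Ω)]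
    (n : ℕ) (hn : 2 ≤ n) (ρ : ℕ → ℝ)
    (hρ : ∀ i, 2 ≤ i → i ≤ n → ρ i ∈ Set.Icc (-1 : ℝ) 1)
    (Y1 : Ω → ℝ) (Z : ℕ → Ω → ℝ)
    (hY1m : Measurable Y1) (hZm : ∀ i, Measurable (Z i))
    (hY1val : ∀ ω, Y1 ω = 1 ∨ Y1 ω = -1)
    (hY1law : ℙ {ω | Y1 ω = 1} = 1 / 2)
    (hZval : ∀ i, 2 ≤ i → i ≤ n → ∀ ω, Z i ω = 1 ∨ Z i ω = -1)
    (hZlaw : ∀ i, 2 ≤ i → i ≤ n →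
      ℙ {ω | Z i ω = 1} = ENNReal.ofReal ((1 + ρ i) / 2))
    (hIndep : iIndepFun
      (fun i : Fin n => if (i : ℕ) = 0 then Y1 else Z ((i : ℕ) + 1)) ℙ)
    (Y' : ℕ → Ω → ℝ)
    (hY' : ∀ i, 1 ≤ i → i ≤ n → ∀ ω,
      Y' i ω = Y1 ω * ∏ j ∈ Finset.Icc 2 i, Z j ω) :
    (∀ i, 1 ≤ i → i ≤ n →
      ℙ {ω | Y' i ω = 1} = 1 / 2 ∧ ℙ {ω | Y' i ω = -1} = 1 / 2) ∧
    (∀ i j, 1 ≤ i → i ≤ j → j ≤ n →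
      ∫ ω, Y' i ω * Y' j ω ∂ℙ = ∏ k ∈ Finset.Icc (i + 1) j, ρ k) := by
  haveI : NeZero n := ⟨by omega⟩
  set f : Fin n → Ω → ℝ := fun i : Fin n => if (i : ℕ) = 0 then Y1 else Z ((i : ℕ) + 1)
    with hf
  have hfm : ∀ i, Measurable (f i) := by
    intro i
    by_cases h : (i : ℕ) = 0 <;> simp [hf, h, hY1m, hZm, -Fin.val_eq_zero_iff]
  have hfval : ∀ i ω, f i ω = 1 ∨ f i ω = -1 := by
    intro i ω
    by_cases h : (i : ℕ) = 0
    · simpa [hf, h, -Fin.val_eq_zero_iff] using hY1val ω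
    · have h1 : 2 ≤ (i : ℕ) + 1 := by omega
      have h2 : (i : ℕ) + 1 ≤ n := i.2
      simpa [hf, h, -Fin.val_eq_zero_iff] using hZval _ h1 h2 ω
  -- the key: expectation of products over any finset of indices
  have key : ∀ s : Finset (Fin n), ∫ ω, ∏ i ∈ s, f i ω ∂ℙ = ∏ i ∈ s, ∫ ω, f i ω ∂ℙ := by
    intro s
    induction s using Finset.induction with
    | empty => simp
    | @insert a s ha ih =>
      have hind : IndepFun (∏ j ∈ s, f j) (f a) ℙ :=
        hIndep.indepFun_finsetProd_of_notMem hfm ha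
      have hm1 : (∏ j ∈ s, f j) = fun ω => ∏ j ∈ s, f j ω :=
        funext fun ω => Finset.prod_apply ω s f
      have hmul := hind.integral_mul_eq_mul_integral
        (by rw [hm1]
            exact (Finset.measurable_prod s (fun i _ => hfm i)).aestronglyMeasurable)
        (hfm a).aestronglyMeasurable
      calc ∫ ω, ∏ i ∈ insert a s, f i ω ∂ℙ
          = integral ℙ ((∏ j ∈ s, f j) * f a) := by
            congr 1; funext ω
            simp [Finset.prod_insert ha, Finset.prod_apply, mul_comm]
        _ = integral ℙ (∏ j ∈ s, f j) * integral ℙ (f a) := hmul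
        _ = ∏ i ∈ insert a s, ∫ ω, f i ω ∂ℙ := by
            rw [Finset.prod_insert ha, mul_comm, hm1, ih]
  -- reindexing nat intervals into Fin n
  set e : ℕ → Fin n := fun k => if h : k - 1 < n then ⟨k - 1, h⟩ else ⟨0, by omega⟩ with he
  have heval : ∀ k, 2 ≤ k → k ≤ n → (e k : ℕ) = k - 1 := by
    intro k h2 hkn
    have : k - 1 < n := by omega
    simp [he, this]
  have hfe : ∀ k, 2 ≤ k → k ≤ n → f (e k) = Z k := by
    intro k h2 hkn
    have h := heval k h2 hkn
    have hne : (e k : ℕ) ≠ 0 := by omega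
    have : (e k : ℕ) + 1 = k := by omega
    simp [hf, hne, this, -Fin.val_eq_zero_iff]
  have hinj : ∀ a b, 2 ≤ a → b ≤ n → Set.InjOn e (Finset.Icc a b : Set ℕ) := by
    intro a b ha hb k1 hk1 k2 hk2 hee
    simp only [Finset.coe_Icc, Set.mem_Icc] at hk1 hk2
    have e1 := heval k1 (by omega) (by omega)
    have e2 := heval k2 (by omega) (by omega)
    have : (e k1 : ℕ) = (e k2 : ℕ) := by rw [hee]
    omega
  have hnotmem : ∀ a b, 2 ≤ a → b ≤ n → (0 : Fin n) ∉ (Finset.Icc a b).image e := by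
    intro a b ha hb h
    obtain ⟨k, hk, hek⟩ := Finset.mem_image.mp h
    simp only [Finset.mem_Icc] at hk
    have := heval k (by omega) (by omega)
    have : (e k : ℕ) = 0 := by rw [hek]; simp
    omega
  have hre : ∀ a b, 2 ≤ a → b ≤ n → ∀ ω,
      ∏ k ∈ Finset.Icc a b, Z k ω = ∏ i ∈ (Finset.Icc a b).image e, f i ω := by
    intro a b ha hb ω
    rw [Finset.prod_image (fun x hx y hy => hinj a b ha hb (by simpa using hx) (by simpa using hy))]
    refine Finset.prod_congr rfl fun k hk => ?_
    simp only [Finset.mem_Icc] at hk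
    rw [hfe k (by omega) (by omega)]
  -- expectations of individual variables
  have hEY1 : ∫ ω, Y1 ω ∂ℙ = 0 := by
    rw [pm_int Y1 hY1m hY1val, hY1law]
    norm_num
  have hEZ : ∀ k, 2 ≤ k → k ≤ n → ∫ ω, Z k ω ∂ℙ = ρ k := by
    intro k h2 hkn
    obtain ⟨hl, hr⟩ := hρ k h2 hkn
    rw [pm_int (Z k) (hZm k) (hZval k h2 hkn), hZlaw k h2 hkn,
      ENNReal.toReal_ofReal (by linarith)]
    ring
  -- expectation of a product of Z's over an interval
  have hEprod : ∀ a b, 2 ≤ a → b ≤ n →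
      ∫ ω, ∏ k ∈ Finset.Icc a b, Z k ω ∂ℙ = ∏ k ∈ Finset.Icc a b, ρ k := by
    intro a b ha hb
    have h1 : ∫ ω, ∏ k ∈ Finset.Icc a b, Z k ω ∂ℙ
        = ∫ ω, ∏ i ∈ (Finset.Icc a b).image e, f i ω ∂ℙ := by
      congr 1; funext ω; exact hre a b ha hb ω
    rw [h1, key]
    rw [Finset.prod_image (fun x hx y hy => hinj a b ha hb (by simpa using hx) (by simpa using hy))]
    refine Finset.prod_congr rfl fun k hk => ?_
    simp only [Finset.mem_Icc] at hk
    rw [hfe k (by omega) (by omega)]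
    exact hEZ k (by omega) (by omega)
  -- product of ±1 values is ±1
  have pmprod : ∀ (s : Finset ℕ) (ω : Ω), (∀ k ∈ s, Z k ω = 1 ∨ Z k ω = -1) →
      (∏ k ∈ s, Z k ω) = 1 ∨ (∏ k ∈ s, Z k ω) = -1 := by
    intro s ω h
    rw [← mul_self_eq_one_iff, ← Finset.prod_mul_distrib]
    exact Finset.prod_eq_one fun k hk => mul_self_eq_one_iff.mpr (h k hk)
  have hY'val : ∀ i, 1 ≤ i → i ≤ n → ∀ ω, Y' i ω = 1 ∨ Y' i ω = -1 := by
    intro i h1 hin ω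
    rw [hY' i h1 hin ω, ← mul_self_eq_one_iff]
    have hp := pmprod (Finset.Icc 2 i) ω (fun k hk => by
      simp only [Finset.mem_Icc] at hk
      exact hZval k hk.1 (le_trans hk.2 hin) ω)
    have := mul_self_eq_one_iff.mpr (hY1val ω)
    have := mul_self_eq_one_iff.mpr hp
    nlinarith [mul_self_eq_one_iff.mpr (hY1val ω), mul_self_eq_one_iff.mpr hp]
  have hY'm : ∀ i, 1 ≤ i → i ≤ n → Measurable (Y' i) := by
    intro i h1 hin
    have : Y' i = fun ω => Y1 ω * ∏ j ∈ Finset.Icc 2 i, Z j ω := funext (hY' i h1 hin)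
    rw [this]
    exact hY1m.mul (Finset.measurable_prod _ fun j _ => hZm j)
  -- expectation of Y' i is 0
  have hEY' : ∀ i, 1 ≤ i → i ≤ n → ∫ ω, Y' i ω ∂ℙ = 0 := by
    intro i h1 hin
    have h0 := hnotmem 2 i le_rfl hin
    have hstep : ∫ ω, Y' i ω ∂ℙ
        = ∫ ω, ∏ m ∈ insert (0 : Fin n) ((Finset.Icc 2 i).image e), f m ω ∂ℙ := by
      congr 1; funext ω
      rw [hY' i h1 hin ω, Finset.prod_insert h0, hre 2 i le_rfl hin ω]
      have hf0 : f (0 : Fin n) ω = Y1 ω := by simp [hf]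
      rw [hf0]
    rw [hstep, key, Finset.prod_insert h0]
    have : ∫ ω, f 0 ω ∂ℙ = 0 := by
      have : f (0 : Fin n) = Y1 := by simp [hf]
      rw [this]; exact hEY1
    rw [this, zero_mul]
  constructor
  · intro i h1 hin
    have hmi := hY'm i h1 hin
    have hvi := hY'val i h1 hin
    have hint := pm_int (Y' i) hmi hvi
    rw [hEY' i h1 hin] at hint
    have hA : MeasurableSet {ω | Y' i ω = 1} := hmi (measurableSet_singleton 1)
    have htop : ℙ {ω | Y' i ω = 1} ≠ ⊤ := measure_ne_top _ _
    have htr : (ℙ {ω | Y' i ω = 1}).toReal = 1 / 2 := by linarith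
    have hone : ℙ {ω | Y' i ω = 1} = 1 / 2 := by
      have := ENNReal.ofReal_toReal htop
      rw [htr] at this
      rw [← this]
      norm_num [ENNReal.ofReal_div_of_pos, ENNReal.ofReal_one]
    refine ⟨hone, ?_⟩
    have hcompl : {ω | Y' i ω = -1} = {ω | Y' i ω = 1}ᶜ := by
      ext ω
      rcases hvi ω with h | h
      · simp only [Set.mem_setOf_eq, Set.mem_compl_iff, h]; norm_num
      · simp only [Set.mem_setOf_eq, Set.mem_compl_iff, h]; norm_num
    rw [hcompl, measure_compl hA htop, hone, measure_univ]
    exact ENNReal.sub_half ENNReal.one_ne_top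
  · intro i j h1 hij hjn
    have hptwise : ∀ ω, Y' i ω * Y' j ω = ∏ k ∈ Finset.Icc (i + 1) j, Z k ω := by
      intro ω
      rw [hY' i h1 (le_trans hij hjn) ω, hY' j (le_trans h1 hij) hjn ω]
      have hsplit : Finset.Icc 2 j = Finset.Icc 2 i ∪ Finset.Icc (i + 1) j := by
        ext k
        simp only [Finset.mem_Icc, Finset.mem_union]
        omega
      have hdisj : Disjoint (Finset.Icc 2 i) (Finset.Icc (i + 1) j) := by
        rw [Finset.disjoint_left]
        intro k hk1 hk2
        simp only [Finset.mem_Icc] at hk1 hk2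
        omega
      rw [hsplit, Finset.prod_union hdisj]
      have hY1sq : Y1 ω * Y1 ω = 1 := mul_self_eq_one_iff.mpr (hY1val ω)
      have hZsq : (∏ k ∈ Finset.Icc 2 i, Z k ω) * (∏ k ∈ Finset.Icc 2 i, Z k ω) = 1 := by
        rw [← Finset.prod_mul_distrib]
        refine Finset.prod_eq_one fun k hk => ?_
        simp only [Finset.mem_Icc] at hk
        exact mul_self_eq_one_iff.mpr (hZval k hk.1 (by omega) ω)
      calc (Y1 ω * ∏ k ∈ Finset.Icc 2 i, Z k ω) *
            (Y1 ω * ((∏ k ∈ Finset.Icc 2 i, Z k ω) * ∏ k ∈ Finset.Icc (i+1) j, Z k ω))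
          = (Y1 ω * Y1 ω) * ((∏ k ∈ Finset.Icc 2 i, Z k ω) * (∏ k ∈ Finset.Icc 2 i, Z k ω))
            * ∏ k ∈ Finset.Icc (i+1) j, Z k ω := by ring
        _ = ∏ k ∈ Finset.Icc (i+1) j, Z k ω := by rw [hY1sq, hZsq]; ring
    have : ∫ ω, Y' i ω * Y' j ω ∂ℙ = ∫ ω, ∏ k ∈ Finset.Icc (i+1) j, Z k ω ∂ℙ := by
      congr 1; funext ω; exact hptwise ω
    rw [this, hEprod (i+1) j (by omega) hjn]
end

section
/- In the zero-autocorrelation grid market model, for every v ∈ {1,2,3} and all integers n, L with 1 ≤ L < n (and k_v(n,L) ≥ 1), the empirical variance is unbiased for the variance of a price increment of duration Lτ: E[V̂_v(n,L)] = Lτσ² + S²/2. -/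
open MeasureTheory ProbabilityTheory Filter Finset
open scoped NNReal ENNReal Topology

/-- Observed log-price on the grid: `p_i = Σ_{j<i} ξ_j + η_i` with `η_i = (S/2)·X_i`. -/
noncomputable def price {Ω : Type*} (ξ X : ℕ → Ω → ℝ) (S : ℝ) (i : ℕ) (ω : Ω) : ℝ :=
  (∑ j ∈ Finset.range i, ξ j ω) + S / 2 * X i ω

/-- Empirical variance with overlapping increments, `k₁(n,L) = n − L`. -/
noncomputable def Vhat1 {Ω : Type*} (p : ℕ → Ω → ℝ) (n L : ℕ) (ω : Ω) : ℝ :=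
  ((n - L : ℕ) : ℝ)⁻¹ * ∑ i ∈ Finset.range (n - L), (p (i + L) ω - p i ω) ^ 2

/-- Empirical variance with non-overlapping increments, `k₂(n,L) = ⌊(n−1)/L⌋`. -/
noncomputable def Vhat2 {Ω : Type*} (p : ℕ → Ω → ℝ) (n L : ℕ) (ω : Ω) : ℝ :=
  (((n - 1) / L : ℕ) : ℝ)⁻¹ *
    ∑ i ∈ Finset.range ((n - 1) / L), (p ((i + 1) * L) ω - p (i * L) ω) ^ 2

/-- Empirical variance with strictly disjoint increments, `k₃(n,L) = ⌊n/(L+1)⌋`. -/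
noncomputable def Vhat3 {Ω : Type*} (p : ℕ → Ω → ℝ) (n L : ℕ) (ω : Ω) : ℝ :=
  ((n / (L + 1) : ℕ) : ℝ)⁻¹ *
    ∑ i ∈ Finset.range (n / (L + 1)), (p (i + (i + 1) * L) ω - p (i + i * L) ω) ^ 2

/-- Spread estimator `Ŝ²_{1,v}(n,L,L') = (2/(L'−L))(L'·V̂_v(n,L) − L·V̂_v(n,L'))`. -/
noncomputable def Shat {Ω : Type*} (Vh : ℕ → ℕ → Ω → ℝ) (n L L' : ℕ) (ω : Ω) : ℝ :=
  2 / ((L' : ℝ) - (L : ℝ)) * ((L' : ℝ) * Vh n L ω - (L : ℝ) * Vh n L' ω)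


section AuxiliaryLemmas
open MeasureTheory ProbabilityTheory Real Set
open scoped NNReal ENNReal

lemma integral_neg_comp (g : ℝ → ℝ) : ∫ x : ℝ, g (-x) = ∫ x : ℝ, g x := by
  conv_rhs => rw [← Measure.map_neg_eq_self (volume : Measure ℝ)]
  exact (MeasurableEmbedding.integral_map
    (Homeomorph.neg ℝ).isClosedEmbedding.measurableEmbedding g).symm

lemma integral_even_eq {f : ℝ → ℝ} (hf : Integrable f) (he : ∀ x, f (-x) = f x) :
    ∫ x : ℝ, f x = 2 * ∫ x in Ioi (0:ℝ), f x := by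
  have h1 : ∫ x in Iic (0:ℝ), f x = ∫ x in Ioi (0:ℝ), f x := by
    have := integral_comp_neg_Iic (0:ℝ) f
    rw [neg_zero] at this
    simp_rw [he] at this
    exact this
  have h2 := integral_add_compl (measurableSet_Iic (a := (0:ℝ))) hf
  rw [compl_Iic] at h2
  linarith [h2, h1]

lemma integral_odd_eq {f : ℝ → ℝ} (ho : ∀ x, f (-x) = - f x) : ∫ x : ℝ, f x = 0 := by
  have h := integral_neg_comp f
  simp_rw [ho, integral_neg] at h
  linarith

lemma integral_fun_gaussianReal {v : ℝ≥0} (hv : v ≠ 0) (f : ℝ → ℝ) :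
    ∫ x, f x ∂(gaussianReal 0 v) = ∫ x, gaussianPDFReal 0 v x * f x := by
  rw [gaussianReal_of_var_ne_zero _ hv]
  have h : (volume : Measure ℝ).withDensity (gaussianPDF 0 v)
      = (volume : Measure ℝ).withDensity (fun x => ((gaussianPDFReal 0 v x).toNNReal : ℝ≥0∞)) := rfl
  rw [h, integral_withDensity_eq_integral_smul
    ((measurable_gaussianPDFReal 0 v).real_toNNReal) f]
  congr 1; ext x
  rw [NNReal.smul_def, smul_eq_mul, Real.coe_toNNReal _ (gaussianPDFReal_nonneg _ _ _)]

lemma integrable_fun_gaussianReal {v : ℝ≥0} (hv : v ≠ 0) (f : ℝ → ℝ)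
    (h : Integrable (fun x => gaussianPDFReal 0 v x * f x)) :
    Integrable f (gaussianReal 0 v) := by
  rw [gaussianReal_of_var_ne_zero _ hv]
  rw [integrable_withDensity_iff (measurable_gaussianPDF 0 v)
    (ae_of_all _ fun x => ENNReal.ofReal_lt_top)]
  refine h.congr (ae_of_all _ fun x => ?_)
  show gaussianPDFReal 0 v x * f x = f x * (ENNReal.ofReal (gaussianPDFReal 0 v x)).toReal
  rw [ENNReal.toReal_ofReal (gaussianPDFReal_nonneg _ _ _)]
  ring

lemma gaussianPDFReal_zero (v : ℝ≥0) (x : ℝ) :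
    gaussianPDFReal 0 v x = (√(2 * π * v))⁻¹ * rexp (-(2*(v:ℝ))⁻¹ * x^2) := by
  rw [gaussianPDFReal]
  congr 1
  rw [sub_zero]
  ring

lemma gauss_sq_Ioi {b : ℝ} (hb : 0 < b) :
    ∫ x in Ioi (0:ℝ), x ^ 2 * rexp (-b * x ^ 2)
      = b ^ (-(3:ℝ)/2) * (1/2) * Real.Gamma (3/2) := by
  have hr2 : ∀ x : ℝ, x ^ ((2:ℕ):ℝ) = x ^ 2 := fun x => Real.rpow_natCast x 2
  have h := integral_rpow_mul_exp_neg_mul_rpow (p := 2) (q := 2) (by norm_num) (by norm_num) hb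
  have h2 : ((2:ℝ)) = ((2:ℕ):ℝ) := by norm_num
  rw [h2] at h
  simp only [hr2] at h
  rw [h]
  norm_num

lemma gauss_sq_total {b : ℝ} (hb : 0 < b) :
    ∫ x : ℝ, x ^ 2 * rexp (-b * x ^ 2)
      = 2 * (b ^ (-(3:ℝ)/2) * (1/2) * Real.Gamma (3/2)) := by
  have hint : Integrable (fun x : ℝ => x ^ 2 * rexp (-b * x ^ 2)) := by
    have := integrable_rpow_mul_exp_neg_mul_sq hb (s := 2) (by norm_num)
    have hr2 : ∀ x : ℝ, x ^ ((2:ℕ):ℝ) = x ^ 2 := fun x => Real.rpow_natCast x 2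
    rw [show ((2:ℝ)) = ((2:ℕ):ℝ) by norm_num] at this
    simpa only [hr2] using this
  have he : ∀ x : ℝ, (-x) ^ 2 * rexp (-b * (-x) ^ 2) = x ^ 2 * rexp (-b * x ^ 2) := by
    intro x; ring_nf
  rw [integral_even_eq hint he, gauss_sq_Ioi hb]

lemma gaussianReal_second_moment {v : ℝ≥0} (hv : v ≠ 0) :
    ∫ x, x ^ 2 ∂(gaussianReal 0 v) = v := by
  have hvpos : (0:ℝ) < v := lt_of_le_of_ne v.coe_nonneg (by exact_mod_cast hv.symm)
  set b : ℝ := (2 * (v:ℝ))⁻¹ with hbdef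
  have hbpos : 0 < b := by positivity
  rw [integral_fun_gaussianReal hv]
  calc ∫ x : ℝ, gaussianPDFReal 0 v x * x ^ 2
      = (√(2 * π * v))⁻¹ * ∫ x : ℝ, x ^ 2 * rexp (-b * x ^ 2) := by
        rw [← integral_const_mul]
        congr 1; ext x
        rw [gaussianPDFReal_zero]; ring
    _ = (v:ℝ) := by
        rw [gauss_sq_total hbpos]
        rw [show ((3:ℝ)/2) = 1/2 + 1 by norm_num, Real.Gamma_add_one (by norm_num),
          Real.Gamma_one_half_eq]
        have h2v : (0:ℝ) < 2 * v := by positivity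
        have hbp : b ^ (-(3:ℝ)/2) = (2*(v:ℝ)) ^ ((3:ℝ)/2) := by
          rw [hbdef, Real.inv_rpow h2v.le, show (-(3:ℝ)/2) = -((3:ℝ)/2) by ring,
            Real.rpow_neg h2v.le, inv_inv]
        rw [hbp, show ((3:ℝ)/2) = 1 + 1/2 by norm_num, Real.rpow_add h2v,
          Real.rpow_one, ← Real.sqrt_eq_rpow,
          show 2 * π * (v:ℝ) = π * (2 * v) by ring, Real.sqrt_mul pi_nonneg]
        have hsπ : √π ≠ 0 := ne_of_gt (Real.sqrt_pos.mpr pi_pos)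
        have hs2v : √(2*(v:ℝ)) ≠ 0 := ne_of_gt (Real.sqrt_pos.mpr h2v)
        field_simp
lemma integrable_sq_exp {b : ℝ} (hb : 0 < b) :
    Integrable (fun x : ℝ => x ^ 2 * rexp (-b * x ^ 2)) := by
  have := integrable_rpow_mul_exp_neg_mul_sq hb (s := 2) (by norm_num)
  have hr2 : ∀ x : ℝ, x ^ ((2:ℕ):ℝ) = x ^ 2 := fun x => Real.rpow_natCast x 2
  rw [show ((2:ℝ)) = ((2:ℕ):ℝ) by norm_num] at this
  simpa only [hr2] using this

lemma gaussianReal_mean {v : ℝ≥0} (hv : v ≠ 0) : ∫ x, x ∂(gaussianReal 0 v) = 0 := by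
  rw [integral_fun_gaussianReal hv]
  apply integral_odd_eq
  intro x
  rw [gaussianPDFReal_zero, gaussianPDFReal_zero]
  ring_nf

lemma gaussianReal_integrable_id {v : ℝ≥0} (hv : v ≠ 0) :
    Integrable (fun x : ℝ => x) (gaussianReal 0 v) := by
  have hvpos : (0:ℝ) < v := lt_of_le_of_ne v.coe_nonneg (by exact_mod_cast hv.symm)
  apply integrable_fun_gaussianReal hv
  have h : Integrable (fun x : ℝ => (√(2 * π * v))⁻¹ * (x * rexp (-(2*(v:ℝ))⁻¹ * x ^ 2))) :=
    (integrable_mul_exp_neg_mul_sq (by positivity)).const_mul _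
  refine h.congr (ae_of_all _ fun x => ?_)
  show _ = gaussianPDFReal 0 v x * x
  rw [gaussianPDFReal_zero]; ring

lemma gaussianReal_integrable_sq {v : ℝ≥0} (hv : v ≠ 0) :
    Integrable (fun x : ℝ => x ^ 2) (gaussianReal 0 v) := by
  have hvpos : (0:ℝ) < v := lt_of_le_of_ne v.coe_nonneg (by exact_mod_cast hv.symm)
  apply integrable_fun_gaussianReal hv
  have h : Integrable (fun x : ℝ => (√(2 * π * v))⁻¹ * (x ^ 2 * rexp (-(2*(v:ℝ))⁻¹ * x ^ 2))) :=
    (integrable_sq_exp (by positivity)).const_mul _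
  refine h.congr (ae_of_all _ fun x => ?_)
  show _ = gaussianPDFReal 0 v x * x ^ 2
  rw [gaussianPDFReal_zero]; ring

lemma pm_one_mean {Ω : Type*} [MeasureSpace Ω] [IsProbabilityMeasure (ℙ : Measure Ω)]
    {Y : Ω → ℝ} (hm : Measurable Y) (hval : ∀ ω, Y ω = 1 ∨ Y ω = -1)
    (hlaw : ℙ {ω | Y ω = 1} = 1 / 2) : ∫ ω, Y ω ∂ℙ = 0 := by
  have hA : MeasurableSet {ω | Y ω = 1} := hm (measurableSet_singleton 1)
  have hYeq : ∀ ω, Y ω = Set.indicator {ω | Y ω = 1} (fun _ => (2:ℝ)) ω - 1 := by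
    intro ω
    rcases hval ω with h | h
    · rw [Set.indicator_of_mem (by simpa [Set.mem_setOf_eq] using h), h]; norm_num
    · rw [Set.indicator_of_notMem (by norm_num [Set.mem_setOf_eq, h]), h]; norm_num
  rw [integral_congr_ae (ae_of_all _ hYeq),
    integral_sub ((integrable_const (2:ℝ)).indicator hA) (integrable_const 1),
    integral_indicator_const _ hA, integral_const, measureReal_def, measureReal_def, hlaw]
  norm_num [ENNReal.toReal_div]

end AuxiliaryLemmas

section Helpers
open MeasureTheory Real Set

lemma integrable_mul_sq {α : Type*} [MeasurableSpace α] {μ : Measure α} {f g : α → ℝ}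
    (hfm : AEStronglyMeasurable f μ) (hgm : AEStronglyMeasurable g μ)
    (hf : Integrable (fun x => f x ^ 2) μ) (hg : Integrable (fun x => g x ^ 2) μ) :
    Integrable (fun x => f x * g x) μ := by
  refine ((hf.add hg).div_const 2).mono' (hfm.mul hgm) (ae_of_all _ fun x => ?_)
  simp only [Pi.add_apply, Real.norm_eq_abs]
  refine abs_le.2 ⟨by nlinarith [sq_nonneg (f x + g x)], by nlinarith [sq_nonneg (f x - g x)]⟩

end Helpers

open MeasureTheory ProbabilityTheory Filter Finset
open scoped NNReal ENNReal Topology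

/-- In the zero-autocorrelation grid market model, the empirical variances `V̂_v(n,L)`,
`v ∈ {1,2,3}`, are unbiased estimators of `V(Lτ) = Lτσ² + S²/2`. -/
theorem Vhat_unbiased_zero_autocorrelation
    {Ω : Type*} [MeasureSpace Ω] [IsProbabilityMeasure (ℙ : Measure Ω)]
    (τ σ S : ℝ) (hτ : 0 < τ) (hσ : 0 < σ) (hS : 0 ≤ S)
    (ξ X : ℕ → Ω → ℝ)
    (hξm : ∀ i, Measurable (ξ i)) (hXm : ∀ i, Measurable (X i))
    (hξ : ∀ i, Measure.map (ξ i) ℙ = gaussianReal 0 (Real.toNNReal (σ ^ 2 * τ)))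
    (hXval : ∀ i ω, X i ω = 1 ∨ X i ω = -1)
    (hXlaw : ∀ i, ℙ {ω | X i ω = 1} = 1 / 2)
    (hIndep : iIndepFun (Sum.elim ξ X) ℙ)
    (n L : ℕ) (hL : 1 ≤ L) (hLn : L < n) :
    (∫ ω, Vhat1 (price ξ X S) n L ω ∂ℙ = (L : ℝ) * τ * σ ^ 2 + S ^ 2 / 2) ∧
    (∫ ω, Vhat2 (price ξ X S) n L ω ∂ℙ = (L : ℝ) * τ * σ ^ 2 + S ^ 2 / 2) ∧
    (∫ ω, Vhat3 (price ξ X S) n L ω ∂ℙ = (L : ℝ) * τ * σ ^ 2 + S ^ 2 / 2) := by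
  classical
  have hvreal : (0:ℝ) < σ ^ 2 * τ := by positivity
  set v : ℝ≥0 := Real.toNNReal (σ ^ 2 * τ) with hvdef
  have hv : v ≠ 0 := by
    simp only [hvdef, ne_eq, Real.toNNReal_eq_zero, not_le]
    exact hvreal
  have hvcoe : (v : ℝ) = σ ^ 2 * τ := Real.coe_toNNReal _ hvreal.le
  -- ξ facts
  have hξint : ∀ j, Integrable (ξ j) ℙ := by
    intro j
    have h : Integrable (fun x : ℝ => x) (Measure.map (ξ j) ℙ) := by
      rw [hξ j]; exact gaussianReal_integrable_id hv
    exact (integrable_map_measure aestronglyMeasurable_id (hξm j).aemeasurable).mp h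
  have hξsqint : ∀ j, Integrable (fun ω => ξ j ω ^ 2) ℙ := by
    intro j
    have h : Integrable (fun x : ℝ => x ^ 2) (Measure.map (ξ j) ℙ) := by
      rw [hξ j]; exact gaussianReal_integrable_sq hv
    exact (integrable_map_measure (measurable_id.pow_const 2).aestronglyMeasurable
      (hξm j).aemeasurable).mp h
  have hξmean : ∀ j, ∫ ω, ξ j ω ∂ℙ = 0 := by
    intro j
    have h : ∫ ω, ξ j ω ∂ℙ = ∫ x, x ∂(gaussianReal 0 v) := by
      rw [← hξ j]
      exact (integral_map (hξm j).aemeasurable aestronglyMeasurable_id).symm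
    rw [h]
    exact gaussianReal_mean hv
  have hξ2mom : ∀ j, ∫ ω, ξ j ω ^ 2 ∂ℙ = σ ^ 2 * τ := by
    intro j
    have h : ∫ ω, ξ j ω ^ 2 ∂ℙ = ∫ x, x ^ 2 ∂(gaussianReal 0 v) := by
      rw [← hξ j]
      exact (integral_map (hξm j).aemeasurable
        (measurable_id.pow_const 2).aestronglyMeasurable).symm
    rw [h, gaussianReal_second_moment hv, hvcoe]
  -- X facts
  have hXsq1 : ∀ i ω, X i ω ^ 2 = 1 := fun i ω => by
    rcases hXval i ω with h | h <;> rw [h] <;> norm_num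
  have hXsqint : ∀ i, Integrable (fun ω => X i ω ^ 2) ℙ := fun i => by
    simpa [hXsq1 i] using (integrable_const (1:ℝ) (μ := (ℙ : Measure Ω)))
  have hXint : ∀ i, Integrable (X i) ℙ := fun i => by
    refine (integrable_const (1:ℝ)).mono' (hXm i).aestronglyMeasurable
      (ae_of_all _ fun ω => ?_)
    rcases hXval i ω with h | h <;> simp [h]
  have hXmean : ∀ i, ∫ ω, X i ω ∂ℙ = 0 := fun i => pm_one_mean (hXm i) (hXval i) (hXlaw i)
  have hXsqmean : ∀ i, ∫ ω, X i ω ^ 2 ∂ℙ = 1 := fun i => by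
    simp [hXsq1 i]
  -- independence
  have hIξξ : ∀ j k, j ≠ k → IndepFun (ξ j) (ξ k) ℙ := fun j k h =>
    hIndep.indepFun (show (Sum.inl j : ℕ ⊕ ℕ) ≠ Sum.inl k by simpa using h)
  have hIξX : ∀ j k, IndepFun (ξ j) (X k) ℙ := fun j k =>
    hIndep.indepFun (show (Sum.inl j : ℕ ⊕ ℕ) ≠ Sum.inr k by simp)
  have hIXX : ∀ j k, j ≠ k → IndepFun (X j) (X k) ℙ := fun j k h =>
    hIndep.indepFun (show (Sum.inr j : ℕ ⊕ ℕ) ≠ Sum.inr k by simpa using h)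
  -- product expectations
  have hξξ0 : ∀ j k, j ≠ k → ∫ ω, ξ j ω * ξ k ω ∂ℙ = 0 := fun j k h => by
    have h2 := (hIξξ j k h).integral_mul_eq_mul_integral (hξint j).aestronglyMeasurable (hξint k).aestronglyMeasurable
    calc ∫ ω, ξ j ω * ξ k ω ∂ℙ = ∫ ω, (ξ j * ξ k) ω ∂ℙ := rfl
      _ = (∫ ω, ξ j ω ∂ℙ) * ∫ ω, ξ k ω ∂ℙ := h2
      _ = 0 := by rw [hξmean j, zero_mul]
  have hξX0 : ∀ j k, ∫ ω, ξ j ω * X k ω ∂ℙ = 0 := fun j k => by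
    have h2 := (hIξX j k).integral_mul_eq_mul_integral (hξint j).aestronglyMeasurable (hXint k).aestronglyMeasurable
    calc ∫ ω, ξ j ω * X k ω ∂ℙ = ∫ ω, (ξ j * X k) ω ∂ℙ := rfl
      _ = (∫ ω, ξ j ω ∂ℙ) * ∫ ω, X k ω ∂ℙ := h2
      _ = 0 := by rw [hξmean j, zero_mul]
  have hXX0 : ∀ j k, j ≠ k → ∫ ω, X j ω * X k ω ∂ℙ = 0 := fun j k h => by
    have h2 := (hIXX j k h).integral_mul_eq_mul_integral (hXint j).aestronglyMeasurable (hXint k).aestronglyMeasurable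
    calc ∫ ω, X j ω * X k ω ∂ℙ = ∫ ω, (X j * X k) ω ∂ℙ := rfl
      _ = (∫ ω, X j ω ∂ℙ) * ∫ ω, X k ω ∂ℙ := h2
      _ = 0 := by rw [hXmean j, zero_mul]
  -- the key computation for one increment
  have key : ∀ a b : ℕ, a < b →
      Integrable (fun ω => (price ξ X S b ω - price ξ X S a ω) ^ 2) ℙ ∧
      ∫ ω, (price ξ X S b ω - price ξ X S a ω) ^ 2 ∂ℙ
        = ((b - a : ℕ) : ℝ) * (σ ^ 2 * τ) + S ^ 2 / 2 := by
    intro a b hab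
    set c : ℝ := S / 2 with hc
    have hdiff : ∀ ω, price ξ X S b ω - price ξ X S a ω
        = (∑ j ∈ Finset.Ico a b, ξ j ω) + c * (X b ω - X a ω) := by
      intro ω
      simp only [price, hc]
      rw [Finset.sum_Ico_eq_sub _ hab.le]
      ring
    -- the three expanded pieces
    have hE1int : Integrable (fun ω => ∑ j ∈ Finset.Ico a b, ∑ k ∈ Finset.Ico a b,
        ξ j ω * ξ k ω) ℙ :=
      integrable_finset_sum _ fun j _ => integrable_finset_sum _ fun k _ =>
        integrable_mul_sq (hξm j).aestronglyMeasurable (hξm k).aestronglyMeasurable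
          (hξsqint j) (hξsqint k)
    have hE2int : Integrable (fun ω => ∑ j ∈ Finset.Ico a b,
        (ξ j ω * X b ω - ξ j ω * X a ω)) ℙ :=
      integrable_finset_sum _ fun j _ =>
        (integrable_mul_sq (hξm j).aestronglyMeasurable (hXm b).aestronglyMeasurable
          (hξsqint j) (hXsqint b)).sub
        (integrable_mul_sq (hξm j).aestronglyMeasurable (hXm a).aestronglyMeasurable
          (hξsqint j) (hXsqint a))
    have hE3int : Integrable (fun ω => X b ω ^ 2 - 2 * (X a ω * X b ω) + X a ω ^ 2) ℙ :=
      ((hXsqint b).sub ((integrable_mul_sq (hXm a).aestronglyMeasurable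
        (hXm b).aestronglyMeasurable (hXsqint a) (hXsqint b)).const_mul 2)).add (hXsqint a)
    have hexp : ∀ ω, (price ξ X S b ω - price ξ X S a ω) ^ 2
        = (∑ j ∈ Finset.Ico a b, ∑ k ∈ Finset.Ico a b, ξ j ω * ξ k ω)
          + (2 * c) * (∑ j ∈ Finset.Ico a b, (ξ j ω * X b ω - ξ j ω * X a ω))
          + c ^ 2 * (X b ω ^ 2 - 2 * (X a ω * X b ω) + X a ω ^ 2) := by
      intro ω
      rw [hdiff ω]
      have h1 : (∑ j ∈ Finset.Ico a b, ξ j ω) * (∑ k ∈ Finset.Ico a b, ξ k ω)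
          = ∑ j ∈ Finset.Ico a b, ∑ k ∈ Finset.Ico a b, ξ j ω * ξ k ω :=
        Finset.sum_mul_sum _ _ _ _
      have h2 : (∑ j ∈ Finset.Ico a b, ξ j ω) * (X b ω - X a ω)
          = ∑ j ∈ Finset.Ico a b, (ξ j ω * X b ω - ξ j ω * X a ω) := by
        rw [Finset.sum_mul]
        exact Finset.sum_congr rfl fun j _ => by ring
      calc ((∑ j ∈ Finset.Ico a b, ξ j ω) + c * (X b ω - X a ω)) ^ 2
          = (∑ j ∈ Finset.Ico a b, ξ j ω) * (∑ k ∈ Finset.Ico a b, ξ k ω)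
            + (2 * c) * ((∑ j ∈ Finset.Ico a b, ξ j ω) * (X b ω - X a ω))
            + c ^ 2 * (X b ω ^ 2 - 2 * (X a ω * X b ω) + X a ω ^ 2) := by ring
        _ = _ := by rw [h1, h2]
    have hE12int : Integrable (fun ω => (∑ j ∈ Finset.Ico a b, ∑ k ∈ Finset.Ico a b,
        ξ j ω * ξ k ω) + (2 * c) * ∑ j ∈ Finset.Ico a b,
        (ξ j ω * X b ω - ξ j ω * X a ω)) ℙ := hE1int.add (hE2int.const_mul (2 * c))
    have hEallint : Integrable (fun ω => ((∑ j ∈ Finset.Ico a b, ∑ k ∈ Finset.Ico a b,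
        ξ j ω * ξ k ω) + (2 * c) * ∑ j ∈ Finset.Ico a b,
        (ξ j ω * X b ω - ξ j ω * X a ω))
        + c ^ 2 * (X b ω ^ 2 - 2 * (X a ω * X b ω) + X a ω ^ 2)) ℙ :=
      hE12int.add (hE3int.const_mul (c ^ 2))
    constructor
    · exact hEallint.congr (ae_of_all _ fun ω => (hexp ω).symm)
    · have hI1 : ∫ ω, ∑ j ∈ Finset.Ico a b, ∑ k ∈ Finset.Ico a b, ξ j ω * ξ k ω ∂ℙ
          = ((b - a : ℕ) : ℝ) * (σ ^ 2 * τ) := by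
        rw [integral_finset_sum _ (fun j _ => integrable_finset_sum _ fun k _ =>
          integrable_mul_sq (hξm j).aestronglyMeasurable (hξm k).aestronglyMeasurable
            (hξsqint j) (hξsqint k))]
        have hrow : ∀ j ∈ Finset.Ico a b,
            ∫ ω, ∑ k ∈ Finset.Ico a b, ξ j ω * ξ k ω ∂ℙ = σ ^ 2 * τ := by
          intro j hj
          rw [integral_finset_sum _ (fun k _ =>
            integrable_mul_sq (hξm j).aestronglyMeasurable (hξm k).aestronglyMeasurable
              (hξsqint j) (hξsqint k))]
          have hterm : ∀ k ∈ Finset.Ico a b,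
              ∫ ω, ξ j ω * ξ k ω ∂ℙ = if j = k then σ ^ 2 * τ else 0 := by
            intro k _
            by_cases h : j = k
            · subst h
              rw [if_pos rfl, ← hξ2mom j]
              exact integral_congr_ae (ae_of_all _ fun ω => by ring)
            · rw [if_neg h]
              exact hξξ0 j k h
          rw [Finset.sum_congr rfl hterm, Finset.sum_ite_eq, if_pos hj]
        rw [Finset.sum_congr rfl hrow, Finset.sum_const, Nat.card_Ico, nsmul_eq_mul]
      have hI2 : ∫ ω, ∑ j ∈ Finset.Ico a b, (ξ j ω * X b ω - ξ j ω * X a ω) ∂ℙ = 0 := by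
        have hjint : ∀ j : ℕ, Integrable (fun ω => ξ j ω * X b ω - ξ j ω * X a ω) ℙ := fun j =>
          (integrable_mul_sq (hξm j).aestronglyMeasurable (hXm b).aestronglyMeasurable
            (hξsqint j) (hXsqint b)).sub
          (integrable_mul_sq (hξm j).aestronglyMeasurable (hXm a).aestronglyMeasurable
            (hξsqint j) (hXsqint a))
        rw [integral_finset_sum _ (fun j _ => hjint j)]
        refine Finset.sum_eq_zero fun j _ => ?_
        rw [integral_sub
          (integrable_mul_sq (hξm j).aestronglyMeasurable (hXm b).aestronglyMeasurable
            (hξsqint j) (hXsqint b))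
          (integrable_mul_sq (hξm j).aestronglyMeasurable (hXm a).aestronglyMeasurable
            (hξsqint j) (hXsqint a)), hξX0 j b, hξX0 j a, sub_zero]
      have hI3 : ∫ ω, (X b ω ^ 2 - 2 * (X a ω * X b ω) + X a ω ^ 2) ∂ℙ = 2 := by
        have hmul2 : Integrable (fun ω => 2 * (X a ω * X b ω)) ℙ :=
          (integrable_mul_sq (hXm a).aestronglyMeasurable (hXm b).aestronglyMeasurable
            (hXsqint a) (hXsqint b)).const_mul 2
        have hsub : Integrable (fun ω => X b ω ^ 2 - 2 * (X a ω * X b ω)) ℙ :=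
          (hXsqint b).sub hmul2
        rw [integral_add hsub (hXsqint a), integral_sub (hXsqint b) hmul2,
          integral_const_mul, hXX0 a b (Nat.ne_of_lt hab), hXsqmean a, hXsqmean b]
        norm_num
      calc ∫ ω, (price ξ X S b ω - price ξ X S a ω) ^ 2 ∂ℙ
          = ∫ ω, ((∑ j ∈ Finset.Ico a b, ∑ k ∈ Finset.Ico a b, ξ j ω * ξ k ω)
              + (2 * c) * ∑ j ∈ Finset.Ico a b, (ξ j ω * X b ω - ξ j ω * X a ω))
              + c ^ 2 * (X b ω ^ 2 - 2 * (X a ω * X b ω) + X a ω ^ 2) ∂ℙ :=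
            integral_congr_ae (ae_of_all _ hexp)
        _ = (∫ ω, (∑ j ∈ Finset.Ico a b, ∑ k ∈ Finset.Ico a b, ξ j ω * ξ k ω)
              + (2 * c) * ∑ j ∈ Finset.Ico a b, (ξ j ω * X b ω - ξ j ω * X a ω) ∂ℙ)
            + ∫ ω, c ^ 2 * (X b ω ^ 2 - 2 * (X a ω * X b ω) + X a ω ^ 2) ∂ℙ :=
            integral_add hE12int (hE3int.const_mul (c ^ 2))
        _ = ((∫ ω, ∑ j ∈ Finset.Ico a b, ∑ k ∈ Finset.Ico a b, ξ j ω * ξ k ω ∂ℙ)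
              + ∫ ω, (2 * c) * ∑ j ∈ Finset.Ico a b, (ξ j ω * X b ω - ξ j ω * X a ω) ∂ℙ)
            + ∫ ω, c ^ 2 * (X b ω ^ 2 - 2 * (X a ω * X b ω) + X a ω ^ 2) ∂ℙ := by
            rw [integral_add hE1int (hE2int.const_mul (2 * c))]
        _ = ((b - a : ℕ) : ℝ) * (σ ^ 2 * τ) + S ^ 2 / 2 := by
            rw [integral_const_mul, integral_const_mul, hI1, hI2, hI3, hc]
            ring
  -- generic averaging step
  have hsum : ∀ (k : ℕ) (u w : ℕ → ℕ), k ≠ 0 → (∀ i, u i < w i) → (∀ i, w i - u i = L) →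
      ∫ ω, ((k : ℕ) : ℝ)⁻¹ *
        ∑ i ∈ Finset.range k, (price ξ X S (w i) ω - price ξ X S (u i) ω) ^ 2 ∂ℙ
        = (L : ℝ) * τ * σ ^ 2 + S ^ 2 / 2 := by
    intro k u w hk hlt hd
    rw [integral_const_mul, integral_finset_sum _ (fun i _ => (key (u i) (w i) (hlt i)).1)]
    have hconst : ∀ i ∈ Finset.range k,
        ∫ ω, (price ξ X S (w i) ω - price ξ X S (u i) ω) ^ 2 ∂ℙ
          = (L : ℝ) * (σ ^ 2 * τ) + S ^ 2 / 2 := by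
      intro i _
      rw [(key (u i) (w i) (hlt i)).2, hd i]
    rw [Finset.sum_congr rfl hconst, Finset.sum_const, Finset.card_range, nsmul_eq_mul,
      inv_mul_cancel_left₀ (Nat.cast_ne_zero.mpr hk)]
    ring
  refine ⟨?_, ?_, ?_⟩
  · simpa only [Vhat1] using hsum (n - L) (fun i => i) (fun i => i + L)
      (by omega) (fun i => by show i < i + L; omega) (fun i => by show i + L - i = L; omega)
  · have hk : (n - 1) / L ≠ 0 := by
      have h2 : 1 ≤ (n - 1) / L := (Nat.one_le_div_iff (by omega)).mpr (by omega)
      omega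
    simpa only [Vhat2] using hsum ((n - 1) / L) (fun i => i * L) (fun i => (i + 1) * L)
      hk (fun i => by show i * L < (i + 1) * L
                      have h : (i + 1) * L = i * L + L := by ring
                      omega)
      (fun i => by show (i + 1) * L - i * L = L
                   have h : (i + 1) * L = i * L + L := by ring
                   omega)
  · have hk : n / (L + 1) ≠ 0 := by
      have h2 : 1 ≤ n / (L + 1) := (Nat.one_le_div_iff (by omega)).mpr (by omega)
      omega
    simpa only [Vhat3] using hsum (n / (L + 1)) (fun i => i + i * L) (fun i => i + (i + 1) * L)
      hk (fun i => by show i + i * L < i + (i + 1) * L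
                      have h : (i + 1) * L = i * L + L := by ring
                      omega)
      (fun i => by show i + (i + 1) * L - (i + i * L) = L
                   have h : (i + 1) * L = i * L + L := by ring
                   omega)
end

section
/- In the zero-autocorrelation grid market model, for v ∈ {2,3} and all integers n, L with 1 ≤ L < n and k_v(n,L) ≥ 1, the variance of the empirical variance estimator satisfies exactly Var[V̂_v(n,L)] = (2σ⁴L²τ² + 2σ²LτS² + S⁴/4) / k_v(n,L). -/
open MeasureTheory ProbabilityTheory Filter Finset
open scoped NNReal ENNReal Topology

section AuxDev
open Real

namespace ZacAux

lemma integrable_pow_gauss {b : ℝ} (hb : 0 < b) (m : ℕ) :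
    Integrable (fun x : ℝ => x ^ m * Real.exp (-b * x ^ 2)) := by
  have h := integrable_rpow_mul_exp_neg_mul_sq hb (s := (m : ℝ))
    (lt_of_lt_of_le neg_one_lt_zero (Nat.cast_nonneg m))
  simpa [Real.rpow_natCast] using h

lemma tendsto_pow_gauss_atTop {b : ℝ} (hb : 0 < b) (m : ℕ) :
    Tendsto (fun x : ℝ => x ^ m * Real.exp (-b * x ^ 2)) atTop (𝓝 0) := by
  have h := rpow_mul_exp_neg_mul_sq_isLittleO_exp_neg hb (m : ℝ)
  have h2 : Tendsto (fun x : ℝ => Real.exp (-(1/2) * x)) atTop (𝓝 0) := by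
    rw [Real.tendsto_exp_comp_nhds_zero]
    have h4 : Tendsto (fun x : ℝ => (1/2) * x) atTop atTop :=
      Tendsto.const_mul_atTop (by norm_num) tendsto_id
    exact (tendsto_neg_atTop_atBot.comp h4).congr fun x => by
      simp [Function.comp]
  have h3 := h.isBigO.trans_tendsto h2
  simpa [Real.rpow_natCast] using h3

lemma tendsto_pow_gauss_atBot {b : ℝ} (hb : 0 < b) (m : ℕ) :
    Tendsto (fun x : ℝ => x ^ m * Real.exp (-b * x ^ 2)) atBot (𝓝 0) := by
  have h : Tendsto (fun x : ℝ => (-x) ^ m * Real.exp (-b * x ^ 2)) atTop (𝓝 0) := by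
    have := (tendsto_pow_gauss_atTop hb m).const_mul ((-1 : ℝ) ^ m)
    simp only [mul_zero] at this
    refine this.congr fun x => by rw [neg_pow]; ring
  have h' := h.comp tendsto_neg_atBot_atTop
  refine h'.congr fun x => ?_
  simp [Function.comp, neg_neg]

lemma integral_deriv_zero {F F' : ℝ → ℝ} (hd : ∀ x, HasDerivAt F (F' x) x)
    (hi : Integrable F') (htop : Tendsto F atTop (𝓝 0)) (hbot : Tendsto F atBot (𝓝 0)) :
    ∫ x, F' x = 0 := by
  have h1 : ∫ x in Set.Ioi (0:ℝ), F' x = 0 - F 0 :=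
    MeasureTheory.integral_Ioi_of_hasDerivAt_of_tendsto
      (hd 0).continuousAt.continuousWithinAt (fun x _ => hd x) hi.integrableOn htop
  have h2 : ∫ x in Set.Iic (0:ℝ), F' x = F 0 - 0 :=
    MeasureTheory.integral_Iic_of_hasDerivAt_of_tendsto
      (hd 0).continuousAt.continuousWithinAt (fun x _ => hd x) hi.integrableOn hbot
  rw [← intervalIntegral.integral_Iic_add_Ioi hi.integrableOn hi.integrableOn, h1, h2]
  ring

lemma hasDerivAt_pow_gauss {b : ℝ} (m : ℕ) (x : ℝ) :
    HasDerivAt (fun x : ℝ => x ^ (m+1) * Real.exp (-b * x ^ 2))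
      ((m+1 : ℝ) * (x ^ m * Real.exp (-b * x ^ 2))
        - 2*b*(x ^ (m+2) * Real.exp (-b * x ^ 2))) x := by
  have h1 : HasDerivAt (fun x : ℝ => x ^ (m+1)) ((m+1 : ℝ) * x ^ m) x := by
    simpa using hasDerivAt_pow (m+1) x
  have h2 : HasDerivAt (fun x : ℝ => Real.exp (-b * x ^ 2))
      (Real.exp (-b * x ^ 2) * (-b * (2 * x))) x := by
    have h : HasDerivAt (fun x : ℝ => -b * x ^ 2) (-b * (2 * x)) x := by
      simpa using (hasDerivAt_pow 2 x).const_mul (-b)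
    exact h.exp
  have h3 : HasDerivAt (fun x : ℝ => x ^ (m+1) * Real.exp (-b * x ^ 2)) _ x := h1.mul h2
  convert h3 using 1
  ring

lemma J_step {b : ℝ} (hb : 0 < b) (m : ℕ) :
    (m+1 : ℝ) * ∫ x : ℝ, x ^ m * Real.exp (-b * x ^ 2)
      = 2*b* ∫ x : ℝ, x ^ (m+2) * Real.exp (-b * x ^ 2) := by
  have key : ∫ x : ℝ, ((m+1 : ℝ) * (x ^ m * Real.exp (-b * x ^ 2))
      - 2*b*(x ^ (m+2) * Real.exp (-b * x ^ 2))) = 0 := by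
    refine integral_deriv_zero (hasDerivAt_pow_gauss m) ?_ ?_ ?_
    · exact ((integrable_pow_gauss hb m).const_mul _).sub
        ((integrable_pow_gauss hb (m+2)).const_mul _)
    · simpa using (tendsto_pow_gauss_atTop hb (m+1))
    · simpa using (tendsto_pow_gauss_atBot hb (m+1))
  rw [integral_sub (((integrable_pow_gauss hb m)).const_mul _)
      (((integrable_pow_gauss hb (m+2))).const_mul _),
    integral_const_mul, integral_const_mul] at key
  linarith

lemma J_one {b : ℝ} (hb : 0 < b) : ∫ x : ℝ, x ^ 1 * Real.exp (-b * x ^ 2) = 0 := by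
  have key : ∫ x : ℝ, (-2*b)*(x ^ 1 * Real.exp (-b * x ^ 2)) = 0 := by
    refine integral_deriv_zero (F := fun x : ℝ => Real.exp (-b * x ^ 2)) ?_
      ((integrable_pow_gauss hb 1).const_mul _) ?_ ?_
    · intro x
      have h : HasDerivAt (fun x : ℝ => -b * x ^ 2) (-b * (2 * x)) x := by
        simpa using (hasDerivAt_pow 2 x).const_mul (-b)
      convert h.exp using 1
      ring
    · simpa using (tendsto_pow_gauss_atTop hb 0)
    · simpa using (tendsto_pow_gauss_atBot hb 0)
  rw [integral_const_mul] at key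
  have h2b : (-2*b : ℝ) ≠ 0 := by
    have := hb.ne'
    intro h; apply this; nlinarith
  exact (mul_eq_zero.mp key).resolve_left h2b

lemma J_zero {b : ℝ} (hb : 0 < b) :
    ∫ x : ℝ, x ^ 0 * Real.exp (-b * x ^ 2) = Real.sqrt (π / b) := by
  simpa using integral_gaussian b

lemma J_two {b : ℝ} (hb : 0 < b) :
    ∫ x : ℝ, x ^ 2 * Real.exp (-b * x ^ 2) = Real.sqrt (π / b) / (2*b) := by
  have h := J_step hb 0
  rw [J_zero hb] at h
  field_simp at h ⊢
  linarith

lemma J_three {b : ℝ} (hb : 0 < b) :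
    ∫ x : ℝ, x ^ 3 * Real.exp (-b * x ^ 2) = 0 := by
  have h := J_step hb 1
  rw [J_one hb] at h
  have h2b : (2*b : ℝ) ≠ 0 := by positivity
  simpa [h2b] using h.symm

lemma J_four {b : ℝ} (hb : 0 < b) :
    ∫ x : ℝ, x ^ 4 * Real.exp (-b * x ^ 2) = 3 * Real.sqrt (π / b) / (4*b^2) := by
  have h := J_step hb 2
  rw [J_two hb] at h
  have h2b : (b : ℝ) ≠ 0 := hb.ne'
  field_simp at h ⊢
  linarith

end ZacAux

namespace Gauss

lemma gaussian_density_eq {v : ℝ≥0} (hv : v ≠ 0) (g : ℝ → ℝ) :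
    ∫ x, g x ∂(gaussianReal 0 v) = ∫ x, gaussianPDFReal 0 v x * g x := by
  rw [gaussianReal_of_var_ne_zero 0 hv]
  have hd : gaussianPDF 0 v = fun x => ((Real.toNNReal (gaussianPDFReal 0 v x) : ℝ≥0) : ℝ≥0∞) :=
    rfl
  rw [hd, integral_withDensity_eq_integral_smul
    ((measurable_gaussianPDFReal 0 v).real_toNNReal) g]
  refine integral_congr_ae (Eventually.of_forall fun x => ?_)
  simp [NNReal.smul_def, Real.coe_toNNReal _ (gaussianPDFReal_nonneg 0 v x)]

lemma gaussian_integrable {v : ℝ≥0} (hv : v ≠ 0) {g : ℝ → ℝ}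
    (hint : Integrable (fun x => gaussianPDFReal 0 v x * g x)) :
    Integrable g (gaussianReal 0 v) := by
  rw [gaussianReal_of_var_ne_zero 0 hv]
  have hd : gaussianPDF 0 v = fun x => ((Real.toNNReal (gaussianPDFReal 0 v x) : ℝ≥0) : ℝ≥0∞) :=
    rfl
  rw [hd, integrable_withDensity_iff_integrable_smul
    ((measurable_gaussianPDFReal 0 v).real_toNNReal)]
  refine hint.congr (Eventually.of_forall fun x => ?_)
  simp [NNReal.smul_def, Real.coe_toNNReal _ (gaussianPDFReal_nonneg 0 v x)]

lemma pdf_mul_pow {v : ℝ≥0} (hv : v ≠ 0) (m : ℕ) :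
    (fun x : ℝ => gaussianPDFReal 0 v x * x ^ m)
      = fun x : ℝ => (Real.sqrt (2 * π * v))⁻¹ * (x ^ m * Real.exp (-(2*(v:ℝ))⁻¹ * x ^ 2)) := by
  funext x
  rw [gaussianPDFReal]
  have hvpos : (0:ℝ) < v := lt_of_le_of_ne v.coe_nonneg (by exact_mod_cast (Ne.symm hv))
  have : -(x - 0) ^ 2 / (2 * (v:ℝ)) = -(2*(v:ℝ))⁻¹ * x ^ 2 := by
    field_simp
    ring
  rw [this]; ring

lemma integrable_pow_gaussianReal {v : ℝ≥0} (hv : v ≠ 0) (m : ℕ) :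
    Integrable (fun x : ℝ => x ^ m) (gaussianReal 0 v) := by
  have hvpos : (0:ℝ) < v := lt_of_le_of_ne v.coe_nonneg (by exact_mod_cast (Ne.symm hv))
  have hb : (0:ℝ) < (2*(v:ℝ))⁻¹ := by positivity
  refine gaussian_integrable hv ?_
  rw [pdf_mul_pow hv m]
  exact (ZacAux.integrable_pow_gauss hb m).const_mul _

lemma moment_pow_gaussianReal {v : ℝ≥0} (hv : v ≠ 0) (m : ℕ) :
    ∫ x, x ^ m ∂(gaussianReal 0 v)
      = (Real.sqrt (2 * π * v))⁻¹ * ∫ x : ℝ, x ^ m * Real.exp (-(2*(v:ℝ))⁻¹ * x ^ 2) := by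
  rw [gaussian_density_eq hv, pdf_mul_pow hv m, integral_const_mul]

lemma sqrt_eq {v : ℝ≥0} (hv : v ≠ 0) :
    Real.sqrt (π / (2*(v:ℝ))⁻¹) = Real.sqrt (2 * π * v) := by
  have hvpos : (0:ℝ) < v := lt_of_le_of_ne v.coe_nonneg (by exact_mod_cast (Ne.symm hv))
  congr 1
  field_simp

lemma sqrt_pos' {v : ℝ≥0} (hv : v ≠ 0) : (0:ℝ) < Real.sqrt (2 * π * v) := by
  have hvpos : (0:ℝ) < v := lt_of_le_of_ne v.coe_nonneg (by exact_mod_cast (Ne.symm hv))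
  have := Real.pi_pos
  positivity

lemma gaussianReal_mom1 {v : ℝ≥0} (hv : v ≠ 0) : ∫ x, x ^ 1 ∂(gaussianReal 0 v) = 0 := by
  have hvpos : (0:ℝ) < v := lt_of_le_of_ne v.coe_nonneg (by exact_mod_cast (Ne.symm hv))
  have hb : (0:ℝ) < (2*(v:ℝ))⁻¹ := by positivity
  rw [moment_pow_gaussianReal hv, ZacAux.J_one hb, mul_zero]

lemma gaussianReal_mom2 {v : ℝ≥0} (hv : v ≠ 0) : ∫ x, x ^ 2 ∂(gaussianReal 0 v) = v := by
  have hvpos : (0:ℝ) < v := lt_of_le_of_ne v.coe_nonneg (by exact_mod_cast (Ne.symm hv))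
  have hb : (0:ℝ) < (2*(v:ℝ))⁻¹ := by positivity
  rw [moment_pow_gaussianReal hv, ZacAux.J_two hb, sqrt_eq hv]
  have h0 := (sqrt_pos' hv).ne'
  field_simp

lemma gaussianReal_mom3 {v : ℝ≥0} (hv : v ≠ 0) : ∫ x, x ^ 3 ∂(gaussianReal 0 v) = 0 := by
  have hvpos : (0:ℝ) < v := lt_of_le_of_ne v.coe_nonneg (by exact_mod_cast (Ne.symm hv))
  have hb : (0:ℝ) < (2*(v:ℝ))⁻¹ := by positivity
  rw [moment_pow_gaussianReal hv, ZacAux.J_three hb, mul_zero]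

lemma gaussianReal_mom4 {v : ℝ≥0} (hv : v ≠ 0) :
    ∫ x, x ^ 4 ∂(gaussianReal 0 v) = 3 * (v:ℝ) ^ 2 := by
  have hvpos : (0:ℝ) < v := lt_of_le_of_ne v.coe_nonneg (by exact_mod_cast (Ne.symm hv))
  have hb : (0:ℝ) < (2*(v:ℝ))⁻¹ := by positivity
  rw [moment_pow_gaussianReal hv, ZacAux.J_four hb, sqrt_eq hv]
  have h0 := (sqrt_pos' hv).ne'
  field_simp
  ring

end Gauss

section Model

variable {Ω : Type*} [MeasureSpace Ω] [IsProbabilityMeasure (ℙ : Measure Ω)]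
variable {τ σ S : ℝ} {ξ X : ℕ → Ω → ℝ}

lemma integrable_of_bdd {F : Ω → ℝ} {C : ℝ} (hm : Measurable F) (hF : ∀ ω, |F ω| ≤ C) :
    Integrable F ℙ :=
  (integrable_const C).mono' hm.aestronglyMeasurable (Eventually.of_forall fun ω => hF ω)

lemma xi_integrable (hξm : ∀ i, Measurable (ξ i))
    (hξ : ∀ i, Measure.map (ξ i) ℙ = gaussianReal 0 (Real.toNNReal (σ ^ 2 * τ)))
    (hc : 0 < σ ^ 2 * τ) (i e : ℕ) : Integrable (fun ω => ξ i ω ^ e) ℙ := by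
  have hv : Real.toNNReal (σ ^ 2 * τ) ≠ 0 := by
    simp [Real.toNNReal_eq_zero, not_le, hc]
  have h := Gauss.integrable_pow_gaussianReal hv e
  rw [← hξ i] at h
  exact (integrable_map_measure
    (measurable_id.pow_const e).aestronglyMeasurable (hξm i).aemeasurable).mp h

lemma xi_moment (hξm : ∀ i, Measurable (ξ i))
    (hξ : ∀ i, Measure.map (ξ i) ℙ = gaussianReal 0 (Real.toNNReal (σ ^ 2 * τ)))
    (hc : 0 < σ ^ 2 * τ) (i : ℕ) :
    (∫ ω, ξ i ω ^ 1 ∂ℙ = 0) ∧ (∫ ω, ξ i ω ^ 2 ∂ℙ = σ ^ 2 * τ)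
      ∧ (∫ ω, ξ i ω ^ 3 ∂ℙ = 0) ∧ (∫ ω, ξ i ω ^ 4 ∂ℙ = 3 * (σ ^ 2 * τ) ^ 2) := by
  have hv : Real.toNNReal (σ ^ 2 * τ) ≠ 0 := by
    simp [Real.toNNReal_eq_zero, not_le, hc]
  have key : ∀ e : ℕ, ∫ ω, ξ i ω ^ e ∂ℙ = ∫ x, x ^ e ∂(gaussianReal 0 (Real.toNNReal (σ^2*τ))) := by
    intro e
    rw [← hξ i, integral_map (hξm i).aemeasurable]
    exact (measurable_id.pow_const e).aestronglyMeasurable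
  have hcv : ((Real.toNNReal (σ ^ 2 * τ) : ℝ≥0) : ℝ) = σ ^ 2 * τ := Real.coe_toNNReal _ hc.le
  refine ⟨?_, ?_, ?_, ?_⟩
  · rw [key 1, Gauss.gaussianReal_mom1 hv]
  · rw [key 2, Gauss.gaussianReal_mom2 hv, hcv]
  · rw [key 3, Gauss.gaussianReal_mom3 hv]
  · rw [key 4, Gauss.gaussianReal_mom4 hv, hcv]

lemma X_sq (hXval : ∀ i ω, X i ω = 1 ∨ X i ω = -1) (i : ℕ) (ω : Ω) : X i ω ^ 2 = 1 := by
  rcases hXval i ω with h | h <;> rw [h] <;> norm_num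

lemma X_abs (hXval : ∀ i ω, X i ω = 1 ∨ X i ω = -1) (i : ℕ) (ω : Ω) : |X i ω| ≤ 1 := by
  rcases hXval i ω with h | h <;> rw [h] <;> norm_num

lemma X_integrable (hXm : ∀ i, Measurable (X i)) (hXval : ∀ i ω, X i ω = 1 ∨ X i ω = -1)
    (i : ℕ) : Integrable (X i) ℙ :=
  integrable_of_bdd (hXm i) (X_abs hXval i)

lemma X_mean (hXm : ∀ i, Measurable (X i)) (hXval : ∀ i ω, X i ω = 1 ∨ X i ω = -1)
    (hXlaw : ∀ i, ℙ {ω | X i ω = 1} = 1 / 2) (i : ℕ) : ∫ ω, X i ω ∂ℙ = 0 := by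
  have hA : MeasurableSet {ω | X i ω = 1} := hXm i (measurableSet_singleton 1)
  have hrepr : X i = fun ω => ({ω | X i ω = 1}).indicator (fun _ => (2:ℝ)) ω - 1 := by
    funext ω
    rcases hXval i ω with h | h
    · rw [Set.indicator_of_mem (by exact h) (fun _ => (2:ℝ))]
      rw [h]; norm_num
    · rw [Set.indicator_of_notMem (by norm_num [h]) (fun _ => (2:ℝ))]
      rw [h]; norm_num
  rw [hrepr]
  rw [integral_sub ((integrable_const (2:ℝ)).indicator hA) (integrable_const 1)]
  rw [integral_indicator_const _ hA, measureReal_def, hXlaw i]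
  norm_num [ENNReal.toReal_div]

/-- Sum of the Gaussian increments over `[a, b)`. -/
noncomputable def Gsum (ξ : ℕ → Ω → ℝ) (a b : ℕ) (ω : Ω) : ℝ := ∑ t ∈ Finset.Ico a b, ξ t ω

lemma Gsum_meas (hξm : ∀ i, Measurable (ξ i)) (a b : ℕ) :
    Measurable (fun ω => Gsum ξ a b ω) :=
  Finset.measurable_sum _ fun t _ => hξm t

lemma indep_masked (hIndep : iIndepFun (Sum.elim ξ X) ℙ)
    (hξm : ∀ i, Measurable (ξ i)) (hXm : ∀ i, Measurable (X i))
    (S T : Finset (ℕ ⊕ ℕ)) (hST : Disjoint S T)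
    {Φ Ψ : ((ℕ ⊕ ℕ) → ℝ) → ℝ} (hΦ : Measurable Φ) (hΨ : Measurable Ψ) :
    IndepFun (fun ω => Φ fun i => if i ∈ S then Sum.elim ξ X i ω else 0)
             (fun ω => Ψ fun i => if i ∈ T then Sum.elim ξ X i ω else 0) ℙ := by
  have hm : ∀ i, Measurable (Sum.elim ξ X i) := by rintro (i | i); exacts [hξm i, hXm i]
  have h := hIndep.indepFun_finset S T hST hm
  have hextm : ∀ (U : Finset (ℕ ⊕ ℕ)),
      Measurable (fun (g : (i : U) → ℝ) => fun (i : ℕ ⊕ ℕ) =>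
        if h : i ∈ U then g ⟨i, h⟩ else 0) := by
    intro U
    apply measurable_pi_lambda
    intro i
    by_cases hi : i ∈ U
    · simp only [dif_pos hi]; exact measurable_pi_apply _
    · simp only [dif_neg hi]; exact measurable_const
  have h2 := h.comp (hΦ.comp (hextm S)) (hΨ.comp (hextm T))
  have e1 : ∀ (U : Finset (ℕ ⊕ ℕ)) (Φ' : ((ℕ ⊕ ℕ) → ℝ) → ℝ),
      ((Φ' ∘ (fun (g : (i : U) → ℝ) => fun (i : ℕ ⊕ ℕ) => if h : i ∈ U then g ⟨i, h⟩ else 0))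
          ∘ fun ω (i : U) => Sum.elim ξ X (↑i) ω)
        = fun ω => Φ' fun i => if i ∈ U then Sum.elim ξ X i ω else 0 := by
    intro U Φ'
    funext ω
    simp only [Function.comp]
    have harg : (fun i => if h : i ∈ U then (fun (j : U) => Sum.elim ξ X (↑j) ω) ⟨i, h⟩ else 0)
        = fun i => if i ∈ U then Sum.elim ξ X i ω else 0 := by
      funext i
      by_cases hi : i ∈ U
      · simp [hi]
      · simp [hi]
    rw [harg]
  rw [e1 S Φ, e1 T Ψ] at h2
  exact h2

lemma measurable_sum_eval (s : Finset ℕ) :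
    Measurable (fun g : (ℕ ⊕ ℕ) → ℝ => ∑ t ∈ s, g (Sum.inl t)) :=
  Finset.measurable_sum _ fun t _ => measurable_pi_apply _

lemma measurable_eval_sub (i j : ℕ ⊕ ℕ) :
    Measurable (fun g : (ℕ ⊕ ℕ) → ℝ => g i - g j) :=
  (measurable_pi_apply i).sub (measurable_pi_apply j)

lemma mask_G_eval (U : Finset (ℕ ⊕ ℕ)) (a b : ℕ) (h : ∀ t ∈ Finset.Ico a b, Sum.inl t ∈ U)
    (ω : Ω) :
    (∑ t ∈ Finset.Ico a b, if Sum.inl t ∈ U then Sum.elim ξ X (Sum.inl t) ω else 0)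
      = Gsum ξ a b ω := by
  refine Finset.sum_congr rfl fun t ht => ?_
  rw [if_pos (h t ht)]
  rfl

lemma indep_G_xi (hIndep : iIndepFun (Sum.elim ξ X) ℙ)
    (hξm : ∀ i, Measurable (ξ i)) (hXm : ∀ i, Measurable (X i))
    (a b w : ℕ) (hw : w ∉ Finset.Ico a b) (e l : ℕ) :
    IndepFun (fun ω => (Gsum ξ a b ω) ^ e) (fun ω => ξ w ω ^ l) ℙ := by
  have h := indep_masked hIndep hξm hXm ((Finset.Ico a b).image Sum.inl) {Sum.inl w}
    (Finset.disjoint_singleton_right.mpr (by simpa using hw))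
    (Φ := fun g => (∑ t ∈ Finset.Ico a b, g (Sum.inl t)) ^ e)
    (Ψ := fun g => (g (Sum.inl w)) ^ l)
    ((measurable_sum_eval _).pow_const e)
    ((measurable_pi_apply _).pow_const l)
  convert h using 1
  · funext ω
    beta_reduce
    congr 1
    exact (mask_G_eval _ a b (fun t ht => Finset.mem_image_of_mem _ ht) ω).symm
  · funext ω
    beta_reduce
    rw [if_pos (Finset.mem_singleton_self _)]
    rfl

lemma indep_D_G (hIndep : iIndepFun (Sum.elim ξ X) ℙ)
    (hξm : ∀ i, Measurable (ξ i)) (hXm : ∀ i, Measurable (X i))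
    (s t a b : ℕ) (d e : ℕ) :
    IndepFun (fun ω => (X t ω - X s ω) ^ d) (fun ω => (Gsum ξ a b ω) ^ e) ℙ := by
  have hST : Disjoint ({Sum.inr s, Sum.inr t} : Finset (ℕ ⊕ ℕ)) ((Finset.Ico a b).image Sum.inl) := by
    simp only [Finset.disjoint_left, Finset.mem_insert, Finset.mem_singleton, Finset.mem_image]
    rintro x (rfl | rfl) <;> rintro ⟨y, -, hy⟩ <;> exact absurd hy (by simp)
  have h := indep_masked hIndep hξm hXm _ _ hST
    (Φ := fun g => (g (Sum.inr t) - g (Sum.inr s)) ^ d)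
    (Ψ := fun g => (∑ u ∈ Finset.Ico a b, g (Sum.inl u)) ^ e)
    (((measurable_eval_sub _ _)).pow_const d)
    ((measurable_sum_eval _).pow_const e)
  convert h using 1
  · funext ω
    beta_reduce
    rw [if_pos (by simp : (Sum.inr t : ℕ ⊕ ℕ) ∈ ({Sum.inr s, Sum.inr t} : Finset (ℕ ⊕ ℕ))),
      if_pos (by simp : (Sum.inr s : ℕ ⊕ ℕ) ∈ ({Sum.inr s, Sum.inr t} : Finset (ℕ ⊕ ℕ)))]
    rfl
  · funext ω
    beta_reduce
    congr 1
    exact (mask_G_eval _ a b (fun u hu => Finset.mem_image_of_mem _ hu) ω).symm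

lemma indep_DDG_G (hIndep : iIndepFun (Sum.elim ξ X) ℙ)
    (hξm : ∀ i, Measurable (ξ i)) (hXm : ∀ i, Measurable (X i))
    (s₁ t₁ s₂ t₂ a₂ b₂ a₁ b₁ : ℕ) (hdisj : Disjoint (Finset.Ico a₂ b₂) (Finset.Ico a₁ b₁))
    (d₁ d₂ e₂ e₁ : ℕ) :
    IndepFun
      (fun ω => (X t₁ ω - X s₁ ω) ^ d₁ * (X t₂ ω - X s₂ ω) ^ d₂ * (Gsum ξ a₂ b₂ ω) ^ e₂)
      (fun ω => (Gsum ξ a₁ b₁ ω) ^ e₁) ℙ := by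
  have hST : Disjoint
      (((Finset.Ico a₂ b₂).image Sum.inl) ∪ {Sum.inr s₁, Sum.inr t₁, Sum.inr s₂, Sum.inr t₂})
      ((Finset.Ico a₁ b₁).image Sum.inl) := by
    rw [Finset.disjoint_union_left]
    constructor
    · rw [Finset.disjoint_image Sum.inl_injective]
      exact hdisj
    · simp only [Finset.disjoint_left, Finset.mem_insert, Finset.mem_singleton, Finset.mem_image]
      rintro x (rfl | rfl | rfl | rfl) <;> rintro ⟨y, -, hy⟩ <;> exact absurd hy (by simp)
  have h := indep_masked hIndep hξm hXm _ _ hST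
    (Φ := fun g => (g (Sum.inr t₁) - g (Sum.inr s₁)) ^ d₁
      * (g (Sum.inr t₂) - g (Sum.inr s₂)) ^ d₂ * (∑ u ∈ Finset.Ico a₂ b₂, g (Sum.inl u)) ^ e₂)
    (Ψ := fun g => (∑ u ∈ Finset.Ico a₁ b₁, g (Sum.inl u)) ^ e₁)
    ((((measurable_eval_sub _ _).pow_const d₁).mul
        ((measurable_eval_sub _ _).pow_const d₂)).mul ((measurable_sum_eval _).pow_const e₂))
    ((measurable_sum_eval _).pow_const e₁)
  convert h using 1
  · funext ω
    beta_reduce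
    rw [if_pos (by simp), if_pos (by simp), if_pos (by simp), if_pos (by simp)]
    have hG := mask_G_eval (ξ := ξ) (X := X)
      (((Finset.Ico a₂ b₂).image Sum.inl) ∪ {Sum.inr s₁, Sum.inr t₁, Sum.inr s₂, Sum.inr t₂})
      a₂ b₂ (fun u hu => Finset.mem_union_left _ (Finset.mem_image_of_mem _ hu)) ω
    rw [hG]
    rfl
  · funext ω
    beta_reduce
    congr 1
    exact (mask_G_eval _ a₁ b₁ (fun u hu => Finset.mem_image_of_mem _ hu) ω).symm

lemma indep_DD_G (hIndep : iIndepFun (Sum.elim ξ X) ℙ)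
    (hξm : ∀ i, Measurable (ξ i)) (hXm : ∀ i, Measurable (X i))
    (s₁ t₁ s₂ t₂ a b : ℕ) (d₁ d₂ e : ℕ) :
    IndepFun
      (fun ω => (X t₁ ω - X s₁ ω) ^ d₁ * (X t₂ ω - X s₂ ω) ^ d₂)
      (fun ω => (Gsum ξ a b ω) ^ e) ℙ := by
  have hST : Disjoint ({Sum.inr s₁, Sum.inr t₁, Sum.inr s₂, Sum.inr t₂} : Finset (ℕ ⊕ ℕ))
      ((Finset.Ico a b).image Sum.inl) := by
    simp only [Finset.disjoint_left, Finset.mem_insert, Finset.mem_singleton, Finset.mem_image]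
    rintro x (rfl | rfl | rfl | rfl) <;> rintro ⟨y, -, hy⟩ <;> exact absurd hy (by simp)
  have h := indep_masked hIndep hξm hXm _ _ hST
    (Φ := fun g => (g (Sum.inr t₁) - g (Sum.inr s₁)) ^ d₁ * (g (Sum.inr t₂) - g (Sum.inr s₂)) ^ d₂)
    (Ψ := fun g => (∑ u ∈ Finset.Ico a b, g (Sum.inl u)) ^ e)
    (((measurable_eval_sub _ _).pow_const d₁).mul ((measurable_eval_sub _ _).pow_const d₂))
    ((measurable_sum_eval _).pow_const e)
  convert h using 1
  · funext ω
    beta_reduce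
    rw [if_pos (by simp), if_pos (by simp), if_pos (by simp), if_pos (by simp)]
    rfl
  · funext ω
    beta_reduce
    congr 1
    exact (mask_G_eval _ a b (fun u hu => Finset.mem_image_of_mem _ hu) ω).symm

lemma EImul {F H : Ω → ℝ} (h : IndepFun F H ℙ) (hF : Integrable F ℙ) (hH : Integrable H ℙ) :
    ∫ ω, F ω * H ω ∂ℙ = (∫ ω, F ω ∂ℙ) * ∫ ω, H ω ∂ℙ :=
  h.integral_mul_eq_mul_integral hF.aestronglyMeasurable hH.aestronglyMeasurable

lemma IImul {F H : Ω → ℝ} (h : IndepFun F H ℙ) (hF : Integrable F ℙ) (hH : Integrable H ℙ) :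
    Integrable (fun ω => F ω * H ω) ℙ :=
  h.integrable_mul hF hH

lemma EX_pair (hIndep : iIndepFun (Sum.elim ξ X) ℙ)
    (hXm : ∀ i, Measurable (X i)) (hXval : ∀ i ω, X i ω = 1 ∨ X i ω = -1)
    (hXlaw : ∀ i, ℙ {ω | X i ω = 1} = 1 / 2) {s t : ℕ} (hst : s ≠ t) :
    ∫ ω, X s ω * X t ω ∂ℙ = 0 := by
  have hind : IndepFun (X s) (X t) ℙ :=
    hIndep.indepFun (show (Sum.inr s : ℕ ⊕ ℕ) ≠ Sum.inr t by simpa using hst)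
  rw [EImul hind (X_integrable hXm hXval s) (X_integrable hXm hXval t),
    X_mean hXm hXval hXlaw s, X_mean hXm hXval hXlaw t, mul_zero]

lemma EX_quad (hIndep : iIndepFun (Sum.elim ξ X) ℙ)
    (hξm : ∀ i, Measurable (ξ i))
    (hXm : ∀ i, Measurable (X i)) (hXval : ∀ i ω, X i ω = 1 ∨ X i ω = -1)
    (hXlaw : ∀ i, ℙ {ω | X i ω = 1} = 1 / 2) {a b c d : ℕ}
    (hab : a ≠ b) (hac : a ≠ c) (had : a ≠ d) (hbc : b ≠ c) (hbd : b ≠ d) (hcd : c ≠ d) :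
    ∫ ω, X a ω * (X b ω * (X c ω * X d ω)) ∂ℙ = 0 := by
  have hm : ∀ i, Measurable (Sum.elim ξ X i) := by rintro (i | i); exacts [hξm i, hXm i]
  have hnotmem : (Sum.inr a : ℕ ⊕ ℕ) ∉ ({Sum.inr b, Sum.inr c, Sum.inr d} : Finset (ℕ ⊕ ℕ)) := by
    simp [hab, hac, had]
  have hind := (hIndep.indepFun_finsetProd_of_notMem hm hnotmem).symm
  have hprod : (∏ j ∈ ({Sum.inr b, Sum.inr c, Sum.inr d} : Finset (ℕ ⊕ ℕ)), Sum.elim ξ X j)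
      = fun ω => X b ω * (X c ω * X d ω) := by
    rw [Finset.prod_insert (by simp [hbc, hbd]), Finset.prod_insert (by simp [hcd]),
      Finset.prod_singleton]
    rfl
  rw [hprod] at hind
  have h := EImul hind (X_integrable hXm hXval a)
    (integrable_of_bdd (C := 1) (((hXm b).mul ((hXm c).mul (hXm d))))
      (fun ω => by
        rcases hXval b ω with h1 | h1 <;> rcases hXval c ω with h2 | h2 <;>
          rcases hXval d ω with h3 | h3 <;> norm_num [h1, h2, h3]))
  have h' : ∫ ω, X a ω * (X b ω * (X c ω * X d ω)) ∂ℙ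
      = (∫ ω, X a ω ∂ℙ) * ∫ ω, X b ω * (X c ω * X d ω) ∂ℙ := h
  rw [h', X_mean hXm hXval hXlaw a, zero_mul]

lemma E_D2 (hIndep : iIndepFun (Sum.elim ξ X) ℙ)
    (hXm : ∀ i, Measurable (X i)) (hXval : ∀ i ω, X i ω = 1 ∨ X i ω = -1)
    (hXlaw : ∀ i, ℙ {ω | X i ω = 1} = 1 / 2) {a b : ℕ} (hab : a ≠ b) :
    ∫ ω, (X b ω - X a ω) ^ 2 ∂ℙ = 2 := by
  have hfun : (fun ω => (X b ω - X a ω) ^ 2) = fun ω => 2 - 2 * (X a ω * X b ω) := by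
    funext ω
    rcases hXval a ω with h1 | h1 <;> rcases hXval b ω with h2 | h2 <;> norm_num [h1, h2]
  rw [hfun, integral_sub (integrable_const 2)
    ((integrable_of_bdd (F := fun ω => X a ω * X b ω) (C := 1) ((hXm a).mul (hXm b))
      (fun ω => by rcases hXval a ω with h1 | h1 <;> rcases hXval b ω with h2 | h2 <;>
        norm_num [h1, h2])).const_mul 2),
    integral_const_mul, EX_pair hIndep hXm hXval hXlaw hab]
  simp

lemma int_pair (hXm : ∀ i, Measurable (X i)) (hXval : ∀ i ω, X i ω = 1 ∨ X i ω = -1)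
    (s t : ℕ) : Integrable (fun ω => X s ω * X t ω) ℙ :=
  integrable_of_bdd (C := 1) ((hXm s).mul (hXm t))
    (fun ω => by rcases hXval s ω with h1 | h1 <;> rcases hXval t ω with h2 | h2 <;>
      norm_num [h1, h2])

lemma int_quad (hXm : ∀ i, Measurable (X i)) (hXval : ∀ i ω, X i ω = 1 ∨ X i ω = -1)
    (a b c d : ℕ) : Integrable (fun ω => X a ω * (X b ω * (X c ω * X d ω))) ℙ :=
  integrable_of_bdd (C := 1) ((hXm a).mul ((hXm b).mul ((hXm c).mul (hXm d))))
    (fun ω => by rcases hXval a ω with h1 | h1 <;> rcases hXval b ω with h2 | h2 <;>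
      rcases hXval c ω with h3 | h3 <;> rcases hXval d ω with h4 | h4 <;>
      norm_num [h1, h2, h3, h4])

lemma E_DD2 (hIndep : iIndepFun (Sum.elim ξ X) ℙ)
    (hξm : ∀ i, Measurable (ξ i))
    (hXm : ∀ i, Measurable (X i)) (hXval : ∀ i ω, X i ω = 1 ∨ X i ω = -1)
    (hXlaw : ∀ i, ℙ {ω | X i ω = 1} = 1 / 2) {a₁ b₁ a₂ b₂ : ℕ}
    (h1 : a₁ < b₁) (h12 : b₁ ≤ a₂) (h2 : a₂ < b₂) :
    ∫ ω, (X b₁ ω - X a₁ ω) ^ 2 * (X b₂ ω - X a₂ ω) ^ 2 ∂ℙ = 4 := by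
  rcases lt_or_eq_of_le h12 with hlt | heq
  · -- all four indices distinct
    have hfun : (fun ω => (X b₁ ω - X a₁ ω) ^ 2 * (X b₂ ω - X a₂ ω) ^ 2)
        = fun ω => 4 - 4 * (X a₁ ω * X b₁ ω) - 4 * (X a₂ ω * X b₂ ω)
            + 4 * (X a₁ ω * (X b₁ ω * (X a₂ ω * X b₂ ω))) := by
      funext ω
      rcases hXval a₁ ω with k1 | k1 <;> rcases hXval b₁ ω with k2 | k2 <;>
        rcases hXval a₂ ω with k3 | k3 <;> rcases hXval b₂ ω with k4 | k4 <;>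
        norm_num [k1, k2, k3, k4]
    rw [hfun]
    have iA : Integrable (fun ω => 4 * (X a₁ ω * X b₁ ω)) ℙ :=
      (int_pair hXm hXval a₁ b₁).const_mul 4
    have iB : Integrable (fun ω => 4 * (X a₂ ω * X b₂ ω)) ℙ :=
      (int_pair hXm hXval a₂ b₂).const_mul 4
    have iC : Integrable (fun ω => 4 * (X a₁ ω * (X b₁ ω * (X a₂ ω * X b₂ ω)))) ℙ :=
      (int_quad hXm hXval a₁ b₁ a₂ b₂).const_mul 4
    have iAB : Integrable (fun ω => 4 - 4 * (X a₁ ω * X b₁ ω)) ℙ := (integrable_const 4).sub iA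
    have iAB2 : Integrable (fun ω => 4 - 4 * (X a₁ ω * X b₁ ω) - 4 * (X a₂ ω * X b₂ ω)) ℙ :=
      iAB.sub iB
    rw [integral_add iAB2 iC, integral_sub iAB iB, integral_sub (integrable_const 4) iA]
    rw [integral_const_mul, integral_const_mul, integral_const_mul]
    rw [EX_pair hIndep hXm hXval hXlaw h1.ne, EX_pair hIndep hXm hXval hXlaw h2.ne,
      EX_quad hIndep hξm hXm hXval hXlaw h1.ne (h1.trans hlt).ne
        ((h1.trans (hlt.trans h2)).ne) hlt.ne (hlt.trans h2).ne h2.ne]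
    simp
  · -- shared endpoint : b₁ = a₂
    subst heq
    have hfun : (fun ω => (X b₁ ω - X a₁ ω) ^ 2 * (X b₂ ω - X b₁ ω) ^ 2)
        = fun ω => 4 - 4 * (X a₁ ω * X b₁ ω) - 4 * (X b₁ ω * X b₂ ω)
            + 4 * (X a₁ ω * X b₂ ω) := by
      funext ω
      rcases hXval a₁ ω with k1 | k1 <;> rcases hXval b₁ ω with k2 | k2 <;>
        rcases hXval b₂ ω with k3 | k3 <;> norm_num [k1, k2, k3]
    rw [hfun]
    have iA : Integrable (fun ω => 4 * (X a₁ ω * X b₁ ω)) ℙ :=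
      (int_pair hXm hXval a₁ b₁).const_mul 4
    have iB : Integrable (fun ω => 4 * (X b₁ ω * X b₂ ω)) ℙ :=
      (int_pair hXm hXval b₁ b₂).const_mul 4
    have iC : Integrable (fun ω => 4 * (X a₁ ω * X b₂ ω)) ℙ :=
      (int_pair hXm hXval a₁ b₂).const_mul 4
    have iAB : Integrable (fun ω => 4 - 4 * (X a₁ ω * X b₁ ω)) ℙ := (integrable_const 4).sub iA
    have iAB2 : Integrable (fun ω => 4 - 4 * (X a₁ ω * X b₁ ω) - 4 * (X b₁ ω * X b₂ ω)) ℙ :=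
      iAB.sub iB
    rw [integral_add iAB2 iC, integral_sub iAB iB, integral_sub (integrable_const 4) iA]
    rw [integral_const_mul, integral_const_mul, integral_const_mul]
    rw [EX_pair hIndep hXm hXval hXlaw h1.ne, EX_pair hIndep hXm hXval hXlaw h2.ne,
      EX_pair hIndep hXm hXval hXlaw (h1.trans h2).ne]
    simp

lemma Gsum_moments (hIndep : iIndepFun (Sum.elim ξ X) ℙ)
    (hξm : ∀ i, Measurable (ξ i)) (hXm : ∀ i, Measurable (X i))
    (hξ : ∀ i, Measure.map (ξ i) ℙ = gaussianReal 0 (Real.toNNReal (σ ^ 2 * τ)))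
    (hc : 0 < σ ^ 2 * τ) (a : ℕ) : ∀ m : ℕ,
    (∀ e, e ≤ 4 → Integrable (fun ω => (Gsum ξ a (a+m) ω) ^ e) ℙ) ∧
    (∫ ω, (Gsum ξ a (a+m) ω) ^ 1 ∂ℙ = 0) ∧
    (∫ ω, (Gsum ξ a (a+m) ω) ^ 2 ∂ℙ = m * (σ ^ 2 * τ)) ∧
    (∫ ω, (Gsum ξ a (a+m) ω) ^ 3 ∂ℙ = 0) ∧
    (∫ ω, (Gsum ξ a (a+m) ω) ^ 4 ∂ℙ = 3 * (m : ℝ) ^ 2 * (σ ^ 2 * τ) ^ 2) := by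
  intro m
  induction m with
  | zero =>
    have h0 : ∀ e : ℕ, (fun ω => (Gsum ξ a (a+0) ω) ^ e) = fun _ : Ω => (0:ℝ) ^ e := by
      intro e; funext ω; simp [Gsum]
    refine ⟨fun e _ => ?_, ?_, ?_, ?_, ?_⟩
    · rw [h0 e]; exact integrable_const _
    · rw [h0 1]; simp
    · rw [h0 2]; simp
    · rw [h0 3]; simp
    · rw [h0 4]; simp
  | succ m IH =>
    obtain ⟨IHi, IH1, IH2, IH3, IH4⟩ := IH
    have hsplit : ∀ ω, Gsum ξ a (a+(m+1)) ω = Gsum ξ a (a+m) ω + ξ (a+m) ω := by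
      intro ω
      exact Finset.sum_Ico_succ_top (Nat.le_add_right a m) _
    have hind : ∀ e l : ℕ, IndepFun (fun ω => (Gsum ξ a (a+m) ω) ^ e)
        (fun ω => ξ (a+m) ω ^ l) ℙ :=
      fun e l => indep_G_xi hIndep hξm hXm a (a+m) (a+m) (by simp) e l
    have hxi : ∀ l : ℕ, Integrable (fun ω => ξ (a+m) ω ^ l) ℙ :=
      fun l => xi_integrable hξm hξ hc (a+m) l
    have hmul : ∀ e l : ℕ, e ≤ 4 → Integrable
        (fun ω => (Gsum ξ a (a+m) ω) ^ e * ξ (a+m) ω ^ l) ℙ :=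
      fun e l he => IImul (hind e l) (IHi e he) (hxi l)
    have hEmul : ∀ e l : ℕ, e ≤ 4 → ∫ ω, (Gsum ξ a (a+m) ω) ^ e * ξ (a+m) ω ^ l ∂ℙ
        = (∫ ω, (Gsum ξ a (a+m) ω) ^ e ∂ℙ) * ∫ ω, ξ (a+m) ω ^ l ∂ℙ :=
      fun e l he => EImul (hind e l) (IHi e he) (hxi l)
    obtain ⟨x1, x2, x3, x4⟩ := xi_moment hξm hξ hc (a+m)
    -- the pointwise expansions
    have hf1 : (fun ω => (Gsum ξ a (a+(m+1)) ω) ^ 1)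
        = fun ω => (Gsum ξ a (a+m) ω) ^ 1 + ξ (a+m) ω ^ 1 := by
      funext ω; rw [hsplit ω]; ring
    have hf2 : (fun ω => (Gsum ξ a (a+(m+1)) ω) ^ 2)
        = fun ω => (Gsum ξ a (a+m) ω) ^ 2
            + (2 * ((Gsum ξ a (a+m) ω) ^ 1 * ξ (a+m) ω ^ 1) + ξ (a+m) ω ^ 2) := by
      funext ω; rw [hsplit ω]; ring
    have hf3 : (fun ω => (Gsum ξ a (a+(m+1)) ω) ^ 3)
        = fun ω => (Gsum ξ a (a+m) ω) ^ 3
            + (3 * ((Gsum ξ a (a+m) ω) ^ 2 * ξ (a+m) ω ^ 1)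
            + (3 * ((Gsum ξ a (a+m) ω) ^ 1 * ξ (a+m) ω ^ 2) + ξ (a+m) ω ^ 3)) := by
      funext ω; rw [hsplit ω]; ring
    have hf4 : (fun ω => (Gsum ξ a (a+(m+1)) ω) ^ 4)
        = fun ω => (Gsum ξ a (a+m) ω) ^ 4
            + (4 * ((Gsum ξ a (a+m) ω) ^ 3 * ξ (a+m) ω ^ 1)
            + (6 * ((Gsum ξ a (a+m) ω) ^ 2 * ξ (a+m) ω ^ 2)
            + (4 * ((Gsum ξ a (a+m) ω) ^ 1 * ξ (a+m) ω ^ 3) + ξ (a+m) ω ^ 4))) := by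
      funext ω; rw [hsplit ω]; ring
    -- integrability of the tails
    have i2b : Integrable (fun ω => 2 * ((Gsum ξ a (a+m) ω) ^ 1 * ξ (a+m) ω ^ 1)
        + ξ (a+m) ω ^ 2) ℙ := ((hmul 1 1 (by norm_num)).const_mul 2).add (hxi 2)
    have i3c : Integrable (fun ω => 3 * ((Gsum ξ a (a+m) ω) ^ 1 * ξ (a+m) ω ^ 2)
        + ξ (a+m) ω ^ 3) ℙ := ((hmul 1 2 (by norm_num)).const_mul 3).add (hxi 3)
    have i3b : Integrable (fun ω => 3 * ((Gsum ξ a (a+m) ω) ^ 2 * ξ (a+m) ω ^ 1)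
        + (3 * ((Gsum ξ a (a+m) ω) ^ 1 * ξ (a+m) ω ^ 2) + ξ (a+m) ω ^ 3)) ℙ :=
      ((hmul 2 1 (by norm_num)).const_mul 3).add i3c
    have i4d : Integrable (fun ω => 4 * ((Gsum ξ a (a+m) ω) ^ 1 * ξ (a+m) ω ^ 3)
        + ξ (a+m) ω ^ 4) ℙ := ((hmul 1 3 (by norm_num)).const_mul 4).add (hxi 4)
    have i4c : Integrable (fun ω => 6 * ((Gsum ξ a (a+m) ω) ^ 2 * ξ (a+m) ω ^ 2)
        + (4 * ((Gsum ξ a (a+m) ω) ^ 1 * ξ (a+m) ω ^ 3) + ξ (a+m) ω ^ 4)) ℙ :=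
      ((hmul 2 2 (by norm_num)).const_mul 6).add i4d
    have i4b : Integrable (fun ω => 4 * ((Gsum ξ a (a+m) ω) ^ 3 * ξ (a+m) ω ^ 1)
        + (6 * ((Gsum ξ a (a+m) ω) ^ 2 * ξ (a+m) ω ^ 2)
        + (4 * ((Gsum ξ a (a+m) ω) ^ 1 * ξ (a+m) ω ^ 3) + ξ (a+m) ω ^ 4))) ℙ :=
      ((hmul 3 1 (by norm_num)).const_mul 4).add i4c
    refine ⟨?_, ?_, ?_, ?_, ?_⟩
    · intro e he
      interval_cases e
      · simp only [pow_zero]; exact integrable_const 1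
      · rw [hf1]; exact (IHi 1 (by norm_num)).add (hxi 1)
      · rw [hf2]; exact (IHi 2 (by norm_num)).add i2b
      · rw [hf3]; exact (IHi 3 (by norm_num)).add i3b
      · rw [hf4]; exact (IHi 4 (by norm_num)).add i4b
    · rw [hf1, integral_add (IHi 1 (by norm_num)) (hxi 1), IH1, x1]
      norm_num
    · rw [hf2, integral_add (IHi 2 (by norm_num)) i2b,
        integral_add ((hmul 1 1 (by norm_num)).const_mul 2) (hxi 2),
        integral_const_mul, hEmul 1 1 (by norm_num), IH1, IH2, x1, x2]
      push_cast
      ring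
    · rw [hf3, integral_add (IHi 3 (by norm_num)) i3b,
        integral_add ((hmul 2 1 (by norm_num)).const_mul 3) i3c,
        integral_add ((hmul 1 2 (by norm_num)).const_mul 3) (hxi 3),
        integral_const_mul, integral_const_mul,
        hEmul 2 1 (by norm_num), hEmul 1 2 (by norm_num), IH1, IH2, IH3, x1, x2, x3]
      push_cast
      ring
    · rw [hf4, integral_add (IHi 4 (by norm_num)) i4b,
        integral_add ((hmul 3 1 (by norm_num)).const_mul 4) i4c,
        integral_add ((hmul 2 2 (by norm_num)).const_mul 6) i4d,
        integral_add ((hmul 1 3 (by norm_num)).const_mul 4) (hxi 4),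
        integral_const_mul, integral_const_mul, integral_const_mul,
        hEmul 3 1 (by norm_num), hEmul 2 2 (by norm_num), hEmul 1 3 (by norm_num),
        IH1, IH2, IH3, IH4, x1, x2, x3, x4]
      push_cast
      ring

lemma D_abs (hXval : ∀ i ω, X i ω = 1 ∨ X i ω = -1) (a b : ℕ) (ω : Ω) :
    |X b ω - X a ω| ≤ 2 := by
  rcases hXval a ω with h1 | h1 <;> rcases hXval b ω with h2 | h2 <;> norm_num [h1, h2]

lemma int_D (hXm : ∀ i, Measurable (X i)) (hXval : ∀ i ω, X i ω = 1 ∨ X i ω = -1)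
    (a b d : ℕ) : Integrable (fun ω => (X b ω - X a ω) ^ d) ℙ := by
  refine integrable_of_bdd (C := 2 ^ d) (((hXm b).sub (hXm a)).pow_const d) (fun ω => ?_)
  rw [abs_pow]
  exact pow_le_pow_left₀ (abs_nonneg _) (D_abs hXval a b ω) d

lemma int_DD (hXm : ∀ i, Measurable (X i)) (hXval : ∀ i ω, X i ω = 1 ∨ X i ω = -1)
    (a₁ b₁ a₂ b₂ d₁ d₂ : ℕ) :
    Integrable (fun ω => (X b₁ ω - X a₁ ω) ^ d₁ * (X b₂ ω - X a₂ ω) ^ d₂) ℙ := by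
  refine integrable_of_bdd (C := 2 ^ d₁ * 2 ^ d₂)
    ((((hXm b₁).sub (hXm a₁)).pow_const d₁).mul (((hXm b₂).sub (hXm a₂)).pow_const d₂))
    (fun ω => ?_)
  rw [abs_mul, abs_pow, abs_pow]
  exact mul_le_mul (pow_le_pow_left₀ (abs_nonneg _) (D_abs hXval a₁ b₁ ω) d₁)
    (pow_le_pow_left₀ (abs_nonneg _) (D_abs hXval a₂ b₂ ω) d₂)
    (by positivity) (by positivity)

lemma E_D0 (a b : ℕ) : ∫ ω, (X b ω - X a ω) ^ 0 ∂ℙ = 1 := by simp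

lemma E_D1 (hXm : ∀ i, Measurable (X i)) (hXval : ∀ i ω, X i ω = 1 ∨ X i ω = -1)
    (hXlaw : ∀ i, ℙ {ω | X i ω = 1} = 1 / 2) (a b : ℕ) :
    ∫ ω, (X b ω - X a ω) ^ 1 ∂ℙ = 0 := by
  simp only [pow_one]
  rw [integral_sub (X_integrable hXm hXval b) (X_integrable hXm hXval a),
    X_mean hXm hXval hXlaw, X_mean hXm hXval hXlaw, sub_zero]

lemma E_D3 (hXm : ∀ i, Measurable (X i)) (hXval : ∀ i ω, X i ω = 1 ∨ X i ω = -1)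
    (hXlaw : ∀ i, ℙ {ω | X i ω = 1} = 1 / 2) (a b : ℕ) :
    ∫ ω, (X b ω - X a ω) ^ 3 ∂ℙ = 0 := by
  have hfun : (fun ω => (X b ω - X a ω) ^ 3) = fun ω => 4 * (X b ω - X a ω) ^ 1 := by
    funext ω
    rcases hXval a ω with h1 | h1 <;> rcases hXval b ω with h2 | h2 <;> norm_num [h1, h2]
  rw [hfun, integral_const_mul, E_D1 hXm hXval hXlaw, mul_zero]

lemma E_D4 (hIndep : iIndepFun (Sum.elim ξ X) ℙ)
    (hXm : ∀ i, Measurable (X i)) (hXval : ∀ i ω, X i ω = 1 ∨ X i ω = -1)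
    (hXlaw : ∀ i, ℙ {ω | X i ω = 1} = 1 / 2) {a b : ℕ} (hab : a ≠ b) :
    ∫ ω, (X b ω - X a ω) ^ 4 ∂ℙ = 8 := by
  have hfun : (fun ω => (X b ω - X a ω) ^ 4) = fun ω => 4 * (X b ω - X a ω) ^ 2 := by
    funext ω
    rcases hXval a ω with h1 | h1 <;> rcases hXval b ω with h2 | h2 <;> norm_num [h1, h2]
  rw [hfun, integral_const_mul, E_D2 hIndep hXm hXval hXlaw hab]
  norm_num

lemma Gsum_moments' (hIndep : iIndepFun (Sum.elim ξ X) ℙ)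
    (hξm : ∀ i, Measurable (ξ i)) (hXm : ∀ i, Measurable (X i))
    (hξ : ∀ i, Measure.map (ξ i) ℙ = gaussianReal 0 (Real.toNNReal (σ ^ 2 * τ)))
    (hc : 0 < σ ^ 2 * τ) {a b : ℕ} (hab : a ≤ b) :
    (∀ e, e ≤ 4 → Integrable (fun ω => (Gsum ξ a b ω) ^ e) ℙ) ∧
    (∫ ω, (Gsum ξ a b ω) ^ 1 ∂ℙ = 0) ∧
    (∫ ω, (Gsum ξ a b ω) ^ 2 ∂ℙ = ((b - a : ℕ) : ℝ) * (σ ^ 2 * τ)) ∧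
    (∫ ω, (Gsum ξ a b ω) ^ 3 ∂ℙ = 0) ∧
    (∫ ω, (Gsum ξ a b ω) ^ 4 ∂ℙ = 3 * ((b - a : ℕ) : ℝ) ^ 2 * (σ ^ 2 * τ) ^ 2) := by
  have h := Gsum_moments hIndep hξm hXm hξ hc a (b - a)
  rwa [Nat.add_sub_cancel' hab] at h

/-- The price increment over `[a, b]`. -/
noncomputable def Yinc (ξ X : ℕ → Ω → ℝ) (S : ℝ) (a b : ℕ) (ω : Ω) : ℝ :=
  Gsum ξ a b ω + S / 2 * (X b ω - X a ω)

lemma E_Y2 (hIndep : iIndepFun (Sum.elim ξ X) ℙ)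
    (hξm : ∀ i, Measurable (ξ i)) (hXm : ∀ i, Measurable (X i))
    (hξ : ∀ i, Measure.map (ξ i) ℙ = gaussianReal 0 (Real.toNNReal (σ ^ 2 * τ)))
    (hXval : ∀ i ω, X i ω = 1 ∨ X i ω = -1)
    (hXlaw : ∀ i, ℙ {ω | X i ω = 1} = 1 / 2)
    (hc : 0 < σ ^ 2 * τ) {a b : ℕ} (hab : a < b) :
    Integrable (fun ω => (Yinc ξ X S a b ω) ^ 2) ℙ ∧
    ∫ ω, (Yinc ξ X S a b ω) ^ 2 ∂ℙ
      = ((b - a : ℕ) : ℝ) * (σ ^ 2 * τ) + S ^ 2 / 2 := by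
  obtain ⟨hGi, hG1, hG2, hG3, hG4⟩ := Gsum_moments' hIndep hξm hXm hξ hc hab.le
  have hind : ∀ d e : ℕ, IndepFun (fun ω => (X b ω - X a ω) ^ d)
      (fun ω => (Gsum ξ a b ω) ^ e) ℙ := fun d e => indep_D_G hIndep hξm hXm a b a b d e
  have hMint : ∀ d e : ℕ, e ≤ 4 →
      Integrable (fun ω => (X b ω - X a ω) ^ d * (Gsum ξ a b ω) ^ e) ℙ :=
    fun d e he => IImul (hind d e) (int_D hXm hXval a b d) (hGi e he)
  have hE : ∀ d e : ℕ, e ≤ 4 → ∫ ω, (X b ω - X a ω) ^ d * (Gsum ξ a b ω) ^ e ∂ℙ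
      = (∫ ω, (X b ω - X a ω) ^ d ∂ℙ) * ∫ ω, (Gsum ξ a b ω) ^ e ∂ℙ :=
    fun d e he => EImul (hind d e) (int_D hXm hXval a b d) (hGi e he)
  have hfun : (fun ω => (Yinc ξ X S a b ω) ^ 2)
      = fun ω => (X b ω - X a ω) ^ 0 * (Gsum ξ a b ω) ^ 2
          + (S * ((X b ω - X a ω) ^ 1 * (Gsum ξ a b ω) ^ 1)
          + S ^ 2 / 4 * ((X b ω - X a ω) ^ 2 * (Gsum ξ a b ω) ^ 0)) := by
    funext ω
    rw [Yinc]
    ring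
  have i23 : Integrable (fun ω => S * ((X b ω - X a ω) ^ 1 * (Gsum ξ a b ω) ^ 1)
      + S ^ 2 / 4 * ((X b ω - X a ω) ^ 2 * (Gsum ξ a b ω) ^ 0)) ℙ :=
    ((hMint 1 1 (by norm_num)).const_mul S).add ((hMint 2 0 (by norm_num)).const_mul (S^2/4))
  refine ⟨by rw [hfun]; exact (hMint 0 2 (by norm_num)).add i23, ?_⟩
  rw [hfun, integral_add (hMint 0 2 (by norm_num)) i23,
    integral_add ((hMint 1 1 (by norm_num)).const_mul S)
      ((hMint 2 0 (by norm_num)).const_mul (S^2/4)),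
    integral_const_mul, integral_const_mul,
    hE 0 2 (by norm_num), hE 1 1 (by norm_num), hE 2 0 (by norm_num),
    E_D0, E_D1 hXm hXval hXlaw, E_D2 hIndep hXm hXval hXlaw hab.ne, hG1, hG2]
  have hG0 : ∫ ω, (Gsum ξ a b ω) ^ 0 ∂ℙ = 1 := by simp
  rw [hG0]
  ring

lemma E_Y4 (hIndep : iIndepFun (Sum.elim ξ X) ℙ)
    (hξm : ∀ i, Measurable (ξ i)) (hXm : ∀ i, Measurable (X i))
    (hξ : ∀ i, Measure.map (ξ i) ℙ = gaussianReal 0 (Real.toNNReal (σ ^ 2 * τ)))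
    (hXval : ∀ i ω, X i ω = 1 ∨ X i ω = -1)
    (hXlaw : ∀ i, ℙ {ω | X i ω = 1} = 1 / 2)
    (hc : 0 < σ ^ 2 * τ) {a b : ℕ} (hab : a < b) :
    Integrable (fun ω => (Yinc ξ X S a b ω) ^ 4) ℙ ∧
    ∫ ω, (Yinc ξ X S a b ω) ^ 4 ∂ℙ
      = 3 * ((b - a : ℕ) : ℝ) ^ 2 * (σ ^ 2 * τ) ^ 2
        + 3 * S ^ 2 * ((b - a : ℕ) : ℝ) * (σ ^ 2 * τ) + S ^ 4 / 2 := by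
  obtain ⟨hGi, hG1, hG2, hG3, hG4⟩ := Gsum_moments' hIndep hξm hXm hξ hc hab.le
  have hind : ∀ d e : ℕ, IndepFun (fun ω => (X b ω - X a ω) ^ d)
      (fun ω => (Gsum ξ a b ω) ^ e) ℙ := fun d e => indep_D_G hIndep hξm hXm a b a b d e
  have hMint : ∀ d e : ℕ, e ≤ 4 →
      Integrable (fun ω => (X b ω - X a ω) ^ d * (Gsum ξ a b ω) ^ e) ℙ :=
    fun d e he => IImul (hind d e) (int_D hXm hXval a b d) (hGi e he)
  have hE : ∀ d e : ℕ, e ≤ 4 → ∫ ω, (X b ω - X a ω) ^ d * (Gsum ξ a b ω) ^ e ∂ℙ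
      = (∫ ω, (X b ω - X a ω) ^ d ∂ℙ) * ∫ ω, (Gsum ξ a b ω) ^ e ∂ℙ :=
    fun d e he => EImul (hind d e) (int_D hXm hXval a b d) (hGi e he)
  have hfun : (fun ω => (Yinc ξ X S a b ω) ^ 4)
      = fun ω => (X b ω - X a ω) ^ 0 * (Gsum ξ a b ω) ^ 4
          + (2 * S * ((X b ω - X a ω) ^ 1 * (Gsum ξ a b ω) ^ 3)
          + (3 / 2 * S ^ 2 * ((X b ω - X a ω) ^ 2 * (Gsum ξ a b ω) ^ 2)
          + (S ^ 3 / 2 * ((X b ω - X a ω) ^ 3 * (Gsum ξ a b ω) ^ 1)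
          + S ^ 4 / 16 * ((X b ω - X a ω) ^ 4 * (Gsum ξ a b ω) ^ 0)))) := by
    funext ω
    rw [Yinc]
    ring
  have i5 : Integrable (fun ω => S ^ 4 / 16 * ((X b ω - X a ω) ^ 4 * (Gsum ξ a b ω) ^ 0)) ℙ :=
    (hMint 4 0 (by norm_num)).const_mul _
  have i45 : Integrable (fun ω => S ^ 3 / 2 * ((X b ω - X a ω) ^ 3 * (Gsum ξ a b ω) ^ 1)
      + S ^ 4 / 16 * ((X b ω - X a ω) ^ 4 * (Gsum ξ a b ω) ^ 0)) ℙ :=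
    ((hMint 3 1 (by norm_num)).const_mul _).add i5
  have i345 : Integrable (fun ω => 3 / 2 * S ^ 2 * ((X b ω - X a ω) ^ 2 * (Gsum ξ a b ω) ^ 2)
      + (S ^ 3 / 2 * ((X b ω - X a ω) ^ 3 * (Gsum ξ a b ω) ^ 1)
      + S ^ 4 / 16 * ((X b ω - X a ω) ^ 4 * (Gsum ξ a b ω) ^ 0))) ℙ :=
    ((hMint 2 2 (by norm_num)).const_mul _).add i45
  have i2345 : Integrable (fun ω => 2 * S * ((X b ω - X a ω) ^ 1 * (Gsum ξ a b ω) ^ 3)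
      + (3 / 2 * S ^ 2 * ((X b ω - X a ω) ^ 2 * (Gsum ξ a b ω) ^ 2)
      + (S ^ 3 / 2 * ((X b ω - X a ω) ^ 3 * (Gsum ξ a b ω) ^ 1)
      + S ^ 4 / 16 * ((X b ω - X a ω) ^ 4 * (Gsum ξ a b ω) ^ 0)))) ℙ :=
    ((hMint 1 3 (by norm_num)).const_mul _).add i345
  refine ⟨by rw [hfun]; exact (hMint 0 4 (by norm_num)).add i2345, ?_⟩
  rw [hfun, integral_add (hMint 0 4 (by norm_num)) i2345,
    integral_add ((hMint 1 3 (by norm_num)).const_mul _) i345,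
    integral_add ((hMint 2 2 (by norm_num)).const_mul _) i45,
    integral_add ((hMint 3 1 (by norm_num)).const_mul _) i5,
    integral_const_mul, integral_const_mul, integral_const_mul, integral_const_mul,
    hE 0 4 (by norm_num), hE 1 3 (by norm_num), hE 2 2 (by norm_num),
    hE 3 1 (by norm_num), hE 4 0 (by norm_num),
    E_D0, E_D1 hXm hXval hXlaw, E_D2 hIndep hXm hXval hXlaw hab.ne,
    E_D3 hXm hXval hXlaw, E_D4 hIndep hXm hXval hXlaw hab.ne, hG1, hG2, hG3, hG4]
  have hG0 : ∫ ω, (Gsum ξ a b ω) ^ 0 ∂ℙ = 1 := by simp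
  rw [hG0]
  ring

lemma E_Y2Y2 (hIndep : iIndepFun (Sum.elim ξ X) ℙ)
    (hξm : ∀ i, Measurable (ξ i)) (hXm : ∀ i, Measurable (X i))
    (hξ : ∀ i, Measure.map (ξ i) ℙ = gaussianReal 0 (Real.toNNReal (σ ^ 2 * τ)))
    (hXval : ∀ i ω, X i ω = 1 ∨ X i ω = -1)
    (hXlaw : ∀ i, ℙ {ω | X i ω = 1} = 1 / 2)
    (hc : 0 < σ ^ 2 * τ) {a₁ b₁ a₂ b₂ : ℕ} (h1 : a₁ < b₁) (h12 : b₁ ≤ a₂) (h2 : a₂ < b₂) :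
    Integrable (fun ω => (Yinc ξ X S a₁ b₁ ω) ^ 2 * (Yinc ξ X S a₂ b₂ ω) ^ 2) ℙ ∧
    ∫ ω, (Yinc ξ X S a₁ b₁ ω) ^ 2 * (Yinc ξ X S a₂ b₂ ω) ^ 2 ∂ℙ
      = (((b₁ - a₁ : ℕ) : ℝ) * (σ ^ 2 * τ) + S ^ 2 / 2)
        * (((b₂ - a₂ : ℕ) : ℝ) * (σ ^ 2 * τ) + S ^ 2 / 2) := by
  obtain ⟨hG1i, hG11, hG12, hG13, hG14⟩ := Gsum_moments' hIndep hξm hXm hξ hc h1.le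
  obtain ⟨hG2i, hG21, hG22, hG23, hG24⟩ := Gsum_moments' hIndep hξm hXm hξ hc h2.le
  have hdisj : Disjoint (Finset.Ico a₂ b₂) (Finset.Ico a₁ b₁) := by
    simp only [Finset.disjoint_left, Finset.mem_Ico]
    omega
  have hindA : ∀ d₁ d₂ e₂ e₁ : ℕ, IndepFun
      (fun ω => (X b₁ ω - X a₁ ω) ^ d₁ * (X b₂ ω - X a₂ ω) ^ d₂ * (Gsum ξ a₂ b₂ ω) ^ e₂)
      (fun ω => (Gsum ξ a₁ b₁ ω) ^ e₁) ℙ :=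
    fun d₁ d₂ e₂ e₁ => indep_DDG_G hIndep hξm hXm a₁ b₁ a₂ b₂ a₂ b₂ a₁ b₁ hdisj d₁ d₂ e₂ e₁
  have hindB : ∀ d₁ d₂ e : ℕ, IndepFun
      (fun ω => (X b₁ ω - X a₁ ω) ^ d₁ * (X b₂ ω - X a₂ ω) ^ d₂)
      (fun ω => (Gsum ξ a₂ b₂ ω) ^ e) ℙ :=
    fun d₁ d₂ e => indep_DD_G hIndep hξm hXm a₁ b₁ a₂ b₂ a₂ b₂ d₁ d₂ e
  have iDDG : ∀ d₁ d₂ e₂ : ℕ, e₂ ≤ 4 → Integrable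
      (fun ω => (X b₁ ω - X a₁ ω) ^ d₁ * (X b₂ ω - X a₂ ω) ^ d₂ * (Gsum ξ a₂ b₂ ω) ^ e₂) ℙ :=
    fun d₁ d₂ e₂ he => IImul (hindB d₁ d₂ e₂) (int_DD hXm hXval a₁ b₁ a₂ b₂ d₁ d₂) (hG2i e₂ he)
  have iT : ∀ d₁ d₂ e₂ e₁ : ℕ, e₂ ≤ 4 → e₁ ≤ 4 → Integrable
      (fun ω => (X b₁ ω - X a₁ ω) ^ d₁ * (X b₂ ω - X a₂ ω) ^ d₂ * (Gsum ξ a₂ b₂ ω) ^ e₂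
        * (Gsum ξ a₁ b₁ ω) ^ e₁) ℙ :=
    fun d₁ d₂ e₂ e₁ he₂ he₁ => IImul (hindA d₁ d₂ e₂ e₁) (iDDG d₁ d₂ e₂ he₂) (hG1i e₁ he₁)
  have ET1 : ∀ d₁ d₂ e₂ e₁ : ℕ, e₂ ≤ 4 → e₁ ≤ 4 →
      ∫ ω, (X b₁ ω - X a₁ ω) ^ d₁ * (X b₂ ω - X a₂ ω) ^ d₂ * (Gsum ξ a₂ b₂ ω) ^ e₂
        * (Gsum ξ a₁ b₁ ω) ^ e₁ ∂ℙ
      = (∫ ω, (X b₁ ω - X a₁ ω) ^ d₁ * (X b₂ ω - X a₂ ω) ^ d₂ * (Gsum ξ a₂ b₂ ω) ^ e₂ ∂ℙ)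
        * ∫ ω, (Gsum ξ a₁ b₁ ω) ^ e₁ ∂ℙ :=
    fun d₁ d₂ e₂ e₁ he₂ he₁ => EImul (hindA d₁ d₂ e₂ e₁) (iDDG d₁ d₂ e₂ he₂) (hG1i e₁ he₁)
  have ET2 : ∀ d₁ d₂ e₂ : ℕ, e₂ ≤ 4 →
      ∫ ω, (X b₁ ω - X a₁ ω) ^ d₁ * (X b₂ ω - X a₂ ω) ^ d₂ * (Gsum ξ a₂ b₂ ω) ^ e₂ ∂ℙ
      = (∫ ω, (X b₁ ω - X a₁ ω) ^ d₁ * (X b₂ ω - X a₂ ω) ^ d₂ ∂ℙ)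
        * ∫ ω, (Gsum ξ a₂ b₂ ω) ^ e₂ ∂ℙ :=
    fun d₁ d₂ e₂ he => EImul (hindB d₁ d₂ e₂) (int_DD hXm hXval a₁ b₁ a₂ b₂ d₁ d₂) (hG2i e₂ he)
  have ED00 : ∫ ω, (X b₁ ω - X a₁ ω) ^ 0 * (X b₂ ω - X a₂ ω) ^ 0 ∂ℙ = 1 := by simp
  have ED02 : ∫ ω, (X b₁ ω - X a₁ ω) ^ 0 * (X b₂ ω - X a₂ ω) ^ 2 ∂ℙ = 2 := by
    simp only [pow_zero, one_mul]
    exact E_D2 hIndep hXm hXval hXlaw h2.ne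
  have ED20 : ∫ ω, (X b₁ ω - X a₁ ω) ^ 2 * (X b₂ ω - X a₂ ω) ^ 0 ∂ℙ = 2 := by
    simp only [pow_zero, mul_one]
    exact E_D2 hIndep hXm hXval hXlaw h1.ne
  have ED22 : ∫ ω, (X b₁ ω - X a₁ ω) ^ 2 * (X b₂ ω - X a₂ ω) ^ 2 ∂ℙ = 4 :=
    E_DD2 hIndep hξm hXm hXval hXlaw h1 h12 h2
  have hG10 : ∫ ω, (Gsum ξ a₁ b₁ ω) ^ 0 ∂ℙ = 1 := by simp
  have hG20 : ∫ ω, (Gsum ξ a₂ b₂ ω) ^ 0 ∂ℙ = 1 := by simp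
  have hfun : (fun ω => (Yinc ξ X S a₁ b₁ ω) ^ 2 * (Yinc ξ X S a₂ b₂ ω) ^ 2)
      = fun ω => (X b₁ ω - X a₁ ω) ^ 0 * (X b₂ ω - X a₂ ω) ^ 0 * (Gsum ξ a₂ b₂ ω) ^ 2 * (Gsum ξ a₁ b₁ ω) ^ 2
          + (S * ((X b₁ ω - X a₁ ω) ^ 0 * (X b₂ ω - X a₂ ω) ^ 1 * (Gsum ξ a₂ b₂ ω) ^ 1 * (Gsum ξ a₁ b₁ ω) ^ 2)
          + (S ^ 2 / 4 * ((X b₁ ω - X a₁ ω) ^ 0 * (X b₂ ω - X a₂ ω) ^ 2 * (Gsum ξ a₂ b₂ ω) ^ 0 * (Gsum ξ a₁ b₁ ω) ^ 2)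
          + (S * ((X b₁ ω - X a₁ ω) ^ 1 * (X b₂ ω - X a₂ ω) ^ 0 * (Gsum ξ a₂ b₂ ω) ^ 2 * (Gsum ξ a₁ b₁ ω) ^ 1)
          + (S ^ 2 * ((X b₁ ω - X a₁ ω) ^ 1 * (X b₂ ω - X a₂ ω) ^ 1 * (Gsum ξ a₂ b₂ ω) ^ 1 * (Gsum ξ a₁ b₁ ω) ^ 1)
          + (S ^ 3 / 4 * ((X b₁ ω - X a₁ ω) ^ 1 * (X b₂ ω - X a₂ ω) ^ 2 * (Gsum ξ a₂ b₂ ω) ^ 0 * (Gsum ξ a₁ b₁ ω) ^ 1)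
          + (S ^ 2 / 4 * ((X b₁ ω - X a₁ ω) ^ 2 * (X b₂ ω - X a₂ ω) ^ 0 * (Gsum ξ a₂ b₂ ω) ^ 2 * (Gsum ξ a₁ b₁ ω) ^ 0)
          + (S ^ 3 / 4 * ((X b₁ ω - X a₁ ω) ^ 2 * (X b₂ ω - X a₂ ω) ^ 1 * (Gsum ξ a₂ b₂ ω) ^ 1 * (Gsum ξ a₁ b₁ ω) ^ 0)
          + (S ^ 4 / 16 * ((X b₁ ω - X a₁ ω) ^ 2 * (X b₂ ω - X a₂ ω) ^ 2 * (Gsum ξ a₂ b₂ ω) ^ 0 * (Gsum ξ a₁ b₁ ω) ^ 0))))))))) := by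
    funext ω
    rw [Yinc, Yinc]
    ring
  have it8 : Integrable (fun ω => S ^ 4 / 16 * ((X b₁ ω - X a₁ ω) ^ 2 * (X b₂ ω - X a₂ ω) ^ 2 * (Gsum ξ a₂ b₂ ω) ^ 0 * (Gsum ξ a₁ b₁ ω) ^ 0)) ℙ := (iT 2 2 0 0 (by norm_num) (by norm_num)).const_mul _
  have it7 : Integrable (fun ω => S ^ 3 / 4 * ((X b₁ ω - X a₁ ω) ^ 2 * (X b₂ ω - X a₂ ω) ^ 1 * (Gsum ξ a₂ b₂ ω) ^ 1 * (Gsum ξ a₁ b₁ ω) ^ 0)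
          + (S ^ 4 / 16 * ((X b₁ ω - X a₁ ω) ^ 2 * (X b₂ ω - X a₂ ω) ^ 2 * (Gsum ξ a₂ b₂ ω) ^ 0 * (Gsum ξ a₁ b₁ ω) ^ 0))) ℙ := ((iT 2 1 1 0 (by norm_num) (by norm_num)).const_mul _).add it8
  have it6 : Integrable (fun ω => S ^ 2 / 4 * ((X b₁ ω - X a₁ ω) ^ 2 * (X b₂ ω - X a₂ ω) ^ 0 * (Gsum ξ a₂ b₂ ω) ^ 2 * (Gsum ξ a₁ b₁ ω) ^ 0)
          + (S ^ 3 / 4 * ((X b₁ ω - X a₁ ω) ^ 2 * (X b₂ ω - X a₂ ω) ^ 1 * (Gsum ξ a₂ b₂ ω) ^ 1 * (Gsum ξ a₁ b₁ ω) ^ 0)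
          + (S ^ 4 / 16 * ((X b₁ ω - X a₁ ω) ^ 2 * (X b₂ ω - X a₂ ω) ^ 2 * (Gsum ξ a₂ b₂ ω) ^ 0 * (Gsum ξ a₁ b₁ ω) ^ 0)))) ℙ := ((iT 2 0 2 0 (by norm_num) (by norm_num)).const_mul _).add it7
  have it5 : Integrable (fun ω => S ^ 3 / 4 * ((X b₁ ω - X a₁ ω) ^ 1 * (X b₂ ω - X a₂ ω) ^ 2 * (Gsum ξ a₂ b₂ ω) ^ 0 * (Gsum ξ a₁ b₁ ω) ^ 1)
          + (S ^ 2 / 4 * ((X b₁ ω - X a₁ ω) ^ 2 * (X b₂ ω - X a₂ ω) ^ 0 * (Gsum ξ a₂ b₂ ω) ^ 2 * (Gsum ξ a₁ b₁ ω) ^ 0)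
          + (S ^ 3 / 4 * ((X b₁ ω - X a₁ ω) ^ 2 * (X b₂ ω - X a₂ ω) ^ 1 * (Gsum ξ a₂ b₂ ω) ^ 1 * (Gsum ξ a₁ b₁ ω) ^ 0)
          + (S ^ 4 / 16 * ((X b₁ ω - X a₁ ω) ^ 2 * (X b₂ ω - X a₂ ω) ^ 2 * (Gsum ξ a₂ b₂ ω) ^ 0 * (Gsum ξ a₁ b₁ ω) ^ 0))))) ℙ := ((iT 1 2 0 1 (by norm_num) (by norm_num)).const_mul _).add it6
  have it4 : Integrable (fun ω => S ^ 2 * ((X b₁ ω - X a₁ ω) ^ 1 * (X b₂ ω - X a₂ ω) ^ 1 * (Gsum ξ a₂ b₂ ω) ^ 1 * (Gsum ξ a₁ b₁ ω) ^ 1)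
          + (S ^ 3 / 4 * ((X b₁ ω - X a₁ ω) ^ 1 * (X b₂ ω - X a₂ ω) ^ 2 * (Gsum ξ a₂ b₂ ω) ^ 0 * (Gsum ξ a₁ b₁ ω) ^ 1)
          + (S ^ 2 / 4 * ((X b₁ ω - X a₁ ω) ^ 2 * (X b₂ ω - X a₂ ω) ^ 0 * (Gsum ξ a₂ b₂ ω) ^ 2 * (Gsum ξ a₁ b₁ ω) ^ 0)
          + (S ^ 3 / 4 * ((X b₁ ω - X a₁ ω) ^ 2 * (X b₂ ω - X a₂ ω) ^ 1 * (Gsum ξ a₂ b₂ ω) ^ 1 * (Gsum ξ a₁ b₁ ω) ^ 0)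
          + (S ^ 4 / 16 * ((X b₁ ω - X a₁ ω) ^ 2 * (X b₂ ω - X a₂ ω) ^ 2 * (Gsum ξ a₂ b₂ ω) ^ 0 * (Gsum ξ a₁ b₁ ω) ^ 0)))))) ℙ := ((iT 1 1 1 1 (by norm_num) (by norm_num)).const_mul _).add it5
  have it3 : Integrable (fun ω => S * ((X b₁ ω - X a₁ ω) ^ 1 * (X b₂ ω - X a₂ ω) ^ 0 * (Gsum ξ a₂ b₂ ω) ^ 2 * (Gsum ξ a₁ b₁ ω) ^ 1)
          + (S ^ 2 * ((X b₁ ω - X a₁ ω) ^ 1 * (X b₂ ω - X a₂ ω) ^ 1 * (Gsum ξ a₂ b₂ ω) ^ 1 * (Gsum ξ a₁ b₁ ω) ^ 1)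
          + (S ^ 3 / 4 * ((X b₁ ω - X a₁ ω) ^ 1 * (X b₂ ω - X a₂ ω) ^ 2 * (Gsum ξ a₂ b₂ ω) ^ 0 * (Gsum ξ a₁ b₁ ω) ^ 1)
          + (S ^ 2 / 4 * ((X b₁ ω - X a₁ ω) ^ 2 * (X b₂ ω - X a₂ ω) ^ 0 * (Gsum ξ a₂ b₂ ω) ^ 2 * (Gsum ξ a₁ b₁ ω) ^ 0)
          + (S ^ 3 / 4 * ((X b₁ ω - X a₁ ω) ^ 2 * (X b₂ ω - X a₂ ω) ^ 1 * (Gsum ξ a₂ b₂ ω) ^ 1 * (Gsum ξ a₁ b₁ ω) ^ 0)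
          + (S ^ 4 / 16 * ((X b₁ ω - X a₁ ω) ^ 2 * (X b₂ ω - X a₂ ω) ^ 2 * (Gsum ξ a₂ b₂ ω) ^ 0 * (Gsum ξ a₁ b₁ ω) ^ 0))))))) ℙ := ((iT 1 0 2 1 (by norm_num) (by norm_num)).const_mul _).add it4
  have it2 : Integrable (fun ω => S ^ 2 / 4 * ((X b₁ ω - X a₁ ω) ^ 0 * (X b₂ ω - X a₂ ω) ^ 2 * (Gsum ξ a₂ b₂ ω) ^ 0 * (Gsum ξ a₁ b₁ ω) ^ 2)
          + (S * ((X b₁ ω - X a₁ ω) ^ 1 * (X b₂ ω - X a₂ ω) ^ 0 * (Gsum ξ a₂ b₂ ω) ^ 2 * (Gsum ξ a₁ b₁ ω) ^ 1)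
          + (S ^ 2 * ((X b₁ ω - X a₁ ω) ^ 1 * (X b₂ ω - X a₂ ω) ^ 1 * (Gsum ξ a₂ b₂ ω) ^ 1 * (Gsum ξ a₁ b₁ ω) ^ 1)
          + (S ^ 3 / 4 * ((X b₁ ω - X a₁ ω) ^ 1 * (X b₂ ω - X a₂ ω) ^ 2 * (Gsum ξ a₂ b₂ ω) ^ 0 * (Gsum ξ a₁ b₁ ω) ^ 1)
          + (S ^ 2 / 4 * ((X b₁ ω - X a₁ ω) ^ 2 * (X b₂ ω - X a₂ ω) ^ 0 * (Gsum ξ a₂ b₂ ω) ^ 2 * (Gsum ξ a₁ b₁ ω) ^ 0)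
          + (S ^ 3 / 4 * ((X b₁ ω - X a₁ ω) ^ 2 * (X b₂ ω - X a₂ ω) ^ 1 * (Gsum ξ a₂ b₂ ω) ^ 1 * (Gsum ξ a₁ b₁ ω) ^ 0)
          + (S ^ 4 / 16 * ((X b₁ ω - X a₁ ω) ^ 2 * (X b₂ ω - X a₂ ω) ^ 2 * (Gsum ξ a₂ b₂ ω) ^ 0 * (Gsum ξ a₁ b₁ ω) ^ 0)))))))) ℙ := ((iT 0 2 0 2 (by norm_num) (by norm_num)).const_mul _).add it3
  have it1 : Integrable (fun ω => S * ((X b₁ ω - X a₁ ω) ^ 0 * (X b₂ ω - X a₂ ω) ^ 1 * (Gsum ξ a₂ b₂ ω) ^ 1 * (Gsum ξ a₁ b₁ ω) ^ 2)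
          + (S ^ 2 / 4 * ((X b₁ ω - X a₁ ω) ^ 0 * (X b₂ ω - X a₂ ω) ^ 2 * (Gsum ξ a₂ b₂ ω) ^ 0 * (Gsum ξ a₁ b₁ ω) ^ 2)
          + (S * ((X b₁ ω - X a₁ ω) ^ 1 * (X b₂ ω - X a₂ ω) ^ 0 * (Gsum ξ a₂ b₂ ω) ^ 2 * (Gsum ξ a₁ b₁ ω) ^ 1)
          + (S ^ 2 * ((X b₁ ω - X a₁ ω) ^ 1 * (X b₂ ω - X a₂ ω) ^ 1 * (Gsum ξ a₂ b₂ ω) ^ 1 * (Gsum ξ a₁ b₁ ω) ^ 1)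
          + (S ^ 3 / 4 * ((X b₁ ω - X a₁ ω) ^ 1 * (X b₂ ω - X a₂ ω) ^ 2 * (Gsum ξ a₂ b₂ ω) ^ 0 * (Gsum ξ a₁ b₁ ω) ^ 1)
          + (S ^ 2 / 4 * ((X b₁ ω - X a₁ ω) ^ 2 * (X b₂ ω - X a₂ ω) ^ 0 * (Gsum ξ a₂ b₂ ω) ^ 2 * (Gsum ξ a₁ b₁ ω) ^ 0)
          + (S ^ 3 / 4 * ((X b₁ ω - X a₁ ω) ^ 2 * (X b₂ ω - X a₂ ω) ^ 1 * (Gsum ξ a₂ b₂ ω) ^ 1 * (Gsum ξ a₁ b₁ ω) ^ 0)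
          + (S ^ 4 / 16 * ((X b₁ ω - X a₁ ω) ^ 2 * (X b₂ ω - X a₂ ω) ^ 2 * (Gsum ξ a₂ b₂ ω) ^ 0 * (Gsum ξ a₁ b₁ ω) ^ 0))))))))) ℙ := ((iT 0 1 1 2 (by norm_num) (by norm_num)).const_mul _).add it2
  refine ⟨by rw [hfun]; exact (iT 0 0 2 2 (by norm_num) (by norm_num)).add it1, ?_⟩
  rw [hfun, integral_add (iT 0 0 2 2 (by norm_num) (by norm_num)) it1,
    integral_add ((iT 0 1 1 2 (by norm_num) (by norm_num)).const_mul _) it2,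
    integral_add ((iT 0 2 0 2 (by norm_num) (by norm_num)).const_mul _) it3,
    integral_add ((iT 1 0 2 1 (by norm_num) (by norm_num)).const_mul _) it4,
    integral_add ((iT 1 1 1 1 (by norm_num) (by norm_num)).const_mul _) it5,
    integral_add ((iT 1 2 0 1 (by norm_num) (by norm_num)).const_mul _) it6,
    integral_add ((iT 2 0 2 0 (by norm_num) (by norm_num)).const_mul _) it7,
    integral_add ((iT 2 1 1 0 (by norm_num) (by norm_num)).const_mul _) it8]
  rw [integral_const_mul, integral_const_mul, integral_const_mul, integral_const_mul,
    integral_const_mul, integral_const_mul, integral_const_mul, integral_const_mul]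
  rw [ET1 0 0 2 2 (by norm_num) (by norm_num),
    ET1 0 1 1 2 (by norm_num) (by norm_num),
    ET1 0 2 0 2 (by norm_num) (by norm_num),
    ET1 1 0 2 1 (by norm_num) (by norm_num),
    ET1 1 1 1 1 (by norm_num) (by norm_num),
    ET1 1 2 0 1 (by norm_num) (by norm_num),
    ET1 2 0 2 0 (by norm_num) (by norm_num),
    ET1 2 1 1 0 (by norm_num) (by norm_num),
    ET1 2 2 0 0 (by norm_num) (by norm_num)]
  rw [ET2 0 0 2 (by norm_num),
    ET2 0 1 1 (by norm_num),
    ET2 0 2 0 (by norm_num),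
    ET2 1 0 2 (by norm_num),
    ET2 1 1 1 (by norm_num),
    ET2 1 2 0 (by norm_num),
    ET2 2 0 2 (by norm_num),
    ET2 2 1 1 (by norm_num),
    ET2 2 2 0 (by norm_num)]
  rw [ED00, ED02, ED20, ED22, hG10, hG11, hG12, hG20, hG21, hG22]
  ring

lemma variance_Vhat (hIndep : iIndepFun (Sum.elim ξ X) ℙ)
    (hξm : ∀ i, Measurable (ξ i)) (hXm : ∀ i, Measurable (X i))
    (hξ : ∀ i, Measure.map (ξ i) ℙ = gaussianReal 0 (Real.toNNReal (σ ^ 2 * τ)))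
    (hXval : ∀ i ω, X i ω = 1 ∨ X i ω = -1)
    (hXlaw : ∀ i, ℙ {ω | X i ω = 1} = 1 / 2)
    (hc : 0 < σ ^ 2 * τ) {L : ℕ} (hL : 1 ≤ L)
    (a : ℕ → ℕ) (hstep : ∀ i, a i + L ≤ a (i + 1)) (k : ℕ) :
    variance (fun ω => (k : ℝ)⁻¹ * ∑ i ∈ Finset.range k, (Yinc ξ X S (a i) (a i + L) ω) ^ 2) ℙ
      = (2 * σ ^ 4 * (L : ℝ) ^ 2 * τ ^ 2 + 2 * σ ^ 2 * (L : ℝ) * τ * S ^ 2 + S ^ 4 / 4)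
        / (k : ℝ) := by
  have hmono : ∀ i j, i < j → a i + L ≤ a j := by
    intro i j hij
    have hmon : Monotone a :=
      monotone_nat_of_le_succ fun n => le_trans (Nat.le_add_right _ _) (hstep n)
    exact le_trans (hstep i) (hmon hij)
  have hab : ∀ i, a i < a i + L := fun i => Nat.lt_add_of_pos_right hL
  have hM2 : ∀ i : ℕ, Integrable (fun ω => (Yinc ξ X S (a i) (a i + L) ω) ^ 2) ℙ ∧
      ∫ ω, (Yinc ξ X S (a i) (a i + L) ω) ^ 2 ∂ℙ = (L : ℝ) * (σ ^ 2 * τ) + S ^ 2 / 2 := by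
    intro i
    have h := E_Y2 (S := S) hIndep hξm hXm hξ hXval hXlaw hc (hab i)
    rwa [Nat.add_sub_cancel_left] at h
  have hM4 : ∀ i : ℕ, Integrable (fun ω => (Yinc ξ X S (a i) (a i + L) ω) ^ 4) ℙ ∧
      ∫ ω, (Yinc ξ X S (a i) (a i + L) ω) ^ 4 ∂ℙ
        = 3 * (L : ℝ) ^ 2 * (σ ^ 2 * τ) ^ 2 + 3 * S ^ 2 * (L : ℝ) * (σ ^ 2 * τ) + S ^ 4 / 2 := by
    intro i
    have h := E_Y4 (S := S) hIndep hξm hXm hξ hXval hXlaw hc (hab i)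
    rwa [Nat.add_sub_cancel_left] at h
  have hMM : ∀ i j : ℕ, i ≠ j →
      Integrable (fun ω => (Yinc ξ X S (a i) (a i + L) ω) ^ 2
        * (Yinc ξ X S (a j) (a j + L) ω) ^ 2) ℙ ∧
      ∫ ω, (Yinc ξ X S (a i) (a i + L) ω) ^ 2 * (Yinc ξ X S (a j) (a j + L) ω) ^ 2 ∂ℙ
        = ((L : ℝ) * (σ ^ 2 * τ) + S ^ 2 / 2) ^ 2 := by
    intro i j hij
    rcases lt_or_gt_of_ne hij with h | h
    · have hE := E_Y2Y2 (S := S) hIndep hξm hXm hξ hXval hXlaw hc (hab i) (hmono i j h) (hab j)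
      rw [Nat.add_sub_cancel_left, Nat.add_sub_cancel_left] at hE
      exact ⟨hE.1, by rw [hE.2]; ring⟩
    · have hE := E_Y2Y2 (S := S) hIndep hξm hXm hξ hXval hXlaw hc (hab j) (hmono j i h) (hab i)
      rw [Nat.add_sub_cancel_left, Nat.add_sub_cancel_left] at hE
      have hcomm : (fun ω => (Yinc ξ X S (a i) (a i + L) ω) ^ 2
            * (Yinc ξ X S (a j) (a j + L) ω) ^ 2)
          = fun ω => (Yinc ξ X S (a j) (a j + L) ω) ^ 2
            * (Yinc ξ X S (a i) (a i + L) ω) ^ 2 := by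
        funext ω; ring
      refine ⟨by rw [hcomm]; exact hE.1, ?_⟩
      rw [hcomm, hE.2]; ring
  have hterm : ∀ i j : ℕ, Integrable (fun ω => (Yinc ξ X S (a i) (a i + L) ω) ^ 2
      * (Yinc ξ X S (a j) (a j + L) ω) ^ 2) ℙ := by
    intro i j
    by_cases hij : i = j
    · subst hij
      have hfun : (fun ω => (Yinc ξ X S (a i) (a i + L) ω) ^ 2
          * (Yinc ξ X S (a i) (a i + L) ω) ^ 2)
          = fun ω => (Yinc ξ X S (a i) (a i + L) ω) ^ 4 := by funext ω; ring
      rw [hfun]; exact (hM4 i).1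
    · exact (hMM i j hij).1
  have hEterm : ∀ i j : ℕ, ∫ ω, (Yinc ξ X S (a i) (a i + L) ω) ^ 2
      * (Yinc ξ X S (a j) (a j + L) ω) ^ 2 ∂ℙ
      = if i = j then 3 * (L : ℝ) ^ 2 * (σ ^ 2 * τ) ^ 2 + 3 * S ^ 2 * (L : ℝ) * (σ ^ 2 * τ)
          + S ^ 4 / 2
        else ((L : ℝ) * (σ ^ 2 * τ) + S ^ 2 / 2) ^ 2 := by
    intro i j
    by_cases hij : i = j
    · subst hij
      rw [if_pos rfl]
      have hfun : (fun ω => (Yinc ξ X S (a i) (a i + L) ω) ^ 2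
          * (Yinc ξ X S (a i) (a i + L) ω) ^ 2)
          = fun ω => (Yinc ξ X S (a i) (a i + L) ω) ^ 4 := by funext ω; ring
      rw [hfun]; exact (hM4 i).2
    · rw [if_neg hij]; exact (hMM i j hij).2
  have hYm : ∀ i : ℕ, Measurable (fun ω => Yinc ξ X S (a i) (a i + L) ω) := fun i =>
    (Gsum_meas hξm _ _).add (((hXm _).sub (hXm _)).const_mul (S / 2))
  have hWl2 : MemLp (fun ω => ∑ i ∈ Finset.range k,
      (Yinc ξ X S (a i) (a i + L) ω) ^ 2) 2 ℙ := by
    refine memLp_finsetSum _ fun i _ => ?_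
    refine (memLp_two_iff_integrable_sq ((hYm i).pow_const 2).aestronglyMeasurable).mpr ?_
    have hfun : (fun ω => ((Yinc ξ X S (a i) (a i + L) ω) ^ 2) ^ 2)
        = fun ω => (Yinc ξ X S (a i) (a i + L) ω) ^ 4 := by funext ω; ring
    rw [hfun]; exact (hM4 i).1
  rw [variance_const_mul, variance_eq_sub hWl2]
  simp only [Pi.pow_apply]
  have hEW : ∫ ω, (∑ i ∈ Finset.range k, (Yinc ξ X S (a i) (a i + L) ω) ^ 2) ∂ℙ
      = (k : ℝ) * ((L : ℝ) * (σ ^ 2 * τ) + S ^ 2 / 2) := by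
    rw [integral_finset_sum _ fun i _ => (hM2 i).1,
      Finset.sum_congr rfl fun i _ => (hM2 i).2, Finset.sum_const, Finset.card_range,
      nsmul_eq_mul]
  have hfun2 : (fun ω => (∑ i ∈ Finset.range k, (Yinc ξ X S (a i) (a i + L) ω) ^ 2) ^ 2)
      = fun ω => ∑ i ∈ Finset.range k, ∑ j ∈ Finset.range k,
          (Yinc ξ X S (a i) (a i + L) ω) ^ 2 * (Yinc ξ X S (a j) (a j + L) ω) ^ 2 := by
    funext ω
    rw [sq, Finset.sum_mul_sum]
  have hEW2 : ∫ ω, (∑ i ∈ Finset.range k, (Yinc ξ X S (a i) (a i + L) ω) ^ 2) ^ 2 ∂ℙ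
      = (k : ℝ) * (3 * (L : ℝ) ^ 2 * (σ ^ 2 * τ) ^ 2 + 3 * S ^ 2 * (L : ℝ) * (σ ^ 2 * τ)
          + S ^ 4 / 2)
        + ((k : ℝ) ^ 2 - (k : ℝ)) * ((L : ℝ) * (σ ^ 2 * τ) + S ^ 2 / 2) ^ 2 := by
    rw [hfun2, integral_finset_sum _ fun i _ =>
        (integrable_finset_sum _ fun j _ => hterm i j),
      Finset.sum_congr rfl fun i _ => integral_finset_sum _ fun j _ => hterm i j,
      Finset.sum_congr rfl fun i _ => Finset.sum_congr rfl fun j _ => hEterm i j]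
    have hrow : ∀ i ∈ Finset.range k,
        (∑ j ∈ Finset.range k, if i = j then
            3 * (L : ℝ) ^ 2 * (σ ^ 2 * τ) ^ 2 + 3 * S ^ 2 * (L : ℝ) * (σ ^ 2 * τ) + S ^ 4 / 2
          else ((L : ℝ) * (σ ^ 2 * τ) + S ^ 2 / 2) ^ 2)
        = (3 * (L : ℝ) ^ 2 * (σ ^ 2 * τ) ^ 2 + 3 * S ^ 2 * (L : ℝ) * (σ ^ 2 * τ) + S ^ 4 / 2
            - ((L : ℝ) * (σ ^ 2 * τ) + S ^ 2 / 2) ^ 2)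
          + (k : ℝ) * ((L : ℝ) * (σ ^ 2 * τ) + S ^ 2 / 2) ^ 2 := by
      intro i hi
      rw [Finset.sum_congr rfl (fun j _ => show (if i = j then
          3 * (L : ℝ) ^ 2 * (σ ^ 2 * τ) ^ 2 + 3 * S ^ 2 * (L : ℝ) * (σ ^ 2 * τ) + S ^ 4 / 2
          else ((L : ℝ) * (σ ^ 2 * τ) + S ^ 2 / 2) ^ 2)
          = ((L : ℝ) * (σ ^ 2 * τ) + S ^ 2 / 2) ^ 2
            + (if i = j then
              3 * (L : ℝ) ^ 2 * (σ ^ 2 * τ) ^ 2 + 3 * S ^ 2 * (L : ℝ) * (σ ^ 2 * τ) + S ^ 4 / 2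
              - ((L : ℝ) * (σ ^ 2 * τ) + S ^ 2 / 2) ^ 2 else 0)
          from by by_cases h : i = j <;> simp [h])]
      rw [Finset.sum_add_distrib, Finset.sum_const, Finset.card_range, nsmul_eq_mul,
        Finset.sum_ite_eq, if_pos hi]
      ring
    rw [Finset.sum_congr rfl hrow, Finset.sum_const, Finset.card_range, nsmul_eq_mul]
    ring
  rw [hEW2, hEW]
  rcases eq_or_ne (k : ℝ) 0 with hk | hk
  · rw [hk]
    norm_num
  · field_simp
    ring

lemma price_diff {a b : ℕ} (hab : a ≤ b) (ω : Ω) :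
    price ξ X S b ω - price ξ X S a ω = Yinc ξ X S a b ω := by
  rw [price, price, Yinc, Gsum, Finset.sum_Ico_eq_sub _ hab]
  ring

end Model

end AuxDev

/-- In the zero-autocorrelation grid market model, for `v ∈ {2,3}` the variance of the
empirical variance estimator is exactly `(2σ⁴L²τ² + 2σ²LτS² + S⁴/4)/k_v(n,L)`. -/
theorem Vhat_variance_nonoverlapping_zero_autocorrelation
    {Ω : Type*} [MeasureSpace Ω] [IsProbabilityMeasure (ℙ : Measure Ω)]
    (τ σ S : ℝ) (hτ : 0 < τ) (hσ : 0 < σ) (hS : 0 ≤ S)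
    (ξ X : ℕ → Ω → ℝ)
    (hξm : ∀ i, Measurable (ξ i)) (hXm : ∀ i, Measurable (X i))
    (hξ : ∀ i, Measure.map (ξ i) ℙ = gaussianReal 0 (Real.toNNReal (σ ^ 2 * τ)))
    (hXval : ∀ i ω, X i ω = 1 ∨ X i ω = -1)
    (hXlaw : ∀ i, ℙ {ω | X i ω = 1} = 1 / 2)
    (hIndep : iIndepFun (Sum.elim ξ X) ℙ)
    (n L : ℕ) (hL : 1 ≤ L) (hLn : L < n) :
    (variance (Vhat2 (price ξ X S) n L) ℙ
      = (2 * σ ^ 4 * (L : ℝ) ^ 2 * τ ^ 2 + 2 * σ ^ 2 * (L : ℝ) * τ * S ^ 2 + S ^ 4 / 4)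
        / (((n - 1) / L : ℕ) : ℝ)) ∧
    (variance (Vhat3 (price ξ X S) n L) ℙ
      = (2 * σ ^ 4 * (L : ℝ) ^ 2 * τ ^ 2 + 2 * σ ^ 2 * (L : ℝ) * τ * S ^ 2 + S ^ 4 / 4)
        / ((n / (L + 1) : ℕ) : ℝ)) := by
  have hc : 0 < σ ^ 2 * τ := mul_pos (pow_pos hσ 2) hτ
  constructor
  · have hrepr : Vhat2 (price ξ X S) n L = fun ω => (((n - 1) / L : ℕ) : ℝ)⁻¹ *
        ∑ i ∈ Finset.range ((n - 1) / L), (Yinc ξ X S (i * L) (i * L + L) ω) ^ 2 := by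
      funext ω
      rw [Vhat2]
      congr 1
      refine Finset.sum_congr rfl fun i _ => ?_
      have h1 : (i + 1) * L = i * L + L := Nat.succ_mul i L
      rw [h1]
      congr 1
      exact price_diff (Nat.le_add_right _ _) ω
    rw [hrepr]
    exact variance_Vhat hIndep hξm hXm hξ hXval hXlaw hc hL (fun i => i * L)
      (fun i => le_of_eq (Nat.succ_mul i L).symm) ((n - 1) / L)
  · have hrepr : Vhat3 (price ξ X S) n L = fun ω => ((n / (L + 1) : ℕ) : ℝ)⁻¹ *
        ∑ i ∈ Finset.range (n / (L + 1)), (Yinc ξ X S (i + i * L) (i + i * L + L) ω) ^ 2 := by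
      funext ω
      rw [Vhat3]
      congr 1
      refine Finset.sum_congr rfl fun i _ => ?_
      have h1 : i + (i + 1) * L = i + i * L + L := by rw [Nat.succ_mul]; ring
      rw [h1]
      congr 1
      exact price_diff (Nat.le_add_right _ _) ω
    rw [hrepr]
    exact variance_Vhat hIndep hξm hXm hξ hXval hXlaw hc hL (fun i => i + i * L)
      (fun i => by simp [Nat.succ_mul]; omega) (n / (L + 1))
end

section
/- In the zero-autocorrelation grid market model, for every v ∈ {1,2,3} and all fixed integers L, L' with L ≠ L', 1 ≤ L < n, 1 ≤ L' < n (and k_v(n,L) ≥ 1, k_v(n,L') ≥ 1), the spread estimator Ŝ²_{1,v}(n,L,L') = (2/(L'−L))·(L'·V̂_v(n,L) − L·V̂_v(n,L')) is an unbiased estimator of the squared spread: E[Ŝ²_{1,v}(n,L,L')] = S². -/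
open MeasureTheory ProbabilityTheory Filter Finset
open scoped NNReal ENNReal Topology

section SpreadAux
open Real
set_option linter.unusedSectionVars false
set_option linter.unusedVariables false


lemma int_sq_exp {b : ℝ} (hb : 0 < b) :
    ∫ x : ℝ, x ^ 2 * Real.exp (-b * x ^ 2) = Real.sqrt π / (2 * b ^ ((3:ℝ)/2)) := by
  have h1 : ∫ x : ℝ, x ^ 2 * Real.exp (-b * x ^ 2)
      = 2 * ∫ x in Set.Ioi (0:ℝ), x ^ 2 * Real.exp (-b * x ^ 2) := by
    rw [← integral_comp_abs (f := fun x => x ^ 2 * Real.exp (-b * x ^ 2))]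
    congr 1 with x
    rw [sq_abs]
  have h2 : ∫ x in Set.Ioi (0:ℝ), x ^ 2 * Real.exp (-b * x ^ 2)
      = b ^ (-((2:ℝ) + 1) / 2) * (1 / 2) * Real.Gamma (((2:ℝ) + 1) / 2) := by
    have := integral_rpow_mul_exp_neg_mul_rpow (p := 2) (q := 2) (b := b)
      (by norm_num) (by norm_num) hb
    rw [← this]
    refine setIntegral_congr_fun measurableSet_Ioi (fun x hx => ?_)
    norm_num [show ((2:ℝ)) = ((2:ℕ):ℝ) from by norm_num, Real.rpow_natCast]
  have hG : Real.Gamma (((2:ℝ) + 1) / 2) = Real.sqrt π / 2 := by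
    have : ((2:ℝ) + 1) / 2 = 1/2 + 1 := by norm_num
    rw [this, Real.Gamma_add_one (by norm_num), Real.Gamma_one_half_eq]
    ring
  rw [h1, h2, hG]
  rw [show (-((2:ℝ) + 1) / 2) = -((3:ℝ)/2) by norm_num, Real.rpow_neg hb.le]
  have : (0:ℝ) < b ^ ((3:ℝ)/2) := Real.rpow_pos_of_pos hb _
  field_simp

section gauss
variable {v : ℝ≥0} (hv : 0 < (v:ℝ))

lemma gpdf_eq (x : ℝ) :
    gaussianPDFReal 0 v x = (Real.sqrt (2 * π * v))⁻¹ * Real.exp (-(2*(v:ℝ))⁻¹ * x ^ 2) := by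
  rw [gaussianPDFReal]
  congr 1
  rw [sub_zero]
  congr 1
  field_simp

include hv

lemma gaussianReal_eq_wd :
    gaussianReal 0 v = (volume : Measure ℝ).withDensity
      (fun x => ((gaussianPDFReal 0 v x).toNNReal : ℝ≥0∞)) := by
  rw [gaussianReal_of_var_ne_zero _ (by exact_mod_cast hv.ne')]
  rfl

lemma integral_gauss (f : ℝ → ℝ) (hf : Measurable f) :
    ∫ x, f x ∂(gaussianReal 0 v) = ∫ x, gaussianPDFReal 0 v x * f x := by
  rw [gaussianReal_eq_wd hv,
    integral_withDensity_eq_integral_smul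
      ((measurable_gaussianPDFReal 0 v).real_toNNReal) f]
  congr 1 with x
  simp [NNReal.smul_def, Real.coe_toNNReal _ (gaussianPDFReal_nonneg 0 v x)]

lemma integrable_gauss_iff (f : ℝ → ℝ) (hf : Measurable f) :
    Integrable f (gaussianReal 0 v) ↔
      Integrable (fun x => f x * gaussianPDFReal 0 v x) volume := by
  rw [gaussianReal_eq_wd hv, integrable_withDensity_iff]
  · refine integrable_congr (Filter.Eventually.of_forall fun x => ?_)
    simp [Real.coe_toNNReal _ (gaussianPDFReal_nonneg 0 v x)]
  · exact (measurable_gaussianPDFReal 0 v).real_toNNReal.coe_nnreal_ennreal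
  · exact Filter.Eventually.of_forall fun x => ENNReal.coe_lt_top

lemma integrable_id_gauss : Integrable (fun x => x) (gaussianReal 0 v) := by
  rw [integrable_gauss_iff hv _ measurable_id']
  have h := integrable_rpow_mul_exp_neg_mul_sq (b := (2*(v:ℝ))⁻¹) (by positivity)
    (s := 1) (by norm_num)
  refine (h.const_mul ((Real.sqrt (2 * π * v))⁻¹)).congr
    (Filter.Eventually.of_forall fun x => ?_)
  simp only [gpdf_eq, Real.rpow_one]
  ring

lemma integrable_sq_gauss : Integrable (fun x => x ^ 2) (gaussianReal 0 v) := by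
  rw [integrable_gauss_iff hv _ (measurable_id'.pow_const 2)]
  have h := integrable_rpow_mul_exp_neg_mul_sq (b := (2*(v:ℝ))⁻¹) (by positivity)
    (s := 2) (by norm_num)
  refine (h.const_mul ((Real.sqrt (2 * π * v))⁻¹)).congr
    (Filter.Eventually.of_forall fun x => ?_)
  simp only [gpdf_eq]
  norm_num [show ((2:ℝ)) = ((2:ℕ):ℝ) from by norm_num, Real.rpow_natCast]
  ring

lemma integral_id_gauss : ∫ x, x ∂(gaussianReal 0 v) = 0 := by
  rw [integral_gauss hv _ measurable_id']
  have hodd : ∀ x : ℝ, gaussianPDFReal 0 v (-x) * (-x) = -(gaussianPDFReal 0 v x * x) := by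
    intro x
    rw [gpdf_eq, gpdf_eq]
    ring_nf
  have := integral_neg_eq_self (fun x => gaussianPDFReal 0 v x * x) (volume : Measure ℝ)
  have h2 : ∫ x, gaussianPDFReal 0 v x * x =
      - ∫ x, gaussianPDFReal 0 v x * x := by
    conv_lhs => rw [← this]
    rw [← integral_neg]
    congr 1 with x
    exact hodd x
  linarith

lemma integral_sq_gauss : ∫ x, x ^ 2 ∂(gaussianReal 0 v) = v := by
  rw [integral_gauss hv _ (measurable_id'.pow_const 2)]
  have hb : (0:ℝ) < (2*(v:ℝ))⁻¹ := by positivity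
  calc ∫ x, gaussianPDFReal 0 v x * x ^ 2
      = (Real.sqrt (2 * π * v))⁻¹ * ∫ x, x ^ 2 * Real.exp (-(2*(v:ℝ))⁻¹ * x ^ 2) := by
        rw [← integral_const_mul]
        congr 1 with x
        rw [gpdf_eq]; ring
    _ = (Real.sqrt (2 * π * v))⁻¹ * (Real.sqrt π / (2 * ((2*(v:ℝ))⁻¹) ^ ((3:ℝ)/2))) := by
        rw [int_sq_exp hb]
    _ = v := by
        have ha : (0:ℝ) < 2*(v:ℝ) := by positivity
        rw [Real.inv_rpow ha.le, show (3:ℝ)/2 = 1 + 1/2 by norm_num,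
          Real.rpow_add ha, Real.rpow_one, ← Real.sqrt_eq_rpow,
          show (2*π*(v:ℝ)) = (2*(v:ℝ))*π by ring, Real.sqrt_mul ha.le]
        have hsp : 0 < Real.sqrt π := Real.sqrt_pos.mpr Real.pi_pos
        have hsa : 0 < Real.sqrt (2*(v:ℝ)) := Real.sqrt_pos.mpr ha
        have hsq : Real.sqrt (2*(v:ℝ)) * Real.sqrt (2*(v:ℝ)) = 2*(v:ℝ) :=
          Real.mul_self_sqrt ha.le
        field_simp


end gauss

variable {Ω : Type*} [MeasureSpace Ω] [IsProbabilityMeasure (ℙ : Measure Ω)]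

lemma key_increment
    (τ σ S : ℝ) (hτ : 0 < τ) (hσ : 0 < σ)
    (ξ X : ℕ → Ω → ℝ)
    (hξm : ∀ i, Measurable (ξ i)) (hXm : ∀ i, Measurable (X i))
    (hξ : ∀ i, Measure.map (ξ i) ℙ = gaussianReal 0 (Real.toNNReal (σ ^ 2 * τ)))
    (hXval : ∀ i ω, X i ω = 1 ∨ X i ω = -1)
    (hXlaw : ∀ i, ℙ {ω | X i ω = 1} = 1 / 2)
    (hIndep : iIndepFun (m := fun _ : ℕ ⊕ ℕ => Real.measurableSpace) (Sum.elim ξ X) ℙ)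
    (a l : ℕ) (hl : 1 ≤ l) :
    Integrable (fun ω => (price ξ X S (a+l) ω - price ξ X S a ω)^2) ℙ ∧
    ∫ ω, (price ξ X S (a+l) ω - price ξ X S a ω)^2 ∂ℙ = l * (σ^2*τ) + S^2/2 := by
  set v : ℝ≥0 := Real.toNNReal (σ ^ 2 * τ) with hvdef
  have hvpos : 0 < σ ^ 2 * τ := by positivity
  have hvt : (v:ℝ) = σ ^ 2 * τ := Real.coe_toNNReal _ hvpos.le
  have hv : 0 < (v:ℝ) := by rw [hvt]; exact hvpos
  -- ξ facts
  have hξae : ∀ i, AEMeasurable (ξ i) ℙ := fun i => (hξm i).aemeasurable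
  have Intξ : ∀ i, Integrable (ξ i) ℙ := by
    intro i
    have h := integrable_map_measure (μ := ℙ) (f := ξ i) (g := fun x : ℝ => x)
      aestronglyMeasurable_id (hξae i)
    rw [hξ i] at h
    exact h.mp (integrable_id_gauss hv)
  have Eξ : ∀ i, ∫ ω, ξ i ω ∂ℙ = 0 := by
    intro i
    have h := integral_map (φ := ξ i) (hξae i) (f := fun x : ℝ => x)
      aestronglyMeasurable_id
    rw [hξ i, integral_id_gauss hv] at h
    exact h.symm
  have Intξ2 : ∀ i, Integrable (fun ω => ξ i ω * ξ i ω) ℙ := by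
    intro i
    have h := integrable_map_measure (μ := ℙ) (f := ξ i) (g := fun x : ℝ => x ^ 2)
      (measurable_id'.pow_const 2).aestronglyMeasurable (hξae i)
    rw [hξ i] at h
    refine (h.mp (integrable_sq_gauss hv)).congr (Filter.Eventually.of_forall fun ω => ?_)
    simp [Function.comp, sq]
  have Eξ2 : ∀ i, ∫ ω, ξ i ω * ξ i ω ∂ℙ = σ^2*τ := by
    intro i
    have h := integral_map (φ := ξ i) (hξae i) (f := fun x : ℝ => x ^ 2)
      (measurable_id'.pow_const 2).aestronglyMeasurable
    rw [hξ i, integral_sq_gauss hv] at h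
    have h2 : ∫ ω, ξ i ω * ξ i ω ∂ℙ = ∫ x, (fun x : ℝ => x ^ 2) (ξ i x) ∂ℙ := by
      congr 1 with ω
      simp [sq]
    rw [h2, ← h, hvt]
  -- X facts
  have hXsq : ∀ m ω, X m ω * X m ω = 1 := by
    intro m ω; rcases hXval m ω with h | h <;> rw [h] <;> norm_num
  have IntX : ∀ m, Integrable (X m) ℙ := by
    intro m
    refine (integrable_const (1:ℝ)).mono' (hXm m).aestronglyMeasurable
      (Filter.Eventually.of_forall fun ω => ?_)
    rcases hXval m ω with h | h <;> rw [h] <;> norm_num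
  have IntXX : ∀ m m', Integrable (fun ω => X m ω * X m' ω) ℙ := by
    intro m m'
    refine (integrable_const (1:ℝ)).mono' ((hXm m).mul (hXm m')).aestronglyMeasurable
      (Filter.Eventually.of_forall fun ω => ?_)
    rcases hXval m ω with h | h <;> rcases hXval m' ω with h' | h' <;>
      rw [h, h'] <;> norm_num
  have EX : ∀ m, ∫ ω, X m ω ∂ℙ = 0 := by
    intro m
    have hset : MeasurableSet {ω | X m ω = 1} := hXm m (measurableSet_singleton 1)
    have heq : ∀ ω, X m ω = Set.indicator {ω | X m ω = 1} (fun _ => (2:ℝ)) ω - 1 := by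
      intro ω
      rcases hXval m ω with h | h
      · rw [Set.indicator_of_mem (by exact h) (fun _ => (2:ℝ)), h]; norm_num
      · rw [Set.indicator_of_notMem (by norm_num [h]) (fun _ => (2:ℝ)), h]; norm_num
    calc ∫ ω, X m ω ∂ℙ
        = ∫ ω, (Set.indicator {ω | X m ω = 1} (fun _ => (2:ℝ)) ω - 1) ∂ℙ := by
          exact integral_congr_ae (Filter.Eventually.of_forall heq)
      _ = (∫ ω, Set.indicator {ω | X m ω = 1} (fun _ => (2:ℝ)) ω ∂ℙ) - ∫ _, (1:ℝ) ∂ℙ := by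
          exact integral_sub ((integrable_const (2:ℝ)).indicator hset) (integrable_const 1)
      _ = 0 := by
          rw [integral_indicator_const _ hset, measureReal_def, hXlaw m, integral_const]
          simp [ENNReal.toReal_div]
  -- independence
  have hprs : ∀ (i j : ℕ ⊕ ℕ), i ≠ j →
      IndepFun (Sum.elim ξ X i) (Sum.elim ξ X j) ℙ := fun i j h => hIndep.indepFun h
  have indξξ : ∀ j k, j ≠ k → IndepFun (ξ j) (ξ k) ℙ := by
    intro j k h
    exact hprs (Sum.inl j) (Sum.inl k) (by simp [h])
  have indξX : ∀ j m, IndepFun (ξ j) (X m) ℙ := by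
    intro j m
    exact hprs (Sum.inl j) (Sum.inr m) (by simp)
  have indXX : ∀ m m', m ≠ m' → IndepFun (X m) (X m') ℙ := by
    intro m m' h
    exact hprs (Sum.inr m) (Sum.inr m') (by simp [h])
  -- product expectations
  have Intξξ : ∀ j k, Integrable (fun ω => ξ j ω * ξ k ω) ℙ := by
    intro j k
    by_cases h : j = k
    · subst h; exact Intξ2 j
    · exact (indξξ j k h).integrable_mul (Intξ j) (Intξ k)
  have Eξξ : ∀ j k, j ≠ k → ∫ ω, ξ j ω * ξ k ω ∂ℙ = 0 := by
    intro j k h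
    have := (indξξ j k h).integral_mul_eq_mul_integral (Intξ j).aestronglyMeasurable (Intξ k).aestronglyMeasurable
    rw [show (fun ω => ξ j ω * ξ k ω) = ξ j * ξ k from rfl] at *
    rw [this, Eξ j, Eξ k]; ring
  have IntξX : ∀ j m, Integrable (fun ω => ξ j ω * X m ω) ℙ := by
    intro j m
    exact (indξX j m).integrable_mul (Intξ j) (IntX m)
  have EξX : ∀ j m, ∫ ω, ξ j ω * X m ω ∂ℙ = 0 := by
    intro j m
    have := (indξX j m).integral_mul_eq_mul_integral (Intξ j).aestronglyMeasurable (IntX m).aestronglyMeasurable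
    rw [show (fun ω => ξ j ω * X m ω) = ξ j * X m from rfl] at *
    rw [this, Eξ j]; ring
  have EXX : ∀ m m', m ≠ m' → ∫ ω, X m ω * X m' ω ∂ℙ = 0 := by
    intro m m' h
    have := (indXX m m' h).integral_mul_eq_mul_integral (IntX m).aestronglyMeasurable (IntX m').aestronglyMeasurable
    rw [show (fun ω => X m ω * X m' ω) = X m * X m' from rfl] at *
    rw [this, EX m]; ring
  -- decomposition
  set s : Finset ℕ := Finset.Ico a (a + l) with hsdef
  set A : Ω → ℝ := fun ω => ∑ j ∈ s, ξ j ω with hAdef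
  set B : Ω → ℝ := fun ω => S / 2 * (X (a+l) ω - X a ω) with hBdef
  have hD : ∀ ω, price ξ X S (a+l) ω - price ξ X S a ω = A ω + B ω := by
    intro ω
    have hsum : ∑ j ∈ s, ξ j ω
        = (∑ j ∈ Finset.range (a+l), ξ j ω) - ∑ j ∈ Finset.range a, ξ j ω := by
      rw [hsdef]
      exact Finset.sum_Ico_eq_sub _ (Nat.le_add_right a l)
    simp only [price, hAdef, hBdef, hsum]
    ring
  -- (1) A*A
  have IntAA : Integrable (fun ω => A ω * A ω) ℙ := by
    have : (fun ω => A ω * A ω)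
        = fun ω => ∑ j ∈ s, ∑ k ∈ s, ξ j ω * ξ k ω := by
      funext ω
      simp only [hAdef]
      rw [Finset.sum_mul_sum]
    rw [this]
    exact integrable_finset_sum s fun j _ => integrable_finset_sum s fun k _ => Intξξ j k
  have EAA : ∫ ω, A ω * A ω ∂ℙ = l * (σ^2*τ) := by
    have h1 : (fun ω => A ω * A ω)
        = fun ω => ∑ j ∈ s, ∑ k ∈ s, ξ j ω * ξ k ω := by
      funext ω
      simp only [hAdef]
      rw [Finset.sum_mul_sum]
    rw [h1, integral_finset_sum s fun j _ =>
      integrable_finset_sum s fun k _ => Intξξ j k]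
    have h2 : ∀ j ∈ s, ∫ ω, ∑ k ∈ s, ξ j ω * ξ k ω ∂ℙ = σ^2*τ := by
      intro j hj
      rw [integral_finset_sum s fun k _ => Intξξ j k]
      have h3 : ∀ k ∈ s, ∫ ω, ξ j ω * ξ k ω ∂ℙ
          = if k = j then σ^2*τ else 0 := by
        intro k _
        by_cases h : k = j
        · subst h; simp [Eξ2 k]
        · simp [h, Eξξ j k (fun hjk => h hjk.symm)]
      rw [Finset.sum_congr rfl h3, Finset.sum_ite_eq' s j fun _ => σ^2*τ, if_pos hj]
    rw [Finset.sum_congr rfl h2, Finset.sum_const, Nat.card_Ico]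
    simp [nsmul_eq_mul]
  -- (2) A*B
  have hg : ∀ m, Integrable (fun ω => A ω * X m ω) ℙ ∧ ∫ ω, A ω * X m ω ∂ℙ = 0 := by
    intro m
    have h1 : (fun ω => A ω * X m ω) = fun ω => ∑ j ∈ s, ξ j ω * X m ω := by
      funext ω
      simp only [hAdef]
      rw [Finset.sum_mul]
    rw [h1]
    refine ⟨integrable_finset_sum s fun j _ => IntξX j m, ?_⟩
    rw [integral_finset_sum s fun j _ => IntξX j m]
    exact Finset.sum_eq_zero fun j _ => EξX j m
  have hABeq : (fun ω => A ω * B ω)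
      = fun ω => S / 2 * (A ω * X (a+l) ω - A ω * X a ω) := by
    funext ω
    simp only [hBdef]
    ring
  have IntAB : Integrable (fun ω => A ω * B ω) ℙ := by
    rw [hABeq]
    exact (((hg (a+l)).1.sub (hg a).1).const_mul _)
  have EAB : ∫ ω, A ω * B ω ∂ℙ = 0 := by
    rw [hABeq, integral_const_mul, integral_sub (hg (a+l)).1 (hg a).1,
      (hg (a+l)).2, (hg a).2]
    ring
  -- (3) B*B
  have hBBeq : (fun ω => B ω * B ω)
      = fun ω => S^2/4 * (2 - 2 * (X a ω * X (a+l) ω)) := by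
    funext ω
    have h1 := hXsq a ω
    have h2 := hXsq (a+l) ω
    simp only [hBdef]
    linear_combination (S^2/4) * h1 + (S^2/4) * h2
  have IntBB : Integrable (fun ω => B ω * B ω) ℙ := by
    rw [hBBeq]
    exact (((integrable_const (2:ℝ)).sub ((IntXX a (a+l)).const_mul 2)).const_mul _)
  have EBB : ∫ ω, B ω * B ω ∂ℙ = S^2/2 := by
    have hne : a ≠ a + l := by omega
    rw [hBBeq, integral_const_mul, integral_sub (integrable_const 2)
      ((IntXX a (a+l)).const_mul 2), integral_const_mul, EXX a (a+l) hne,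
      integral_const]
    simp
    ring
  -- conclusion
  have hDsq : (fun ω => (price ξ X S (a+l) ω - price ξ X S a ω)^2)
      = fun ω => A ω * A ω + 2 * (A ω * B ω) + B ω * B ω := by
    funext ω
    rw [hD ω]
    ring
  have IntAB2 : Integrable (fun ω => 2 * (A ω * B ω)) ℙ := IntAB.const_mul 2
  have I12 : Integrable (fun ω => A ω * A ω + 2 * (A ω * B ω)) ℙ := IntAA.add IntAB2
  constructor
  · rw [hDsq]
    exact I12.add IntBB
  · rw [hDsq, integral_add I12 IntBB, integral_add IntAA IntAB2,
      integral_const_mul, EAA, EAB, EBB]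
    ring










lemma int_avg (k : ℕ) (hk : k ≠ 0) (F : ℕ → Ω → ℝ) (c : ℝ)
    (hF : ∀ i, Integrable (F i) ℙ) (hFe : ∀ i, ∫ ω, F i ω ∂ℙ = c) :
    Integrable (fun ω => (k:ℝ)⁻¹ * ∑ i ∈ Finset.range k, F i ω) ℙ ∧
      ∫ ω, (k:ℝ)⁻¹ * ∑ i ∈ Finset.range k, F i ω ∂ℙ = c := by
  have hint : Integrable (fun ω => ∑ i ∈ Finset.range k, F i ω) ℙ :=
    integrable_finset_sum _ fun i _ => hF i
  refine ⟨hint.const_mul _, ?_⟩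
  rw [integral_const_mul, integral_finset_sum _ fun i _ => hF i,
    Finset.sum_congr rfl fun i _ => hFe i, Finset.sum_const, Finset.card_range,
    nsmul_eq_mul, ← mul_assoc, inv_mul_cancel₀ (by exact_mod_cast hk), one_mul]


end SpreadAux

/-- In the zero-autocorrelation grid market model, the spread estimators
`Ŝ²_{1,v}(n,L,L')`, `v ∈ {1,2,3}`, are unbiased estimators of `S²`. -/
theorem Shat_unbiased_zero_autocorrelation
    {Ω : Type*} [MeasureSpace Ω] [IsProbabilityMeasure (ℙ : Measure Ω)]
    (τ σ S : ℝ) (hτ : 0 < τ) (hσ : 0 < σ) (hS : 0 ≤ S)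
    (ξ X : ℕ → Ω → ℝ)
    (hξm : ∀ i, Measurable (ξ i)) (hXm : ∀ i, Measurable (X i))
    (hξ : ∀ i, Measure.map (ξ i) ℙ = gaussianReal 0 (Real.toNNReal (σ ^ 2 * τ)))
    (hXval : ∀ i ω, X i ω = 1 ∨ X i ω = -1)
    (hXlaw : ∀ i, ℙ {ω | X i ω = 1} = 1 / 2)
    (hIndep : iIndepFun (m := fun _ : ℕ ⊕ ℕ => Real.measurableSpace) (Sum.elim ξ X) ℙ)
    (n L L' : ℕ) (hL : 1 ≤ L) (hL' : 1 ≤ L') (hne : L ≠ L')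
    (hLn : L < n) (hL'n : L' < n) :
    (∫ ω, Shat (Vhat1 (price ξ X S)) n L L' ω ∂ℙ = S ^ 2) ∧
    (∫ ω, Shat (Vhat2 (price ξ X S)) n L L' ω ∂ℙ = S ^ 2) ∧
    (∫ ω, Shat (Vhat3 (price ξ X S)) n L L' ω ∂ℙ = S ^ 2) := by
  have key := fun a l hl => key_increment τ σ S hτ hσ ξ X hξm hXm hξ hXval hXlaw hIndep a l hl
  set m : ℝ := σ ^ 2 * τ with hm
  -- generic final step
  have final : ∀ (Vh : ℕ → ℕ → Ω → ℝ),
      (∀ l, 1 ≤ l → l < n → Integrable (Vh n l) ℙ ∧ ∫ ω, Vh n l ω ∂ℙ = l * m + S^2/2) →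
      ∫ ω, Shat Vh n L L' ω ∂ℙ = S ^ 2 := by
    intro Vh hVh
    obtain ⟨IL, EL⟩ := hVh L hL hLn
    obtain ⟨IL', EL'⟩ := hVh L' hL' hL'n
    have hd : (L':ℝ) - (L:ℝ) ≠ 0 := by
      have : (L:ℝ) ≠ (L':ℝ) := by exact_mod_cast hne
      exact sub_ne_zero.mpr (Ne.symm this)
    have h1 : ∫ ω, Shat Vh n L L' ω ∂ℙ
        = 2 / ((L':ℝ) - (L:ℝ)) * ((L':ℝ) * (L * m + S^2/2) - (L:ℝ) * (L' * m + S^2/2)) := by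
      simp only [Shat]
      rw [integral_const_mul, integral_sub (IL.const_mul _) (IL'.const_mul _),
        integral_const_mul, integral_const_mul, EL, EL']
    rw [h1]
    field_simp
    ring
  refine ⟨final _ ?_, final _ ?_, final _ ?_⟩
  · intro l hl hln
    have h := int_avg (n - l) (Nat.sub_ne_zero_of_lt hln)
      (fun i ω => (price ξ X S (i + l) ω - price ξ X S i ω) ^ 2) (l * m + S^2/2)
      (fun i => (key i l hl).1) (fun i => (key i l hl).2)
    exact h
  · intro l hl hln
    have hk : (n - 1) / l ≠ 0 := (Nat.div_pos (by omega) hl).ne'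
    have hF : ∀ i, Integrable
        (fun ω => (price ξ X S ((i + 1) * l) ω - price ξ X S (i * l) ω) ^ 2) ℙ := by
      intro i
      have h := (key (i * l) l hl).1
      rw [show i * l + l = (i + 1) * l by ring] at h
      exact h
    have hFe : ∀ i, ∫ ω, (price ξ X S ((i + 1) * l) ω - price ξ X S (i * l) ω) ^ 2 ∂ℙ
        = l * m + S^2/2 := by
      intro i
      have h := (key (i * l) l hl).2
      rw [show i * l + l = (i + 1) * l by ring] at h
      exact h
    exact int_avg ((n - 1) / l) hk _ _ hF hFe
  · intro l hl hln
    have hk : n / (l + 1) ≠ 0 := (Nat.div_pos (by omega) (Nat.succ_pos l)).ne'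
    have hF : ∀ i, Integrable
        (fun ω => (price ξ X S (i + (i + 1) * l) ω - price ξ X S (i + i * l) ω) ^ 2) ℙ := by
      intro i
      have h := (key (i + i * l) l hl).1
      rw [show i + i * l + l = i + (i + 1) * l by ring] at h
      exact h
    have hFe : ∀ i, ∫ ω, (price ξ X S (i + (i + 1) * l) ω - price ξ X S (i + i * l) ω) ^ 2 ∂ℙ
        = l * m + S^2/2 := by
      intro i
      have h := (key (i + i * l) l hl).2
      rw [show i + i * l + l = i + (i + 1) * l by ring] at h
      exact h
    exact int_avg (n / (l + 1)) hk _ _ hF hFe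
end

section
/- Fix τ > 0, σ > 0, S ≥ 0, H ∈ (0,1) and an integer n ≥ 2. On a probability space let (p*_i)_{0 ≤ i ≤ n−1} be centered square-integrable random variables with E[(p*_j − p*_i)²] = σ²·((j−i)τ)^{2H} for all 0 ≤ i ≤ j ≤ n−1, and let (η_i)_{0 ≤ i ≤ n−1} be i.i.d. uniform on {−S/2, S/2}, independent of (p*_i); set p_i = p*_i + η_i. Then for every v ∈ {1,2,3} and all integers L ≠ L' with 1 ≤ L, L' < n (and k_v(n,L) ≥ 1, k_v(n,L') ≥ 1), the standard spread estimator is biased with bias E[Ŝ²_{1,v}(n,L,L')] − S² = 2σ²τ^{2H}·(L'·L^{2H} − L·L'^{2H})/(L'−L); in particular for (L,L') = (1,2) the bias equals 4σ²τ^{2H}(1 − 2^{2H−1}), which is positive when H < 1/2 and negative when H > 1/2. -/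
open MeasureTheory ProbabilityTheory Filter Finset
open scoped NNReal ENNReal Topology

lemma memLp_two_mul_integrable {Ω : Type*} [MeasureSpace Ω] {f g : Ω → ℝ}
    (hf : MemLp f 2 ℙ) (hg : MemLp g 2 ℙ) :
    Integrable (fun ω => f ω * g ω) ℙ := by
  have h1 := (hf.add hg).integrable_sq
  have h2 := hf.integrable_sq
  have h3 := hg.integrable_sq
  have h4 : Integrable (fun ω => (((f ω + g ω) ^ 2 - f ω ^ 2) - g ω ^ 2) / 2) ℙ :=
    ((h1.sub h2).sub h3).div_const 2
  have : (fun ω => f ω * g ω)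
      = fun ω => (((f ω + g ω) ^ 2 - f ω ^ 2) - g ω ^ 2) / 2 := by
    funext ω; ring
  rw [this]; exact h4

lemma Vhat_generic {Ω : Type*} [MeasureSpace Ω] [IsProbabilityMeasure (ℙ : Measure Ω)]
    (q : ℕ → Ω → ℝ) (k : ℕ) (a b : ℕ → ℕ) (c : ℝ) (hk : 1 ≤ k)
    (hint : ∀ i ∈ Finset.range k, Integrable (fun ω => (q (a i) ω - q (b i) ω) ^ 2) ℙ)
    (hval : ∀ i ∈ Finset.range k, ∫ ω, (q (a i) ω - q (b i) ω) ^ 2 ∂ℙ = c) :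
    (∫ ω, (k : ℝ)⁻¹ * ∑ i ∈ Finset.range k, (q (a i) ω - q (b i) ω) ^ 2 ∂ℙ = c)
      ∧ Integrable (fun ω => (k : ℝ)⁻¹ *
          ∑ i ∈ Finset.range k, (q (a i) ω - q (b i) ω) ^ 2) ℙ := by
  have hsum : Integrable (fun ω => ∑ i ∈ Finset.range k, (q (a i) ω - q (b i) ω) ^ 2) ℙ :=
    integrable_finset_sum _ hint
  constructor
  · rw [integral_const_mul, integral_finset_sum _ hint, Finset.sum_congr rfl hval,
      Finset.sum_const, Finset.card_range, nsmul_eq_mul, inv_mul_cancel_left₀]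
    exact Nat.cast_ne_zero.mpr (Nat.one_le_iff_ne_zero.mp hk)
  · exact hsum.const_mul _

lemma pair_integral {Ω : Type*} [MeasureSpace Ω] [IsProbabilityMeasure (ℙ : Measure Ω)]
    (τ σ S H : ℝ) (n : ℕ)
    (pstar X : ℕ → Ω → ℝ)
    (hpm : ∀ i, Measurable (pstar i))
    (hpL2 : ∀ i, i < n → MemLp (pstar i) 2 ℙ)
    (hpcent : ∀ i, i < n → ∫ ω, pstar i ω ∂ℙ = 0)
    (hpincr : ∀ i j, i ≤ j → j < n →
      ∫ ω, (pstar j ω - pstar i ω) ^ 2 ∂ℙ = σ ^ 2 * (((j : ℝ) - (i : ℝ)) * τ) ^ (2 * H))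
    (hXm : ∀ i, Measurable (X i))
    (hXval : ∀ i, i < n → ∀ ω, X i ω = 1 ∨ X i ω = -1)
    (hXlaw : ∀ i, i < n → ℙ {ω | X i ω = 1} = 1 / 2)
    (hXindep : iIndepFun
      (fun i : Fin n => X (i : ℕ)) ℙ)
    (hindep : IndepFun (fun ω => (fun i : Fin n => pstar (i : ℕ) ω))
      (fun ω => (fun i : Fin n => X (i : ℕ) ω)) ℙ)
    (i j : ℕ) (hij : i < j) (hjn : j < n) :
    (∫ ω, ((pstar j ω + S / 2 * X j ω) - (pstar i ω + S / 2 * X i ω)) ^ 2 ∂ℙ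
        = σ ^ 2 * (((j : ℝ) - (i : ℝ)) * τ) ^ (2 * H) + S ^ 2 / 2)
      ∧ Integrable
          (fun ω => ((pstar j ω + S / 2 * X j ω) - (pstar i ω + S / 2 * X i ω)) ^ 2) ℙ := by
  have hin : i < n := hij.trans hjn
  -- X k is in L²
  have hXL2 : ∀ k, k < n → MemLp (X k) 2 ℙ := by
    intro k hk
    refine (memLp_top_of_bound (hXm k).aestronglyMeasurable 1
      (Filter.Eventually.of_forall fun ω => ?_)).mono_exponent le_top
    rcases hXval k hk ω with h | h <;> simp [h]
  -- E[X k] = 0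
  have hXint0 : ∀ k, k < n → ∫ ω, X k ω ∂ℙ = 0 := by
    intro k hk
    have hA : MeasurableSet {ω | X k ω = 1} := (hXm k) (measurableSet_singleton 1)
    have heq : (fun ω => X k ω)
        = fun ω => 2 * Set.indicator {ω | X k ω = 1} (fun _ => (1 : ℝ)) ω - 1 := by
      funext ω
      rcases hXval k hk ω with h | h <;>
        simp [h, Set.indicator_apply, Set.mem_setOf_eq] <;> norm_num
    have hIndInt : Integrable
        (fun ω => 2 * Set.indicator {ω | X k ω = 1} (fun _ => (1 : ℝ)) ω) ℙ :=
      (((integrable_indicator_iff hA).mpr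
        ((integrableOn_const_iff (C := (1 : ℝ)) (by simp)).mpr (Or.inr (measure_lt_top _ _))))).const_mul 2
    rw [heq, integral_sub hIndInt (integrable_const 1), integral_const_mul,
      integral_indicator hA]
    have : (ℙ {ω | X k ω = 1}).toReal = 1 / 2 := by
      rw [hXlaw k hk]
      simp [ENNReal.toReal_div]
    simp [Measure.real, this]
  have hXsq : ∀ k, k < n → ∀ ω, X k ω ^ 2 = 1 := by
    intro k hk ω; rcases hXval k hk ω with h | h <;> simp [h]
  set D : Ω → ℝ := fun ω => pstar j ω - pstar i ω with hD
  set Y : Ω → ℝ := fun ω => X j ω - X i ω with hY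
  have hDL2 : MemLp D 2 ℙ := (hpL2 j hjn).sub (hpL2 i hin)
  have hYL2 : MemLp Y 2 ℙ := (hXL2 j hjn).sub (hXL2 i hin)
  -- independence of D and Y
  have hmeasf : Measurable (fun v : Fin n → ℝ => v ⟨j, hjn⟩ - v ⟨i, hin⟩) :=
    (measurable_pi_apply _).sub (measurable_pi_apply _)
  have indepDY : IndepFun D Y ℙ := hindep.comp hmeasf hmeasf
  -- E[D] = 0
  have hDint : Integrable D ℙ := hDL2.integrable one_le_two
  have hDmean : ∫ ω, D ω ∂ℙ = 0 := by
    have : ∫ ω, D ω ∂ℙ = (∫ ω, pstar j ω ∂ℙ) - ∫ ω, pstar i ω ∂ℙ :=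
      integral_sub ((hpL2 j hjn).integrable one_le_two) ((hpL2 i hin).integrable one_le_two)
    rw [this, hpcent j hjn, hpcent i hin, sub_zero]
  -- E[D Y] = 0
  have hDY0 : ∫ ω, D ω * Y ω ∂ℙ = 0 := by
    have h := indepDY.integral_mul_eq_mul_integral hDL2.aestronglyMeasurable hYL2.aestronglyMeasurable
    calc ∫ ω, D ω * Y ω ∂ℙ = ∫ ω, (D * Y) ω ∂ℙ := rfl
      _ = (∫ ω, D ω ∂ℙ) * ∫ ω, Y ω ∂ℙ := h
      _ = 0 := by rw [hDmean, zero_mul]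
  -- E[X i X j] = 0
  have hij' : (⟨i, hin⟩ : Fin n) ≠ ⟨j, hjn⟩ := by
    simp only [ne_eq, Fin.mk.injEq]; omega
  have indepXX : IndepFun (X i) (X j) ℙ := hXindep.indepFun hij'
  have hXiXj : ∫ ω, X i ω * X j ω ∂ℙ = 0 := by
    have h := indepXX.integral_mul_eq_mul_integral (hXL2 i hin).aestronglyMeasurable
      (hXL2 j hjn).aestronglyMeasurable
    calc ∫ ω, X i ω * X j ω ∂ℙ = ∫ ω, (X i * X j) ω ∂ℙ := rfl
      _ = (∫ ω, X i ω ∂ℙ) * ∫ ω, X j ω ∂ℙ := h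
      _ = 0 := by rw [hXint0 i hin, zero_mul]
  -- E[Y²] = 2
  have hXXint : Integrable (fun ω => X i ω * X j ω) ℙ :=
    memLp_two_mul_integrable (hXL2 i hin) (hXL2 j hjn)
  have hY2 : ∫ ω, Y ω ^ 2 ∂ℙ = 2 := by
    have heq : (fun ω => Y ω ^ 2) = fun ω => 2 - 2 * (X i ω * X j ω) := by
      funext ω
      have h1 := hXsq i hin ω
      have h2 := hXsq j hjn ω
      simp only [hY]
      linear_combination h1 + h2
    rw [heq, integral_sub (integrable_const 2) (hXXint.const_mul 2),
      integral_const_mul, hXiXj, integral_const]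
    simp
  -- assemble
  have hDYint : Integrable (fun ω => S * (D ω * Y ω)) ℙ :=
    (memLp_two_mul_integrable hDL2 hYL2).const_mul S
  have hD2int : Integrable (fun ω => D ω ^ 2) ℙ := hDL2.integrable_sq
  have hY2int : Integrable (fun ω => S ^ 2 / 4 * Y ω ^ 2) ℙ :=
    hYL2.integrable_sq.const_mul _
  have hexp : (fun ω => ((pstar j ω + S / 2 * X j ω) - (pstar i ω + S / 2 * X i ω)) ^ 2)
      = fun ω => D ω ^ 2 + S * (D ω * Y ω) + S ^ 2 / 4 * Y ω ^ 2 := by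
    funext ω; simp only [hD, hY]; ring
  constructor
  · have e1 : ∫ ω, (D ω ^ 2 + S * (D ω * Y ω) + S ^ 2 / 4 * Y ω ^ 2) ∂ℙ
        = (∫ ω, (D ω ^ 2 + S * (D ω * Y ω)) ∂ℙ) + ∫ ω, S ^ 2 / 4 * Y ω ^ 2 ∂ℙ :=
      integral_add (hD2int.add hDYint) hY2int
    have e2 : ∫ ω, (D ω ^ 2 + S * (D ω * Y ω)) ∂ℙ
        = (∫ ω, D ω ^ 2 ∂ℙ) + ∫ ω, S * (D ω * Y ω) ∂ℙ := integral_add hD2int hDYint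
    have e3 : ∫ ω, S * (D ω * Y ω) ∂ℙ = S * ∫ ω, D ω * Y ω ∂ℙ := integral_const_mul _ _
    have e4 : ∫ ω, S ^ 2 / 4 * Y ω ^ 2 ∂ℙ = S ^ 2 / 4 * ∫ ω, Y ω ^ 2 ∂ℙ :=
      integral_const_mul _ _
    have e5 : ∫ ω, D ω ^ 2 ∂ℙ = σ ^ 2 * (((j : ℝ) - (i : ℝ)) * τ) ^ (2 * H) :=
      hpincr i j hij.le hjn
    rw [hexp, e1, e2, e3, e4, e5, hDY0, hY2]; ring
  · rw [hexp]; exact (hD2int.add hDYint).add hY2int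


/-- Under the market model with autocorrelated price increments (fractional Brownian mid-price
of Hurst exponent `H`), the standard spread estimator `Ŝ²_{1,v}(n,L,L')` is biased:
`E[Ŝ²_{1,v}] − S² = 2σ²τ^{2H}(L'·L^{2H} − L·L'^{2H})/(L'−L)`; for `(L,L') = (1,2)` the bias
equals `4σ²τ^{2H}(1 − 2^{2H−1})`, positive when `H < 1/2` and negative when `H > 1/2`. -/
theorem Shat_bias_fBm
    {Ω : Type*} [MeasureSpace Ω] [IsProbabilityMeasure (ℙ : Measure Ω)]
    (τ σ S H : ℝ) (hτ : 0 < τ) (hσ : 0 < σ) (hS : 0 ≤ S) (hH : H ∈ Set.Ioo (0 : ℝ) 1)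
    (n : ℕ) (hn : 2 ≤ n)
    (pstar X : ℕ → Ω → ℝ)
    (hpm : ∀ i, Measurable (pstar i))
    (hpL2 : ∀ i, i < n → MemLp (pstar i) 2 ℙ)
    (hpcent : ∀ i, i < n → ∫ ω, pstar i ω ∂ℙ = 0)
    (hpincr : ∀ i j, i ≤ j → j < n →
      ∫ ω, (pstar j ω - pstar i ω) ^ 2 ∂ℙ = σ ^ 2 * (((j : ℝ) - (i : ℝ)) * τ) ^ (2 * H))
    (hXm : ∀ i, Measurable (X i))
    (hXval : ∀ i, i < n → ∀ ω, X i ω = 1 ∨ X i ω = -1)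
    (hXlaw : ∀ i, i < n → ℙ {ω | X i ω = 1} = 1 / 2)
    (hXindep : iIndepFun
      (fun i : Fin n => X (i : ℕ)) ℙ)
    (hindep : IndepFun (fun ω => (fun i : Fin n => pstar (i : ℕ) ω))
      (fun ω => (fun i : Fin n => X (i : ℕ) ω)) ℙ)
    (L L' : ℕ) (hL : 1 ≤ L) (hL' : 1 ≤ L') (hne : L ≠ L')
    (hLn : L < n) (hL'n : L' < n) :
    ((∫ ω, Shat (Vhat1 (fun i ω => pstar i ω + S / 2 * X i ω)) n L L' ω ∂ℙ) - S ^ 2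
      = 2 * σ ^ 2 * τ ^ (2 * H) * ((L' : ℝ) * (L : ℝ) ^ (2 * H)
          - (L : ℝ) * (L' : ℝ) ^ (2 * H)) / ((L' : ℝ) - (L : ℝ))) ∧
    ((∫ ω, Shat (Vhat2 (fun i ω => pstar i ω + S / 2 * X i ω)) n L L' ω ∂ℙ) - S ^ 2
      = 2 * σ ^ 2 * τ ^ (2 * H) * ((L' : ℝ) * (L : ℝ) ^ (2 * H)
          - (L : ℝ) * (L' : ℝ) ^ (2 * H)) / ((L' : ℝ) - (L : ℝ))) ∧
    ((∫ ω, Shat (Vhat3 (fun i ω => pstar i ω + S / 2 * X i ω)) n L L' ω ∂ℙ) - S ^ 2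
      = 2 * σ ^ 2 * τ ^ (2 * H) * ((L' : ℝ) * (L : ℝ) ^ (2 * H)
          - (L : ℝ) * (L' : ℝ) ^ (2 * H)) / ((L' : ℝ) - (L : ℝ))) ∧
    (L = 1 → L' = 2 →
      2 * σ ^ 2 * τ ^ (2 * H) * ((L' : ℝ) * (L : ℝ) ^ (2 * H)
          - (L : ℝ) * (L' : ℝ) ^ (2 * H)) / ((L' : ℝ) - (L : ℝ))
        = 4 * σ ^ 2 * τ ^ (2 * H) * (1 - 2 ^ (2 * H - 1))) ∧
    (H < 1 / 2 → 0 < 4 * σ ^ 2 * τ ^ (2 * H) * (1 - 2 ^ (2 * H - 1))) ∧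
    (1 / 2 < H → 4 * σ ^ 2 * τ ^ (2 * H) * (1 - 2 ^ (2 * H - 1)) < 0) := by
  
  obtain ⟨hH0, hH1⟩ := hH
  set p : ℕ → Ω → ℝ := fun i ω => pstar i ω + S / 2 * X i ω with hp
  have key : ∀ i j : ℕ, i < j → j < n →
      (∫ ω, (p j ω - p i ω) ^ 2 ∂ℙ
          = σ ^ 2 * (((j : ℝ) - (i : ℝ)) * τ) ^ (2 * H) + S ^ 2 / 2)
        ∧ Integrable (fun ω => (p j ω - p i ω) ^ 2) ℙ := fun i j hij hjn =>
    pair_integral τ σ S H n pstar X hpm hpL2 hpcent hpincr hXm hXval hXlaw hXindep hindep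
      i j hij hjn
  -- common value of the V̂'s
  have Egen : ∀ (M : ℕ), 1 ≤ M → M < n → ∀ (k : ℕ) (a b : ℕ → ℕ), 1 ≤ k →
      (∀ i ∈ Finset.range k, b i + M = a i ∧ a i < n) →
      (∫ ω, (k : ℝ)⁻¹ * ∑ i ∈ Finset.range k, (p (a i) ω - p (b i) ω) ^ 2 ∂ℙ
          = σ ^ 2 * ((M : ℝ) * τ) ^ (2 * H) + S ^ 2 / 2)
        ∧ Integrable (fun ω => (k : ℝ)⁻¹ *
            ∑ i ∈ Finset.range k, (p (a i) ω - p (b i) ω) ^ 2) ℙ := by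
    intro M hM hMn k a b hk hspec
    refine Vhat_generic p k a b _ hk (fun i hi => ?_) (fun i hi => ?_)
    · obtain ⟨h1, h2⟩ := hspec i hi
      exact (key (b i) (a i) (by omega) h2).2
    · obtain ⟨h1, h2⟩ := hspec i hi
      have h := (key (b i) (a i) (by omega) h2).1
      rw [h]
      have : ((a i : ℝ) - (b i : ℝ)) = (M : ℝ) := by
        rw [← h1]; push_cast; ring
      rw [this]
  have EV1 : ∀ (M : ℕ), 1 ≤ M → M < n →
      (∫ ω, Vhat1 p n M ω ∂ℙ = σ ^ 2 * ((M : ℝ) * τ) ^ (2 * H) + S ^ 2 / 2)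
        ∧ Integrable (Vhat1 p n M) ℙ := by
    intro M hM hMn
    refine Egen M hM hMn (n - M) (fun i => i + M) (fun i => i) (by omega)
      (fun i hi => ?_)
    simp only [Finset.mem_range] at hi
    exact ⟨rfl, by show i + M < n; omega⟩
  have EV2 : ∀ (M : ℕ), 1 ≤ M → M < n →
      (∫ ω, Vhat2 p n M ω ∂ℙ = σ ^ 2 * ((M : ℝ) * τ) ^ (2 * H) + S ^ 2 / 2)
        ∧ Integrable (Vhat2 p n M) ℙ := by
    intro M hM hMn
    have hkpos : 1 ≤ (n - 1) / M := (Nat.one_le_div_iff (by omega)).mpr (by omega)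
    refine Egen M hM hMn ((n - 1) / M) (fun i => (i + 1) * M) (fun i => i * M) hkpos
      (fun i hi => ?_)
    simp only [Finset.mem_range] at hi
    have h1 : (i + 1) * M ≤ n - 1 := (Nat.le_div_iff_mul_le (by omega)).mp (by omega)
    constructor
    · show i * M + M = (i + 1) * M; ring
    · show (i + 1) * M < n; omega
  have EV3 : ∀ (M : ℕ), 1 ≤ M → M < n →
      (∫ ω, Vhat3 p n M ω ∂ℙ = σ ^ 2 * ((M : ℝ) * τ) ^ (2 * H) + S ^ 2 / 2)
        ∧ Integrable (Vhat3 p n M) ℙ := by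
    intro M hM hMn
    have hkpos : 1 ≤ n / (M + 1) := (Nat.one_le_div_iff (by omega)).mpr (by omega)
    refine Egen M hM hMn (n / (M + 1)) (fun i => i + (i + 1) * M) (fun i => i + i * M) hkpos
      (fun i hi => ?_)
    simp only [Finset.mem_range] at hi
    have h1 : (i + 1) * (M + 1) ≤ n := (Nat.le_div_iff_mul_le (by omega)).mp (by omega)
    have h2 : (i + 1) * (M + 1) = i + (i + 1) * M + 1 := by ring
    constructor
    · show i + i * M + M = i + (i + 1) * M; ring
    · show i + (i + 1) * M < n; omega
  -- integral of Shat for a generic V̂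
  have shat_int : ∀ (Vh : ℕ → ℕ → Ω → ℝ),
      Integrable (Vh n L) ℙ → Integrable (Vh n L') ℙ →
      ∫ ω, Shat Vh n L L' ω ∂ℙ = 2 / ((L' : ℝ) - (L : ℝ)) *
        ((L' : ℝ) * ∫ ω, Vh n L ω ∂ℙ - (L : ℝ) * ∫ ω, Vh n L' ω ∂ℙ) := by
    intro Vh h1 h2
    simp only [Shat]
    rw [integral_const_mul,
      integral_sub (h1.const_mul _) (h2.const_mul _), integral_const_mul, integral_const_mul]
  -- the final algebraic identity for the bias
  have hd : (L' : ℝ) - (L : ℝ) ≠ 0 := by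
    have : (L : ℝ) ≠ (L' : ℝ) := by exact_mod_cast hne
    intro h; apply this; linarith
  have halg : 2 / ((L' : ℝ) - (L : ℝ)) *
        ((L' : ℝ) * (σ ^ 2 * ((L : ℝ) * τ) ^ (2 * H) + S ^ 2 / 2)
          - (L : ℝ) * (σ ^ 2 * ((L' : ℝ) * τ) ^ (2 * H) + S ^ 2 / 2)) - S ^ 2
      = 2 * σ ^ 2 * τ ^ (2 * H) * ((L' : ℝ) * (L : ℝ) ^ (2 * H)
          - (L : ℝ) * (L' : ℝ) ^ (2 * H)) / ((L' : ℝ) - (L : ℝ)) := by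
    rw [Real.mul_rpow (Nat.cast_nonneg L) hτ.le, Real.mul_rpow (Nat.cast_nonneg L') hτ.le]
    field_simp
    ring
  obtain ⟨e1L, i1L⟩ := EV1 L hL hLn
  obtain ⟨e1L', i1L'⟩ := EV1 L' hL' hL'n
  obtain ⟨e2L, i2L⟩ := EV2 L hL hLn
  obtain ⟨e2L', i2L'⟩ := EV2 L' hL' hL'n
  obtain ⟨e3L, i3L⟩ := EV3 L hL hLn
  obtain ⟨e3L', i3L'⟩ := EV3 L' hL' hL'n
  refine ⟨?_, ?_, ?_, ?_, ?_, ?_⟩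
  · rw [shat_int _ i1L i1L', e1L, e1L']; exact halg
  · rw [shat_int _ i2L i2L', e2L, e2L']; exact halg
  · rw [shat_int _ i3L i3L', e3L, e3L']; exact halg
  · intro h1 h2
    subst h1; subst h2
    have h2r : (2 : ℝ) ^ (2 * H) = 2 ^ (2 * H - 1) * 2 := by
      have h := Real.rpow_add two_pos (2 * H - 1) 1
      rw [Real.rpow_one] at h
      rw [show (2 * H - 1) + 1 = 2 * H by ring] at h
      exact h
    push_cast
    rw [Real.one_rpow, h2r]
    ring
  · intro h
    have ht : (0 : ℝ) < 4 * σ ^ 2 * τ ^ (2 * H) := by positivity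
    have hlt : (2 : ℝ) ^ (2 * H - 1) < 1 :=
      Real.rpow_lt_one_of_one_lt_of_neg one_lt_two (by linarith)
    exact mul_pos ht (by linarith)
  · intro h
    have ht : (0 : ℝ) < 4 * σ ^ 2 * τ ^ (2 * H) := by positivity
    have hgt : (1 : ℝ) < 2 ^ (2 * H - 1) :=
      Real.one_lt_rpow_iff_of_pos two_pos |>.mpr (Or.inl ⟨one_lt_two, by linarith⟩)
    exact mul_neg_of_pos_of_neg ht (by linarith)
end
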